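/- arXiv:1812.02786 — 9 statements merged into one kernel-verified Lean document; each statement's English description precedes it below -/
import Mathlib

section
/- Let p ∈ [1, ∞). If f ∈ L^1(R^d, C), g ∈ L^p(R^d, C), and w: R^d × R^d → C is measurable and bounded, then the weighted cross-correlation f ⋆_w g lies in L^p(R^d, C) and ‖f ⋆_w g‖_{L^p} ≤ ‖w‖_∞ ‖f‖_{L^1} ‖g‖_{L^p}. -/
open MeasureTheory Complex
open scoped ENNReal

/-- Weighted cross-correlation `(f ⋆_w g)(x) = ∫ f*(y) g(x+y) w(x+y, y) dy`. -/
noncomputable def wcc {d : ℕ} (f g : EuclideanSpace ℝ (Fin d) → ℂ)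
    (w : EuclideanSpace ℝ (Fin d) → EuclideanSpace ℝ (Fin d) → ℂ)
    (x : EuclideanSpace ℝ (Fin d)) : ℂ :=
  ∫ y, (starRingEnd ℂ) (f y) * g (x + y) * w (x + y) y

theorem stmt1 {d : ℕ} (p : ℝ≥0∞) (hp1 : 1 ≤ p) (hp2 : p ≠ ⊤)
    (f g : EuclideanSpace ℝ (Fin d) → ℂ)
    (hf : MemLp f 1 (volume : Measure (EuclideanSpace ℝ (Fin d))))
    (hg : MemLp g p (volume : Measure (EuclideanSpace ℝ (Fin d))))
    (w : EuclideanSpace ℝ (Fin d) → EuclideanSpace ℝ (Fin d) → ℂ)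
    (hw : Measurable (fun q : EuclideanSpace ℝ (Fin d) × EuclideanSpace ℝ (Fin d) => w q.1 q.2))
    (C : ℝ) (hC : ∀ x y, ‖w x y‖ ≤ C) :
    MemLp (wcc f g w) p (volume : Measure (EuclideanSpace ℝ (Fin d))) ∧
    eLpNorm (wcc f g w) p volume ≤
      ENNReal.ofReal C * eLpNorm f 1 volume * eLpNorm g p volume := by
  have hp0 : p ≠ 0 := by positivity
  set pr : ℝ := p.toReal with hprdef
  have hpr1 : 1 ≤ pr := by
    rw [hprdef, ← ENNReal.toReal_one]
    exact ENNReal.toReal_mono hp2 hp1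
  have hpr0 : 0 < pr := lt_of_lt_of_le one_pos hpr1
  have hprne : pr ≠ 0 := hpr0.ne'
  -- quasi measure preserving addition
  have qmp_add : MeasureTheory.Measure.QuasiMeasurePreserving
      (fun q : EuclideanSpace ℝ (Fin d) × EuclideanSpace ℝ (Fin d) => q.1 + q.2)
      (volume.prod volume) volume := by
    have := (MeasureTheory.Measure.quasiMeasurePreserving_snd
        (μ := (volume : Measure (EuclideanSpace ℝ (Fin d)))) (ν := volume)).comp
      (measurePreserving_prod_add_swap volume volume).quasiMeasurePreserving
    simpa [Function.comp_def, add_comm] using this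
  have qmp_snd : MeasureTheory.Measure.QuasiMeasurePreserving
      (Prod.snd : EuclideanSpace ℝ (Fin d) × EuclideanSpace ℝ (Fin d) → EuclideanSpace ℝ (Fin d))
      (volume.prod volume) volume :=
    MeasureTheory.Measure.quasiMeasurePreserving_snd
  -- measurability of the integrand on the product
  have hf2 : AEStronglyMeasurable
      (fun q : EuclideanSpace ℝ (Fin d) × EuclideanSpace ℝ (Fin d) => (starRingEnd ℂ) (f q.2))
      (volume.prod volume) := by
    have := (RCLike.continuous_conj (K := ℂ)).comp_aestronglyMeasurable
      (hf.1.comp_quasiMeasurePreserving qmp_snd)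
    simpa [Function.comp] using this
  have hg2 : AEStronglyMeasurable
      (fun q : EuclideanSpace ℝ (Fin d) × EuclideanSpace ℝ (Fin d) => g (q.1 + q.2))
      (volume.prod volume) := by
    have := hg.1.comp_quasiMeasurePreserving qmp_add
    simpa [Function.comp_def] using this
  have hw2 : AEStronglyMeasurable
      (fun q : EuclideanSpace ℝ (Fin d) × EuclideanSpace ℝ (Fin d) => w (q.1 + q.2) q.2)
      (volume.prod volume) := by
    have := (hw.comp ((measurable_fst.add measurable_snd).prodMk
      (measurable_snd : Measurable
        (Prod.snd : EuclideanSpace ℝ (Fin d) × EuclideanSpace ℝ (Fin d) → _)))).aestronglyMeasurable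
      (μ := volume.prod volume)
    simpa [Function.comp_def] using this
  have hF : AEStronglyMeasurable
      (fun q : EuclideanSpace ℝ (Fin d) × EuclideanSpace ℝ (Fin d) =>
        (starRingEnd ℂ) (f q.2) * g (q.1 + q.2) * w (q.1 + q.2) q.2)
      (volume.prod volume) := (hf2.mul hg2).mul hw2
  have hmeas : AEStronglyMeasurable (wcc f g w)
      (volume : Measure (EuclideanSpace ℝ (Fin d))) := hF.integral_prod_right'
  -- notation
  have ha : AEMeasurable (fun y => (‖f y‖₊ : ℝ≥0∞))
      (volume : Measure (EuclideanSpace ℝ (Fin d))) := hf.1.enorm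
  have hb : AEMeasurable (fun y => (‖g y‖₊ : ℝ≥0∞))
      (volume : Measure (EuclideanSpace ℝ (Fin d))) := hg.1.enorm
  set A : ℝ≥0∞ := ∫⁻ y, (‖f y‖₊ : ℝ≥0∞) with hA_def
  set B : ℝ≥0∞ := ∫⁻ y, (‖g y‖₊ : ℝ≥0∞) ^ pr with hB_def
  have hAf : A = eLpNorm f 1 volume := (eLpNorm_one_eq_lintegral_enorm (f := f)).symm
  have hBg : eLpNorm g p volume = B ^ (1 / pr) := by
    exact eLpNorm_eq_lintegral_rpow_enorm_toReal hp0 hp2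
  have hAtop : A ≠ ∞ := by rw [hAf]; exact hf.2.ne
  set H : EuclideanSpace ℝ (Fin d) → ℝ≥0∞ :=
    fun x => ∫⁻ y, (‖f y‖₊ : ℝ≥0∞) * (‖g (x + y)‖₊ : ℝ≥0∞) with hH_def
  have hCw : ∀ x y : EuclideanSpace ℝ (Fin d), (‖w x y‖₊ : ℝ≥0∞) ≤ ENNReal.ofReal C :=
    fun x y => by
      rw [← enorm_eq_nnnorm, ← ofReal_norm]
      exact ENNReal.ofReal_le_ofReal (hC x y)
  -- pointwise bound
  have key : ∀ x : EuclideanSpace ℝ (Fin d),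
      (‖wcc f g w x‖₊ : ℝ≥0∞) ≤ ENNReal.ofReal C * H x := by
    intro x
    calc (‖wcc f g w x‖₊ : ℝ≥0∞)
        ≤ ∫⁻ y, ‖(starRingEnd ℂ) (f y) * g (x + y) * w (x + y) y‖₊ :=
          enorm_integral_le_lintegral_enorm _
      _ ≤ ∫⁻ y, ((‖f y‖₊ : ℝ≥0∞) * (‖g (x + y)‖₊ : ℝ≥0∞)) * ENNReal.ofReal C := by
          refine lintegral_mono fun y => ?_
          calc ((‖(starRingEnd ℂ) (f y) * g (x + y) * w (x + y) y‖₊ : ℝ≥0∞))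
              = (‖f y‖₊ : ℝ≥0∞) * (‖g (x + y)‖₊ : ℝ≥0∞) * (‖w (x + y) y‖₊ : ℝ≥0∞) := by
                simp [nnnorm_mul, ENNReal.coe_mul]
            _ ≤ _ := mul_le_mul_right (hCw _ _) _
      _ = ENNReal.ofReal C * H x := by
          rw [lintegral_mul_const' _ _ ENNReal.ofReal_ne_top, mul_comm]
  -- AEMeasurable of translated b
  have hbx : ∀ x : EuclideanSpace ℝ (Fin d),
      AEMeasurable (fun y => (‖g (x + y)‖₊ : ℝ≥0∞)) (volume : Measure (EuclideanSpace ℝ (Fin d))) :=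
    fun x =>
      hb.comp_quasiMeasurePreserving (measurePreserving_add_left volume x).quasiMeasurePreserving
  -- Hölder step
  have holder : ∀ x : EuclideanSpace ℝ (Fin d),
      H x ≤ A ^ (1 - 1 / pr) *
        (∫⁻ y, (‖f y‖₊ : ℝ≥0∞) * (‖g (x + y)‖₊ : ℝ≥0∞) ^ pr) ^ (1 / pr) := by
    intro x
    rcases eq_or_lt_of_le hpr1 with h1 | h1
    · simp [hH_def, ← h1]
    · set q : ℝ := pr / (pr - 1) with hq_def
      have hconj : pr.HolderConjugate q := Real.HolderConjugate.conjExponent h1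
      have hconj' : q.HolderConjugate pr := hconj.symm
      have hsum : 1 / q + 1 / pr = 1 := by
        have := hconj.inv_add_inv_eq_one
        simp only [one_div]; linarith
      have hq0 : 0 < q := hconj'.pos
      have hholder := ENNReal.lintegral_mul_le_Lp_mul_Lq
        (volume : Measure (EuclideanSpace ℝ (Fin d))) hconj'
        (f := fun y => (‖f y‖₊ : ℝ≥0∞) ^ (1 / q))
        (g := fun y => (‖f y‖₊ : ℝ≥0∞) ^ (1 / pr) * (‖g (x + y)‖₊ : ℝ≥0∞))
        (ha.pow_const _) ((ha.pow_const _).mul (hbx x))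
      have heq : ∀ y : EuclideanSpace ℝ (Fin d),
          (‖f y‖₊ : ℝ≥0∞) ^ (1 / q) * ((‖f y‖₊ : ℝ≥0∞) ^ (1 / pr) * (‖g (x + y)‖₊ : ℝ≥0∞))
            = (‖f y‖₊ : ℝ≥0∞) * (‖g (x + y)‖₊ : ℝ≥0∞) := by
        intro y
        rw [← mul_assoc, ← ENNReal.rpow_add_of_nonneg _ _ (by positivity) (by positivity),
          hsum, ENNReal.rpow_one]
      calc H x = ∫⁻ y, (‖f y‖₊ : ℝ≥0∞) ^ (1 / q) *
              ((‖f y‖₊ : ℝ≥0∞) ^ (1 / pr) * (‖g (x + y)‖₊ : ℝ≥0∞)) := by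
            simp only [hH_def]; exact (lintegral_congr fun y => (heq y)).symm
        _ ≤ (∫⁻ y, ((‖f y‖₊ : ℝ≥0∞) ^ (1 / q)) ^ q) ^ (1 / q) *
            (∫⁻ y, ((‖f y‖₊ : ℝ≥0∞) ^ (1 / pr) * (‖g (x + y)‖₊ : ℝ≥0∞)) ^ pr) ^ (1 / pr) :=
            hholder
        _ = A ^ (1 - 1 / pr) *
            (∫⁻ y, (‖f y‖₊ : ℝ≥0∞) * (‖g (x + y)‖₊ : ℝ≥0∞) ^ pr) ^ (1 / pr) := by
            have e1 : (∫⁻ y, ((‖f y‖₊ : ℝ≥0∞) ^ (1 / q)) ^ q) = A := by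
              rw [hA_def]
              refine lintegral_congr fun y => ?_
              rw [← ENNReal.rpow_mul, one_div_mul_cancel hq0.ne', ENNReal.rpow_one]
            have e2 : (1 : ℝ) / q = 1 - 1 / pr := by
              have := hsum; linarith
            have e3 : (∫⁻ y, ((‖f y‖₊ : ℝ≥0∞) ^ (1 / pr) * (‖g (x + y)‖₊ : ℝ≥0∞)) ^ pr)
                = ∫⁻ y, (‖f y‖₊ : ℝ≥0∞) * (‖g (x + y)‖₊ : ℝ≥0∞) ^ pr := by
              refine lintegral_congr fun y => ?_
              rw [ENNReal.mul_rpow_of_nonneg _ _ hpr0.le, ← ENNReal.rpow_mul,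
                one_div_mul_cancel hprne, ENNReal.rpow_one]
            rw [e1, ← e2, e3]
  -- measurability on product for Fubini
  have hprod : AEMeasurable
      (fun z : EuclideanSpace ℝ (Fin d) × EuclideanSpace ℝ (Fin d) =>
        (‖f z.2‖₊ : ℝ≥0∞) * (‖g (z.1 + z.2)‖₊ : ℝ≥0∞) ^ pr) (volume.prod volume) :=
    (ha.comp_quasiMeasurePreserving qmp_snd).mul
      ((hb.comp_quasiMeasurePreserving qmp_add).pow_const pr)
  have hBtop : B ≠ ∞ := by
    intro hBinf
    have : eLpNorm g p volume = ∞ := by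
      rw [hBg, hBinf, ENNReal.top_rpow_of_pos (by positivity)]
    exact hg.2.ne this
  -- Fubini computation
  have swap : (∫⁻ x, ∫⁻ y, (‖f y‖₊ : ℝ≥0∞) * (‖g (x + y)‖₊ : ℝ≥0∞) ^ pr) = A * B := by
    rw [lintegral_lintegral_swap hprod]
    calc (∫⁻ y, ∫⁻ x, (‖f y‖₊ : ℝ≥0∞) * (‖g (x + y)‖₊ : ℝ≥0∞) ^ pr)
        = ∫⁻ y, (‖f y‖₊ : ℝ≥0∞) * B := by
          refine lintegral_congr fun y => ?_
          rw [lintegral_const_mul' _ _ ENNReal.coe_ne_top]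
          congr 1
          exact lintegral_add_right_eq_self (fun z => (‖g z‖₊ : ℝ≥0∞) ^ pr) y
      _ = A * B := lintegral_mul_const' _ _ hBtop
  -- integrate the Hölder bound
  have step : (∫⁻ x, H x ^ pr) ≤ A ^ (pr - 1) * (A * B) := by
    have hAexp : A ^ ((1 : ℝ) - 1 / pr) ≠ ∞ :=
      ENNReal.rpow_ne_top_of_nonneg (by
        have : 1 / pr ≤ 1 := by
          rw [div_le_one hpr0]; exact hpr1
        linarith) hAtop
    calc (∫⁻ x, H x ^ pr)
        ≤ ∫⁻ x, (A ^ ((1 : ℝ) - 1 / pr)) ^ pr *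
            (∫⁻ y, (‖f y‖₊ : ℝ≥0∞) * (‖g (x + y)‖₊ : ℝ≥0∞) ^ pr) := by
          refine lintegral_mono fun x => ?_
          calc H x ^ pr
              ≤ (A ^ ((1 : ℝ) - 1 / pr) *
                  (∫⁻ y, (‖f y‖₊ : ℝ≥0∞) * (‖g (x + y)‖₊ : ℝ≥0∞) ^ pr) ^ (1 / pr)) ^ pr :=
                ENNReal.rpow_le_rpow (holder x) hpr0.le
            _ = _ := by
                rw [ENNReal.mul_rpow_of_nonneg _ _ hpr0.le,
                  ← ENNReal.rpow_mul (∫⁻ y, (‖f y‖₊ : ℝ≥0∞) * (‖g (x + y)‖₊ : ℝ≥0∞) ^ pr),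
                  one_div_mul_cancel hprne, ENNReal.rpow_one]
      _ = (A ^ ((1 : ℝ) - 1 / pr)) ^ pr *
            ∫⁻ x, ∫⁻ y, (‖f y‖₊ : ℝ≥0∞) * (‖g (x + y)‖₊ : ℝ≥0∞) ^ pr :=
          lintegral_const_mul' _ _ (by
            exact ENNReal.rpow_ne_top_of_nonneg hpr0.le hAexp)
      _ = A ^ (pr - 1) * (A * B) := by
        rw [swap, ← ENNReal.rpow_mul]
        congr 2
        field_simp
  -- the eLpNorm bound
  have bound : eLpNorm (wcc f g w) p volume ≤
      ENNReal.ofReal C * eLpNorm f 1 volume * eLpNorm g p volume := by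
    have hCne : (ENNReal.ofReal C) ^ pr ≠ ∞ :=
      ENNReal.rpow_ne_top_of_nonneg hpr0.le ENNReal.ofReal_ne_top
    calc eLpNorm (wcc f g w) p volume
        = (∫⁻ x, (‖wcc f g w x‖₊ : ℝ≥0∞) ^ pr) ^ (1 / pr) := by
          exact eLpNorm_eq_lintegral_rpow_enorm_toReal hp0 hp2
      _ ≤ (∫⁻ x, (ENNReal.ofReal C * H x) ^ pr) ^ (1 / pr) := by
          refine ENNReal.rpow_le_rpow (lintegral_mono fun x => ?_) (by positivity)
          exact ENNReal.rpow_le_rpow (key x) hpr0.le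
      _ = ENNReal.ofReal C * (∫⁻ x, H x ^ pr) ^ (1 / pr) := by
          have : ∀ x : EuclideanSpace ℝ (Fin d), (ENNReal.ofReal C * H x) ^ pr
              = (ENNReal.ofReal C) ^ pr * H x ^ pr := fun x =>
            ENNReal.mul_rpow_of_nonneg _ _ hpr0.le
          rw [lintegral_congr this, lintegral_const_mul' _ _ hCne,
            ENNReal.mul_rpow_of_nonneg _ _ (by positivity), ← ENNReal.rpow_mul,
            mul_one_div_cancel hprne, ENNReal.rpow_one]
      _ ≤ ENNReal.ofReal C * (A ^ (pr - 1) * (A * B)) ^ (1 / pr) :=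
          mul_le_mul_right (ENNReal.rpow_le_rpow step (by positivity)) _
      _ = ENNReal.ofReal C * (A * B ^ (1 / pr)) := by
          congr 1
          have : A ^ (pr - 1) * (A * B) = A ^ pr * B := by
            rw [← mul_assoc]
            congr 1
            have h := (ENNReal.rpow_add_of_nonneg (x := A) (pr - 1) 1
              (by linarith) zero_le_one).symm
            simpa [ENNReal.rpow_one, sub_add_cancel] using h
          rw [this, ENNReal.mul_rpow_of_nonneg _ _ (by positivity), ← ENNReal.rpow_mul,
            mul_one_div_cancel hprne, ENNReal.rpow_one]
      _ = ENNReal.ofReal C * eLpNorm f 1 volume * eLpNorm g p volume := by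
          rw [hBg, ← hAf, mul_assoc]
  refine ⟨⟨hmeas, lt_of_le_of_lt bound ?_⟩, bound⟩
  exact ENNReal.mul_lt_top
    (ENNReal.mul_lt_top ENNReal.ofReal_lt_top hf.2) hg.2
end

section
/- Let p ∈ [1, ∞), U ⊆ R^d a bounded measurable set, and w: U × U → C measurable and bounded (extended by zero outside U × U). Then for all f, g ∈ L^p(R^d, C), the weighted cross-correlation f ⋆_w g lies in L^p(R^d, C). -/
open MeasureTheory Complex
open scoped ENNReal

theorem young_aux {d : ℕ} (q : ℝ) (hq1 : 1 ≤ q) (φ γ : EuclideanSpace ℝ (Fin d) → ℝ≥0∞)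
    (hφ : Measurable φ) (hγ : Measurable γ) (hAt : (∫⁻ y, φ y) ≠ ⊤) :
    ∫⁻ x, (∫⁻ y, φ y * γ (x + y)) ^ q ≤
      (∫⁻ y, φ y) ^ (q - 1) * ((∫⁻ y, φ y) * ∫⁻ z, γ z ^ q) := by
  set A := ∫⁻ y, φ y with hA
  set B := ∫⁻ z, γ z ^ q with hB
  have hq0 : 0 < q := lt_of_lt_of_le one_pos hq1
  have hswap : ∫⁻ x, ∫⁻ y, φ y * γ (x + y) ^ q = A * B := by
    rw [lintegral_lintegral_swap]
    · have h1 : ∀ y, ∫⁻ x, φ y * γ (x + y) ^ q = φ y * B := by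
        intro y
        rw [lintegral_const_mul _ (show Measurable fun x => γ (x + y) ^ q from (hγ.comp (measurable_add_const y)).pow_const q)]
        congr 1
        exact lintegral_add_right_eq_self (fun z => γ z ^ q) y
      simp_rw [h1]
      rw [lintegral_mul_const _ hφ]
    · exact ((hφ.comp measurable_snd).mul
        ((hγ.comp (measurable_fst.add measurable_snd)).pow_const q)).aemeasurable
  rcases eq_or_lt_of_le hq1 with hq | hq
  · simp only [← hq, ENNReal.rpow_one, sub_self, ENNReal.rpow_zero, one_mul]
    simp only [← hq, ENNReal.rpow_one] at hswap
    exact le_of_eq hswap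
  · -- q > 1
    set r := q / (q - 1) with hr
    have hrq : r.HolderConjugate q := (Real.HolderConjugate.conjExponent hq).symm
    have hsum : 1 / r + 1 / q = 1 := by
      rw [one_div, one_div]; exact hrq.inv_add_inv_eq_one
    have key : ∀ x, (∫⁻ y, φ y * γ (x + y)) ≤
        A ^ (1 / r) * (∫⁻ y, φ y * γ (x + y) ^ q) ^ (1 / q) := by
      intro x
      have hfac : (fun y => φ y * γ (x + y)) =
          (fun y => φ y ^ (1/r)) * (fun y => φ y ^ (1/q) * γ (x + y)) := by
        funext y
        simp only [Pi.mul_apply]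
        rw [← mul_assoc, ← ENNReal.rpow_add_of_nonneg _ _ hrq.one_div_nonneg
          hrq.symm.one_div_nonneg, hsum, ENNReal.rpow_one]
      calc (∫⁻ y, φ y * γ (x + y))
          = ∫⁻ y, ((fun y => φ y ^ (1/r)) * (fun y => φ y ^ (1/q) * γ (x + y))) y := by
            rw [← hfac]
        _ ≤ (∫⁻ y, (φ y ^ (1/r)) ^ r) ^ (1/r) *
            (∫⁻ y, (φ y ^ (1/q) * γ (x + y)) ^ q) ^ (1/q) :=
            ENNReal.lintegral_mul_le_Lp_mul_Lq _ hrq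
              (hφ.pow_const _).aemeasurable
              ((hφ.pow_const _).mul (show Measurable fun y => γ (x + y) from hγ.comp (measurable_const_add x))).aemeasurable
        _ = A ^ (1/r) * (∫⁻ y, φ y * γ (x + y) ^ q) ^ (1/q) := by
            congr 2
            · apply lintegral_congr; intro y
              rw [← ENNReal.rpow_mul, one_div, inv_mul_cancel₀ hrq.ne_zero, ENNReal.rpow_one]
            · apply lintegral_congr; intro y
              rw [ENNReal.mul_rpow_of_nonneg _ _ hq0.le, ← ENNReal.rpow_mul, one_div,
                inv_mul_cancel₀ hrq.symm.ne_zero, ENNReal.rpow_one]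
    calc ∫⁻ x, (∫⁻ y, φ y * γ (x + y)) ^ q
        ≤ ∫⁻ x, (A ^ (1/r) * (∫⁻ y, φ y * γ (x + y) ^ q) ^ (1/q)) ^ q :=
          lintegral_mono fun x => ENNReal.rpow_le_rpow (key x) hq0.le
      _ = ∫⁻ x, A ^ (q - 1) * (∫⁻ y, φ y * γ (x + y) ^ q) := by
          apply lintegral_congr; intro x
          rw [ENNReal.mul_rpow_of_nonneg _ _ hq0.le, ← ENNReal.rpow_mul, ← ENNReal.rpow_mul]
          congr 2
          · rw [hr]; field_simp
          · rw [one_div, inv_mul_cancel₀ hq0.ne', ENNReal.rpow_one]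
      _ = A ^ (q - 1) * ∫⁻ x, ∫⁻ y, φ y * γ (x + y) ^ q := by
          rw [lintegral_const_mul' _ _ (ENNReal.rpow_ne_top_of_nonneg (by linarith) hAt)]
      _ = A ^ (q - 1) * (A * B) := by rw [hswap]

theorem stmt2 {d : ℕ} (p : ℝ≥0∞) (hp1 : 1 ≤ p) (hp2 : p ≠ ⊤)
    (U : Set (EuclideanSpace ℝ (Fin d))) (hUb : Bornology.IsBounded U)
    (hUm : MeasurableSet U)
    (w : EuclideanSpace ℝ (Fin d) → EuclideanSpace ℝ (Fin d) → ℂ)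
    (hw : Measurable (fun q : EuclideanSpace ℝ (Fin d) × EuclideanSpace ℝ (Fin d) => w q.1 q.2))
    (C : ℝ) (hC : ∀ x y, ‖w x y‖ ≤ C)
    (hwU : ∀ x y, x ∉ U ∨ y ∉ U → w x y = 0)
    (f g : EuclideanSpace ℝ (Fin d) → ℂ)
    (hf : MemLp f p (volume : Measure (EuclideanSpace ℝ (Fin d))))
    (hg : MemLp g p (volume : Measure (EuclideanSpace ℝ (Fin d)))) :
    MemLp (wcc f g w) p (volume : Measure (EuclideanSpace ℝ (Fin d))) := by
  have hp0 : p ≠ 0 := (zero_lt_one.trans_le hp1).ne'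
  set q := p.toReal with hqdef
  have hq1 : 1 ≤ q := by
    rw [← ENNReal.toReal_one]
    exact ENNReal.toReal_mono hp2 hp1
  have hq0 : 0 < q := lt_of_lt_of_le one_pos hq1
  obtain ⟨f', hf'm, hff'⟩ := hf.1
  obtain ⟨g', hg'm, hgg'⟩ := hg.1
  have hf'meas : Measurable f' := hf'm.measurable
  have hg'meas : Measurable g' := hg'm.measurable
  have hf'p : MemLp f' p := ⟨hf'm.aestronglyMeasurable,
    by rw [← eLpNorm_congr_ae hff']; exact hf.2⟩
  have hg'p : MemLp g' p := ⟨hg'm.aestronglyMeasurable,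
    by rw [← eLpNorm_congr_ae hgg']; exact hg.2⟩
  have hwcc : wcc f g w = wcc f' g' w := by
    funext x
    apply integral_congr_ae
    have h2 : (fun y => g (x + y)) =ᵐ[volume] (fun y => g' (x + y)) :=
      (measurePreserving_add_left volume x).quasiMeasurePreserving.ae_eq_comp hgg'
    filter_upwards [hff', h2] with y h1 h2'
    rw [h1, h2']
  rw [hwcc]
  -- measurability
  have hsm : StronglyMeasurable (wcc f' g' w) := by
    have hK : StronglyMeasurable (fun z : EuclideanSpace ℝ (Fin d) × EuclideanSpace ℝ (Fin d) =>
        (starRingEnd ℂ) (f' z.2) * g' (z.1 + z.2) * w (z.1 + z.2) z.2) := by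
      apply Measurable.stronglyMeasurable
      refine Measurable.mul (Measurable.mul ?_ ?_) ?_
      · simp only [starRingEnd_apply]
        exact continuous_star.measurable.comp (hf'meas.comp measurable_snd)
      · exact hg'meas.comp (measurable_fst.add measurable_snd)
      · exact hw.comp ((measurable_fst.add measurable_snd).prodMk measurable_snd)
    exact hK.integral_prod_right'
  -- the dominating kernels
  set φ : EuclideanSpace ℝ (Fin d) → ℝ≥0∞ :=
    U.indicator (fun y => (‖f' y‖₊ : ℝ≥0∞)) with hφdef
  set γ : EuclideanSpace ℝ (Fin d) → ℝ≥0∞ :=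
    U.indicator (fun y => (‖g' y‖₊ : ℝ≥0∞)) with hγdef
  have hφm : Measurable φ := hf'meas.nnnorm.coe_nnreal_ennreal.indicator hUm
  have hγm : Measurable γ := hg'meas.nnnorm.coe_nnreal_ennreal.indicator hUm
  -- pointwise bound
  have hbound : ∀ x, (‖wcc f' g' w x‖₊ : ℝ≥0∞) ≤ ENNReal.ofReal C * ∫⁻ y, φ y * γ (x + y) := by
    intro x
    calc (‖wcc f' g' w x‖₊ : ℝ≥0∞)
        ≤ ∫⁻ y, ‖(starRingEnd ℂ) (f' y) * g' (x + y) * w (x + y) y‖₊ :=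
          enorm_integral_le_lintegral_enorm _
      _ ≤ ∫⁻ y, ENNReal.ofReal C * (φ y * γ (x + y)) := by
          apply lintegral_mono
          intro y
          dsimp only
          by_cases hy : y ∈ U ∧ (x + y) ∈ U
          · rw [hφdef, hγdef, Set.indicator_of_mem hy.1, Set.indicator_of_mem hy.2]
            have h1 : (‖(starRingEnd ℂ) (f' y) * g' (x + y) * w (x + y) y‖₊ : ℝ≥0∞)
                = (‖f' y‖₊ : ℝ≥0∞) * ‖g' (x + y)‖₊ * ‖w (x + y) y‖₊ := by
              simp [nnnorm_mul, ENNReal.coe_mul]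
            rw [h1]
            have h2 : (‖w (x + y) y‖₊ : ℝ≥0∞) ≤ ENNReal.ofReal C := by
              rw [← enorm_eq_nnnorm, ← ofReal_norm]
              exact ENNReal.ofReal_le_ofReal (hC _ _)
            calc (‖f' y‖₊ : ℝ≥0∞) * ‖g' (x + y)‖₊ * ‖w (x + y) y‖₊
                ≤ (‖f' y‖₊ : ℝ≥0∞) * ‖g' (x + y)‖₊ * ENNReal.ofReal C :=
                  mul_le_mul_right h2 _
              _ = ENNReal.ofReal C * ((‖f' y‖₊ : ℝ≥0∞) * ‖g' (x + y)‖₊) := by ring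
          · rw [hwU _ _ (by tauto), mul_zero, nnnorm_zero]
            exact le_of_eq_of_le (by simp) zero_le
      _ = ENNReal.ofReal C * ∫⁻ y, φ y * γ (x + y) :=
          lintegral_const_mul' _ _ ENNReal.ofReal_ne_top
  -- finiteness of the two integrals
  have hU : volume U < ⊤ := hUb.measure_lt_top
  haveI : IsFiniteMeasure (volume.restrict U) :=
    ⟨by rwa [Measure.restrict_apply_univ]⟩
  have hAt : (∫⁻ y, φ y) ≠ ⊤ := by
    rw [hφdef, lintegral_indicator hUm]
    have h1 : MemLp f' 1 (volume.restrict U) := (hf'p.restrict U).mono_exponent hp1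
    exact (memLp_one_iff_integrable.mp h1).2.ne
  have hBt : (∫⁻ z, γ z ^ q) ≠ ⊤ := by
    refine ne_top_of_le_ne_top
      (lintegral_rpow_enorm_lt_top_of_eLpNorm_lt_top hp0 hp2 hg'p.2).ne
      (lintegral_mono fun z => ?_)
    exact ENNReal.rpow_le_rpow (by rw [hγdef]; exact Set.indicator_le_self _ _ z) hq0.le
  -- assemble
  refine ⟨hsm.aestronglyMeasurable, ?_⟩
  rw [eLpNorm_eq_lintegral_rpow_enorm_toReal hp0 hp2]
  refine ENNReal.rpow_lt_top_of_nonneg (by positivity) ?_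
  have calc1 : ∫⁻ x, (‖wcc f' g' w x‖₊ : ℝ≥0∞) ^ q ≤
      (ENNReal.ofReal C) ^ q *
        ((∫⁻ y, φ y) ^ (q - 1) * ((∫⁻ y, φ y) * ∫⁻ z, γ z ^ q)) := by
    calc ∫⁻ x, (‖wcc f' g' w x‖₊ : ℝ≥0∞) ^ q
        ≤ ∫⁻ x, (ENNReal.ofReal C * ∫⁻ y, φ y * γ (x + y)) ^ q :=
          lintegral_mono fun x => ENNReal.rpow_le_rpow (hbound x) hq0.le
      _ = ∫⁻ x, (ENNReal.ofReal C) ^ q * (∫⁻ y, φ y * γ (x + y)) ^ q := by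
          simp_rw [ENNReal.mul_rpow_of_nonneg _ _ hq0.le]
      _ = (ENNReal.ofReal C) ^ q * ∫⁻ x, (∫⁻ y, φ y * γ (x + y)) ^ q :=
          lintegral_const_mul' _ _ (ENNReal.rpow_ne_top_of_nonneg hq0.le ENNReal.ofReal_ne_top)
      _ ≤ _ := mul_le_mul_right (young_aux q hq1 φ γ hφm hγm hAt) _
  refine (lt_of_le_of_lt calc1 ?_).ne
  refine ENNReal.mul_lt_top (ENNReal.rpow_ne_top_of_nonneg hq0.le ENNReal.ofReal_ne_top).lt_top ?_
  exact ENNReal.mul_lt_top (ENNReal.rpow_ne_top_of_nonneg (by linarith) hAt).lt_top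
    (ENNReal.mul_lt_top hAt.lt_top hBt.lt_top)
end

section
/- Let U ⊆ R^d be an open set whose boundary has Lebesgue measure zero, and let p, q ∈ (1, ∞) with 1/p + 1/q = 1. Let f ∈ L^p(U, C), g ∈ L^q(U, C) (both extended by zero outside U), and let w: U × U → C be bounded and continuous on U × U (extended by zero outside U × U). Then the weighted cross-correlation f ⋆_w g is a continuous function on R^d. -/
open MeasureTheory Complex

set_option maxHeartbeats 2000000 in
theorem stmt5 {d : ℕ} (U : Set (EuclideanSpace ℝ (Fin d)))
    (hUo : IsOpen U) (hUfr : volume (frontier U) = 0)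
    (p q : ℝ) (hp : 1 < p) (hq : 1 < q) (hpq : 1 / p + 1 / q = 1)
    (f g : EuclideanSpace ℝ (Fin d) → ℂ)
    (hf : MemLp f (ENNReal.ofReal p) (volume : Measure (EuclideanSpace ℝ (Fin d))))
    (hg : MemLp g (ENNReal.ofReal q) (volume : Measure (EuclideanSpace ℝ (Fin d))))
    (hfU : ∀ x, x ∉ U → f x = 0) (hgU : ∀ x, x ∉ U → g x = 0)
    (w : EuclideanSpace ℝ (Fin d) → EuclideanSpace ℝ (Fin d) → ℂ)
    (hwc : ContinuousOn (fun z : EuclideanSpace ℝ (Fin d) × EuclideanSpace ℝ (Fin d) => w z.1 z.2)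
      (U ×ˢ U))
    (C : ℝ) (hC : ∀ x y, ‖w x y‖ ≤ C)
    (hwU : ∀ x y, x ∉ U ∨ y ∉ U → w x y = 0) :
    Continuous (wcc f g w) := by
  classical
  set P := ENNReal.ofReal p with hPdef
  set Q := ENNReal.ofReal q with hQdef
  have hp0 : 0 < p := one_pos.trans hp
  have hq0 : 0 < q := one_pos.trans hq
  have hC0 : 0 ≤ C := (norm_nonneg _).trans (hC 0 0)
  have hP1 : (1 : ENNReal) ≤ P := ENNReal.one_le_ofReal.2 hp.le
  have hQ1 : (1 : ENNReal) ≤ Q := ENNReal.one_le_ofReal.2 hq.le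
  have hPQ : (1 : ENNReal) / 1 = 1 / P + 1 / Q := by
    rw [hPdef, hQdef, one_div, one_div, one_div, inv_one,
      ← ENNReal.ofReal_inv_of_pos hp0, ← ENNReal.ofReal_inv_of_pos hq0,
      ← ENNReal.ofReal_add (by positivity) (by positivity)]
    rw [show p⁻¹ + q⁻¹ = 1 by rw [← one_div, ← one_div]; exact hpq]
    simp
  -- measurability of the extended weight
  have hWmeas : Measurable (fun z : EuclideanSpace ℝ (Fin d) × EuclideanSpace ℝ (Fin d) => w z.1 z.2) := by
    have heq : (fun z : EuclideanSpace ℝ (Fin d) × EuclideanSpace ℝ (Fin d) => w z.1 z.2)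
        = (U ×ˢ U).piecewise (fun z : EuclideanSpace ℝ (Fin d) × EuclideanSpace ℝ (Fin d) => w z.1 z.2) (fun _ => 0) := by
      ext z
      by_cases hz : z ∈ U ×ˢ U
      · rw [Set.piecewise_eq_of_mem _ _ _ hz]
      · rw [Set.piecewise_eq_of_notMem _ _ _ hz]
        rcases not_and_or.1 (by simpa [Set.mem_prod] using hz) with h | h
        · exact hwU _ _ (Or.inl h)
        · exact hwU _ _ (Or.inr h)
    rw [heq]
    exact ContinuousOn.measurable_piecewise hwc continuousOn_const
      ((hUo.prod hUo).measurableSet)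
  have hWx : ∀ x : EuclideanSpace ℝ (Fin d), AEStronglyMeasurable (fun y => w (x + y) y) volume := fun x =>
    ((hWmeas.comp ((measurable_const.add measurable_id).prodMk measurable_id))).aestronglyMeasurable
  -- conjugate of f
  have hconj : MemLp (fun y => (starRingEnd ℂ) (f y)) P volume := by
    refine ⟨Complex.continuous_conj.comp_aestronglyMeasurable hf.1, ?_⟩
    have : eLpNorm (fun y => (starRingEnd ℂ) (f y)) P volume = eLpNorm f P volume :=
      eLpNorm_congr_norm_ae (Filter.Eventually.of_forall fun y => by simp)
    rw [this]; exact hf.2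
  -- translated functions
  have htrans : ∀ (h : EuclideanSpace ℝ (Fin d) → ℂ), MemLp h Q volume → ∀ x : EuclideanSpace ℝ (Fin d),
      MemLp (fun y => h (x + y)) Q volume := fun h hh x =>
    hh.comp_measurePreserving (measurePreserving_add_left volume x)
  have htransN : ∀ (h : EuclideanSpace ℝ (Fin d) → ℂ), MemLp h Q volume → ∀ x : EuclideanSpace ℝ (Fin d),
      eLpNorm (fun y => h (x + y)) Q volume = eLpNorm h Q volume := fun h hh x =>
    eLpNorm_comp_measurePreserving hh.1 (measurePreserving_add_left volume x)
  -- integrability of the pairing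
  have hmul : ∀ (h : EuclideanSpace ℝ (Fin d) → ℂ), MemLp h Q volume → ∀ x : EuclideanSpace ℝ (Fin d),
      Integrable (fun y => (starRingEnd ℂ) (f y) * h (x + y)) volume := by
    intro h hh x
    have := (htrans h hh x).smul hconj (p := P) (q := Q) (r := 1) (hpqr := ⟨by simpa [one_div] using hPQ.symm⟩)
    rw [memLp_one_iff_integrable] at this
    exact this.congr (Filter.Eventually.of_forall fun y => by simp [smul_eq_mul])
  have hInt : ∀ (h : EuclideanSpace ℝ (Fin d) → ℂ), MemLp h Q volume → ∀ x : EuclideanSpace ℝ (Fin d),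
      Integrable (fun y => (starRingEnd ℂ) (f y) * h (x + y) * w (x + y) y) volume := by
    intro h hh x
    have := ((hmul h hh x).bdd_mul (hWx x) (c := C) (Filter.Eventually.of_forall fun y => hC _ _))
    exact this.congr (Filter.Eventually.of_forall fun y => by ring)
  -- Hölder bound
  have hBound : ∀ (h : EuclideanSpace ℝ (Fin d) → ℂ), MemLp h Q volume → ∀ x : EuclideanSpace ℝ (Fin d),
      ‖wcc f h w x‖ ≤ C * (eLpNorm f P volume).toReal * (eLpNorm h Q volume).toReal := by
    intro h hh x
    have hφint : Integrable (fun y => (starRingEnd ℂ) (f y) * h (x + y)) volume := hmul h hh x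
    have step1 : ‖wcc f h w x‖ ≤ ∫ y, C * ‖(starRingEnd ℂ) (f y) * h (x + y)‖ := by
      refine (norm_integral_le_integral_norm _).trans ?_
      refine integral_mono_of_nonneg (Filter.Eventually.of_forall fun y => norm_nonneg _)
        (hφint.norm.const_mul C) (Filter.Eventually.of_forall fun y => ?_)
      calc ‖(starRingEnd ℂ) (f y) * h (x + y) * w (x + y) y‖
          = ‖(starRingEnd ℂ) (f y) * h (x + y)‖ * ‖w (x + y) y‖ := norm_mul _ _
        _ ≤ ‖(starRingEnd ℂ) (f y) * h (x + y)‖ * C := by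
            exact mul_le_mul_of_nonneg_left (hC _ _) (norm_nonneg _)
        _ = C * ‖(starRingEnd ℂ) (f y) * h (x + y)‖ := mul_comm _ _
    have step2 : ∫ y, C * ‖(starRingEnd ℂ) (f y) * h (x + y)‖
        = C * (eLpNorm (fun y => (starRingEnd ℂ) (f y) * h (x + y)) 1 volume).toReal := by
      rw [integral_const_mul, eLpNorm_one_eq_lintegral_enorm,
        integral_norm_eq_lintegral_enorm hφint.1]
    have step3 : eLpNorm (fun y => (starRingEnd ℂ) (f y) * h (x + y)) 1 volume
        ≤ eLpNorm f P volume * eLpNorm h Q volume := by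
      have := eLpNorm_smul_le_mul_eLpNorm (μ := volume) (htrans h hh x).1 hconj.1 (p := P) (q := Q) (r := 1) (hpqr := ⟨by simpa [one_div] using hPQ.symm⟩)
      rw [eLpNorm_congr_ae (g := fun y => (starRingEnd ℂ) (f y) * h (x + y))
        (Filter.Eventually.of_forall fun y => by simp [smul_eq_mul])] at this
      refine this.trans (le_of_eq ?_)
      rw [htransN h hh x]
      congr 1
      exact eLpNorm_congr_norm_ae (Filter.Eventually.of_forall fun y => by simp)
    refine step1.trans ?_
    rw [step2, mul_assoc]
    refine mul_le_mul_of_nonneg_left ?_ hC0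
    have hne : eLpNorm f P volume * eLpNorm h Q volume ≠ ⊤ :=
      ENNReal.mul_ne_top hf.2.ne hh.2.ne
    calc (eLpNorm (fun y => (starRingEnd ℂ) (f y) * h (x + y)) 1 volume).toReal
        ≤ (eLpNorm f P volume * eLpNorm h Q volume).toReal := ENNReal.toReal_mono hne step3
      _ = (eLpNorm f P volume).toReal * (eLpNorm h Q volume).toReal := ENNReal.toReal_mul
  -- linearity in g
  have hsub : ∀ (h₁ h₂ : EuclideanSpace ℝ (Fin d) → ℂ), MemLp h₁ Q volume → MemLp h₂ Q volume → ∀ x : EuclideanSpace ℝ (Fin d),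
      wcc f h₁ w x - wcc f h₂ w x = wcc f (h₁ - h₂) w x := by
    intro h₁ h₂ hh₁ hh₂ x
    simp only [wcc]
    rw [← integral_sub (hInt h₁ hh₁ x) (hInt h₂ hh₂ x)]
    congr 1
    ext y
    simp only [Pi.sub_apply]
    ring
  -- Step B: continuity for continuous compactly supported g
  have contB : ∀ (h : EuclideanSpace ℝ (Fin d) → ℂ), Continuous h → HasCompactSupport h → MemLp h Q volume →
      Continuous (wcc f h w) := by
    intro h hcont hsupp hmem
    rw [continuous_iff_continuousAt]
    intro x₀
    obtain ⟨M, hM⟩ := hsupp.exists_bound_of_continuous hcont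
    have hM0 : 0 ≤ M := (norm_nonneg _).trans (hM 0)
    obtain ⟨R, hR0, hR⟩ := hsupp.isBounded.subset_closedBall_lt 0 0
    set K := Metric.closedBall (0 : EuclideanSpace ℝ (Fin d)) (R + (‖x₀‖ + 1)) with hKdef
    have hKmeas : MeasurableSet K := measurableSet_closedBall
    have hKint : Integrable (K.indicator fun y => C * M * ‖f y‖) volume := by
      rw [integrable_indicator_iff hKmeas]
      have hfin : IsFiniteMeasure (volume.restrict K) :=
        ⟨by rw [Measure.restrict_apply_univ]; exact measure_closedBall_lt_top⟩
      have hfK : Integrable f (volume.restrict K) :=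
        memLp_one_iff_integrable.mp ((hf.restrict K).mono_exponent hP1)
      exact hfK.norm.const_mul _
    have key : Filter.Tendsto (fun x => ∫ y, (starRingEnd ℂ) (f y) * h (x + y) * w (x + y) y)
        (nhds x₀) (nhds (∫ y, (starRingEnd ℂ) (f y) * h (x₀ + y) * w (x₀ + y) y)) := by
      apply tendsto_integral_filter_of_dominated_convergence
        (bound := K.indicator fun y => C * M * ‖f y‖)
      · exact Filter.Eventually.of_forall fun x => (hInt h hmem x).1
      · filter_upwards [Metric.ball_mem_nhds x₀ one_pos] with x hx
        refine Filter.Eventually.of_forall fun y => ?_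
        by_cases hy : y ∈ K
        · rw [Set.indicator_of_mem hy]
          calc ‖(starRingEnd ℂ) (f y) * h (x + y) * w (x + y) y‖
              = ‖f y‖ * ‖h (x + y)‖ * ‖w (x + y) y‖ := by simp [norm_mul]
            _ ≤ ‖f y‖ * M * C := by
                refine mul_le_mul (mul_le_mul_of_nonneg_left (hM _) (norm_nonneg _))
                  (hC _ _) (norm_nonneg _) (by positivity)
            _ = C * M * ‖f y‖ := by ring
        · rw [Set.indicator_of_notMem hy]
          have hxy : h (x + y) = 0 := by
            by_contra hne
            have hmem' : x + y ∈ Metric.closedBall (0 : EuclideanSpace ℝ (Fin d)) R :=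
              hR (subset_tsupport h (by simpa using hne))
            have h1 : ‖x + y‖ ≤ R := by simpa using hmem'
            have h2 : ¬ (‖y‖ ≤ R + (‖x₀‖ + 1)) := by simpa [hKdef] using hy
            have h3 : ‖x - x₀‖ < 1 := by simpa [dist_eq_norm] using hx
            have h4 : ‖y‖ ≤ ‖x + y‖ + ‖x‖ := by
              have := norm_add_le (x + y) (-x); simpa using this
            have h5 : ‖x‖ ≤ ‖x₀‖ + 1 := by
              have := norm_add_le (x - x₀) x₀
              simp only [sub_add_cancel] at this
              linarith
            exact h2 (by linarith)
          simp [hxy]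
      · exact hKint
      · have hpre : volume ((fun y => x₀ + y) ⁻¹' frontier U) = 0 := by
          rw [(measurePreserving_add_left volume x₀).measure_preimage
            isClosed_frontier.measurableSet.nullMeasurableSet]
          exact hUfr
        have hnull : volume (frontier U ∪ (fun y => x₀ + y) ⁻¹' frontier U) = 0 :=
          measure_union_null hUfr hpre
        filter_upwards [measure_eq_zero_iff_ae_notMem.mp hnull] with y hy
        simp only [Set.mem_union, not_or, Set.mem_preimage] at hy
        obtain ⟨hy1, hy2⟩ := hy
        by_cases hyU : y ∈ U
        · by_cases hxyU : x₀ + y ∈ U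
          · have hW : ContinuousAt (fun z : EuclideanSpace ℝ (Fin d) × EuclideanSpace ℝ (Fin d) => w z.1 z.2) (x₀ + y, y) :=
              hwc.continuousAt ((hUo.prod hUo).mem_nhds ⟨hxyU, hyU⟩)
            have c1 : ContinuousAt (fun x : EuclideanSpace ℝ (Fin d) => ((x + y, y) : EuclideanSpace ℝ (Fin d) × EuclideanSpace ℝ (Fin d))) x₀ :=
              ((continuous_id.add continuous_const).prodMk continuous_const).continuousAt
            have c2 : ContinuousAt (fun x : EuclideanSpace ℝ (Fin d) => w (x + y) y) x₀ := by
              exact ContinuousAt.comp (f := fun x : EuclideanSpace ℝ (Fin d) =>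
                ((x + y, y) : EuclideanSpace ℝ (Fin d) × EuclideanSpace ℝ (Fin d))) hW c1
            have c3 : ContinuousAt (fun x : EuclideanSpace ℝ (Fin d) => h (x + y)) x₀ :=
              hcont.continuousAt.comp ((continuous_id.add continuous_const).continuousAt)
            exact ((continuousAt_const.mul c3).mul c2).tendsto
          · have hxyC : x₀ + y ∉ closure U := by
              intro hc
              exact hy2 ⟨hc, by rwa [hUo.interior_eq]⟩
            have hev : ∀ᶠ x in nhds x₀, x + y ∈ (closure U)ᶜ :=
              ((continuous_id.add continuous_const)).continuousAt.preimage_mem_nhds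
                (isClosed_closure.isOpen_compl.mem_nhds hxyC)
            have h0 : (starRingEnd ℂ) (f y) * h (x₀ + y) * w (x₀ + y) y = 0 := by
              rw [hwU _ _ (Or.inl fun hmem' => hxyC (subset_closure hmem')), mul_zero]
            rw [h0]
            refine Filter.Tendsto.congr' ?_ tendsto_const_nhds
            filter_upwards [hev] with x hx
            rw [hwU _ _ (Or.inl fun hmem' => hx (subset_closure hmem')), mul_zero]
        · simp only [hfU y hyU, map_zero, zero_mul]
          exact tendsto_const_nhds
    exact key
  -- approximating sequence
  have hchoice : ∀ n : ℕ, ∃ h : EuclideanSpace ℝ (Fin d) → ℂ, HasCompactSupport h ∧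
      eLpNorm (g - h) Q volume ≤ ENNReal.ofReal (1 / ((n : ℝ) + 1)) ∧ Continuous h ∧
      MemLp h Q volume := by
    intro n
    refine hg.exists_hasCompactSupport_eLpNorm_sub_le ENNReal.ofReal_ne_top ?_
    exact (ENNReal.ofReal_pos.2 (by positivity)).ne'
  choose G hGsupp hGapprox hGcont hGmem using hchoice
  set D := C * (eLpNorm f P volume).toReal with hDdef
  have hD0 : 0 ≤ D := mul_nonneg hC0 ENNReal.toReal_nonneg
  have hunif : TendstoUniformly (fun n x => wcc f (G n) w x) (wcc f g w) Filter.atTop := by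
    rw [Metric.tendstoUniformly_iff]
    intro ε hε
    have hDt : Filter.Tendsto (fun n : ℕ => D * (1 / ((n : ℝ) + 1))) Filter.atTop (nhds 0) := by
      simpa using tendsto_one_div_add_atTop_nhds_zero_nat.const_mul D
    filter_upwards [hDt.eventually_lt_const hε] with n hn x
    have hsubMem : MemLp (g - G n) Q volume := hg.sub (hGmem n)
    have hb := hBound (g - G n) hsubMem x
    have hle : (eLpNorm (g - G n) Q volume).toReal ≤ 1 / ((n : ℝ) + 1) := by
      refine ENNReal.toReal_le_of_le_ofReal (by positivity) (hGapprox n)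
    have : ‖wcc f g w x - wcc f (G n) w x‖ ≤ D * (1 / ((n : ℝ) + 1)) := by
      rw [hsub g (G n) hg (hGmem n) x]
      refine hb.trans ?_
      exact mul_le_mul_of_nonneg_left hle hD0
    calc dist (wcc f g w x) (wcc f (G n) w x) = ‖wcc f g w x - wcc f (G n) w x‖ := by
          rw [dist_eq_norm]
      _ ≤ D * (1 / ((n : ℝ) + 1)) := this
      _ < ε := hn
  exact hunif.continuous ((Filter.Eventually.of_forall fun n =>
    contB (G n) (hGcont n) (hGsupp n) (hGmem n) : ∀ᶠ n in Filter.atTop, _).frequently)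
end

section
/- Let U ⊆ R^d be open with boundary of measure zero, f ∈ L^2(U, C), and w: U × U → C a bounded continuous weight with w(y,y) ≥ c for some c > 0 and almost all y ∈ U. Then ‖f ⋆_w f‖_{L^2} = 0 if and only if ‖f‖_{L^2} = 0. -/
open MeasureTheory Complex

section Aux

open Filter Topology ENNReal NNReal

variable {d : ℕ}

local notation "𝔼" => EuclideanSpace ℝ (Fin d)

/-- Measurability of the weight. -/
lemma aux_w_meas (U : Set 𝔼) (hUo : IsOpen U)
    (w : 𝔼 → 𝔼 → ℂ)
    (hwc : ContinuousOn (fun z : 𝔼 × 𝔼 => w z.1 z.2) (U ×ˢ U))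
    (hwU : ∀ x y, x ∉ U ∨ y ∉ U → w x y = 0) :
    Measurable (fun p : 𝔼 × 𝔼 => w p.1 p.2) := by
  classical
  have h : (fun p : 𝔼 × 𝔼 => w p.1 p.2)
      = (U ×ˢ U).piecewise (fun p => w p.1 p.2) 0 := by
    funext p
    by_cases hp : p ∈ U ×ˢ U
    · simp [Set.piecewise, hp]
    · have : p.1 ∉ U ∨ p.2 ∉ U := by
        rw [Set.mem_prod] at hp; tauto
      simp [Set.piecewise, hp, hwU _ _ this]
  rw [h]
  exact hwc.measurable_piecewise continuousOn_const (hUo.prod hUo).measurableSet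

/-- Continuity of translation in L². -/
lemma aux_translation (f : 𝔼 → ℂ) (hf : MemLp f 2 (volume : Measure 𝔼)) (x₀ : 𝔼) :
    Tendsto (fun x : 𝔼 => eLpNorm (fun y => f (x + y) - f (x₀ + y)) 2 (volume : Measure 𝔼))
      (𝓝 x₀) (𝓝 0) := by
  set μ : Measure 𝔼 := volume
  have mp : ∀ x : 𝔼, MeasurePreserving (fun y => x + y) μ μ :=
    fun x => measurePreserving_add_left μ x
  set cm : 𝔼 → C(𝔼, 𝔼) := fun x => ⟨fun y => x + y, by fun_prop⟩ with hcm
  have hcmc : Continuous cm := by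
    apply ContinuousMap.continuous_of_continuous_uncurry
    exact continuous_fst.add continuous_snd
  set F : Lp ℂ 2 μ := hf.toLp f
  set T : 𝔼 → Lp ℂ 2 μ := fun x => Lp.compMeasurePreserving (cm x) (mp x) F with hT
  have hTc : Continuous T :=
    Continuous.compMeasurePreservingLp continuous_const hcmc mp (by norm_num)
  have hTx : ∀ x, (T x : 𝔼 → ℂ) =ᵐ[μ] fun y => f (x + y) := by
    intro x
    refine (Lp.coeFn_compMeasurePreserving F (mp x)).trans ?_
    have : (F : 𝔼 → ℂ) =ᵐ[μ] f := hf.coeFn_toLp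
    exact (mp x).quasiMeasurePreserving.ae_eq_comp this.symm |>.symm
  have key : ∀ x, eLpNorm (fun y => f (x + y) - f (x₀ + y)) 2 μ
      = ENNReal.ofReal (dist (T x) (T x₀)) := by
    intro x
    have h1 : (fun y => f (x + y) - f (x₀ + y)) =ᵐ[μ] ⇑(T x - T x₀) :=
      ((hTx x).symm.sub (hTx x₀).symm).trans (Lp.coeFn_sub (T x) (T x₀)).symm
    rw [eLpNorm_congr_ae h1, dist_eq_norm, Lp.norm_def,
      ENNReal.ofReal_toReal (Lp.eLpNorm_ne_top _)]
  simp only [key]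
  have hd : Tendsto (fun x => dist (T x) (T x₀)) (𝓝 x₀) (𝓝 0) := by
    have := (hTc.tendsto x₀).dist (tendsto_const_nhds (x := T x₀))
    simpa [dist_self] using this
  simpa [Function.comp_def] using (ENNReal.continuous_ofReal.tendsto 0).comp hd

/-- The second term tends to zero. -/
lemma aux_BT (U : Set 𝔼) (hUo : IsOpen U)
    (f : 𝔼 → ℂ) (hfm : StronglyMeasurable f)
    (hf : MemLp f 2 (volume : Measure 𝔼))
    (hfU : ∀ x, x ∉ U → f x = 0)
    (w : 𝔼 → 𝔼 → ℂ)
    (hwc : ContinuousOn (fun z : 𝔼 × 𝔼 => w z.1 z.2) (U ×ˢ U))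
    (C : ℝ) (hC : ∀ x y, ‖w x y‖ ≤ C)
    (hwU : ∀ x y, x ∉ U ∨ y ∉ U → w x y = 0)
    (wsl : ∀ x : 𝔼, Measurable (fun y => w (x + y) y))
    (x₀ : 𝔼) :
    Tendsto (fun x : 𝔼 =>
      eLpNorm (fun y => f (x₀ + y) * (w (x + y) y - w (x₀ + y) y)) 2 (volume : Measure 𝔼))
      (𝓝 x₀) (𝓝 0) := by
  set μ : Measure 𝔼 := volume
  have hC0 : 0 ≤ C := le_trans (norm_nonneg _) (hC 0 0)
  have mp : MeasurePreserving (fun y : 𝔼 => x₀ + y) μ μ := measurePreserving_add_left μ x₀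
  have hsq : ∀ a : ℝ≥0∞, a ^ (2:ℝ) = a * a := fun a => by
    rw [show (2:ℝ) = ((2:ℕ):ℝ) by norm_num, ENNReal.rpow_natCast]; ring
  -- rewrite eLpNorm via lintegral
  have hrw : ∀ x : 𝔼, eLpNorm (fun y => f (x₀ + y) * (w (x + y) y - w (x₀ + y) y)) 2 μ
      = (∫⁻ y, ((‖f (x₀ + y) * (w (x + y) y - w (x₀ + y) y)‖₊ : ℝ≥0∞)) ^ (2:ℝ) ∂μ) ^ (1/(2:ℝ)) := by
    intro x
    rw [eLpNorm_eq_lintegral_rpow_enorm_toReal (by norm_num) (by norm_num)]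
    norm_num
    rfl
  simp only [hrw]
  have hlim : Tendsto (fun x : 𝔼 =>
      ∫⁻ y, ((‖f (x₀ + y) * (w (x + y) y - w (x₀ + y) y)‖₊ : ℝ≥0∞)) ^ (2:ℝ) ∂μ)
      (𝓝 x₀) (𝓝 0) := by
    have h0 : (0:ℝ≥0∞) = ∫⁻ _ : 𝔼, (fun _ => (0:ℝ≥0∞)) 0 ∂μ := by simp
    rw [h0]
    refine tendsto_lintegral_filter_of_dominated_convergence
      (fun y => (((2*C).toNNReal : ℝ≥0∞) * (‖f (x₀ + y)‖₊ : ℝ≥0∞)) ^ (2:ℝ)) ?_ ?_ ?_ ?_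
    · filter_upwards with x
      have : Measurable (fun y => f (x₀ + y) * (w (x + y) y - w (x₀ + y) y)) :=
        (hfm.measurable.comp mp.measurable).mul ((wsl x).sub (wsl x₀))
      simp only [hsq]
      exact (this.nnnorm.coe_nnreal_ennreal).mul (this.nnnorm.coe_nnreal_ennreal)
    · filter_upwards with x
      filter_upwards with y
      refine ENNReal.rpow_le_rpow ?_ (by norm_num)
      rw [mul_comm (((2*C).toNNReal : ℝ≥0∞)) _, ← ENNReal.coe_mul]
      refine ENNReal.coe_le_coe.mpr ?_
      rw [nnnorm_mul]
      refine mul_le_mul_right ?_ _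
      have : ‖w (x + y) y - w (x₀ + y) y‖ ≤ 2 * C := by
        calc ‖w (x + y) y - w (x₀ + y) y‖ ≤ ‖w (x + y) y‖ + ‖w (x₀ + y) y‖ := norm_sub_le _ _
        _ ≤ 2 * C := by have := hC (x + y) y; have := hC (x₀ + y) y; linarith
      refine NNReal.coe_le_coe.mp ?_
      rw [coe_nnnorm, Real.coe_toNNReal _ (by linarith)]
      exact this
    · -- finiteness of the bound integral
      have hmem : MemLp (fun y => f (x₀ + y)) 2 μ := hf.comp_measurePreserving mp
      have hlt := hmem.eLpNorm_lt_top
      rw [eLpNorm_eq_lintegral_rpow_enorm_toReal (by norm_num) (by norm_num)] at hlt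
      have h2 : (2:ℝ≥0∞).toReal = (2:ℝ) := by norm_num
      rw [h2] at hlt
      have hfin : ∫⁻ y, (‖f (x₀ + y)‖₊ : ℝ≥0∞) ^ (2:ℝ) ∂μ < ⊤ := by
        rw [← ENNReal.rpow_lt_top_iff_of_pos (by norm_num : (0:ℝ) < 1/2)]
        exact hlt
      have heq : ∀ y : 𝔼, (((2*C).toNNReal : ℝ≥0∞) * (‖f (x₀ + y)‖₊ : ℝ≥0∞)) ^ (2:ℝ)
          = (((2*C).toNNReal : ℝ≥0∞))^(2:ℝ) * (‖f (x₀ + y)‖₊ : ℝ≥0∞) ^ (2:ℝ) := fun y =>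
        ENNReal.mul_rpow_of_nonneg _ _ (by norm_num)
      simp only [heq]
      rw [lintegral_const_mul]
      · exact (ENNReal.mul_lt_top (by simp [hsq]; exact ENNReal.mul_lt_top ENNReal.coe_lt_top ENNReal.coe_lt_top) hfin).ne
      · simp only [hsq]
        exact ((hfm.measurable.comp mp.measurable).nnnorm.coe_nnreal_ennreal).mul
          ((hfm.measurable.comp mp.measurable).nnnorm.coe_nnreal_ennreal)
    · -- pointwise limit
      filter_upwards with y
      by_cases hy0 : f (x₀ + y) = 0
      · simp only [hy0, zero_mul, nnnorm_zero, ENNReal.coe_zero]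
        simpa using tendsto_const_nhds.congr
          (fun x => by rw [ENNReal.zero_rpow_of_pos (by norm_num : (0:ℝ) < 2)])
      · have hx₀y : x₀ + y ∈ U := by by_contra hmem; exact hy0 (hfU _ hmem)
        by_cases hyU : y ∈ U
        · have hwcont : Tendsto (fun x : 𝔼 => w (x + y) y) (𝓝 x₀) (𝓝 (w (x₀ + y) y)) := by
            have hca : ContinuousAt (fun z : 𝔼 × 𝔼 => w z.1 z.2) (x₀ + y, y) :=
              hwc.continuousAt ((hUo.prod hUo).mem_nhds ⟨hx₀y, hyU⟩)
            have hmap : Continuous (fun x : 𝔼 => ((x + y, y) : 𝔼 × 𝔼)) :=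
              (continuous_id.add continuous_const).prodMk continuous_const
            exact hca.tendsto.comp (hmap.tendsto x₀)
          have hmul : Tendsto (fun x : 𝔼 => f (x₀ + y) * (w (x + y) y - w (x₀ + y) y))
              (𝓝 x₀) (𝓝 0) := by
            have := (hwcont.sub (tendsto_const_nhds (x := w (x₀ + y) y)))
            rw [sub_self] at this
            simpa using (tendsto_const_nhds (x := f (x₀ + y))).mul this
          have hcont : Continuous (fun z : ℂ => ((‖z‖₊ : ℝ≥0∞)) ^ (2:ℝ)) :=
            ENNReal.continuous_rpow_const.comp (ENNReal.continuous_coe.comp continuous_nnnorm)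
          have := (hcont.tendsto 0).comp hmul
          have h02 : ((‖(0:ℂ)‖₊ : ℝ≥0∞)) ^ (2:ℝ) = 0 := by
            rw [nnnorm_zero, ENNReal.coe_zero, ENNReal.zero_rpow_of_pos (by norm_num)]
          simpa [Function.comp_def, h02] using this
        · have : ∀ x : 𝔼, w (x + y) y = 0 := fun x => hwU _ _ (Or.inr hyU)
          simp only [this, sub_zero, sub_self, mul_zero, nnnorm_zero, ENNReal.coe_zero]
          simpa using tendsto_const_nhds.congr
            (fun x => by rw [ENNReal.zero_rpow_of_pos (by norm_num : (0:ℝ) < 2)])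
  have := (ENNReal.continuous_rpow_const (y := 1/(2:ℝ))).tendsto 0 |>.comp hlim
  have h02 : (0:ℝ≥0∞) ^ (1/(2:ℝ)) = 0 := ENNReal.zero_rpow_of_pos (by norm_num)
  simpa [Function.comp_def, h02] using this

/-- Continuity of the weighted autocorrelation, for a strongly measurable representative. -/
lemma aux_wcc_continuous (U : Set 𝔼) (hUo : IsOpen U)
    (f : 𝔼 → ℂ) (hfm : StronglyMeasurable f)
    (hf : MemLp f 2 (volume : Measure 𝔼))
    (hfU : ∀ x, x ∉ U → f x = 0)
    (w : 𝔼 → 𝔼 → ℂ)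
    (hwc : ContinuousOn (fun z : 𝔼 × 𝔼 => w z.1 z.2) (U ×ˢ U))
    (C : ℝ) (hC : ∀ x y, ‖w x y‖ ≤ C)
    (hwU : ∀ x y, x ∉ U ∨ y ∉ U → w x y = 0) :
    Continuous (wcc f f w) := by
  set μ : Measure 𝔼 := volume
  have hC0 : 0 ≤ C := le_trans (norm_nonneg _) (hC 0 0)
  have mp : ∀ x : 𝔼, MeasurePreserving (fun y => x + y) μ μ :=
    fun x => measurePreserving_add_left μ x
  have wm : Measurable (fun p : 𝔼 × 𝔼 => w p.1 p.2) := aux_w_meas U hUo w hwc hwU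
  have wsl : ∀ x : 𝔼, Measurable (fun y => w (x + y) y) := by
    intro x
    exact wm.comp (by fun_prop : Measurable (fun y : 𝔼 => (x + y, y)))
  set h : 𝔼 → 𝔼 → ℂ := fun x y => f (x + y) * w (x + y) y with hh
  have hmeas : ∀ x, AEStronglyMeasurable (h x) μ := by
    intro x
    exact ((hfm.measurable.comp (mp x).measurable).mul (wsl x)).aestronglyMeasurable
  have hmemt : ∀ x : 𝔼, MemLp (fun y => f (x + y)) 2 μ :=
    fun x => hf.comp_measurePreserving (mp x)
  have hmem : ∀ x, MemLp (h x) 2 μ := by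
    intro x
    refine MemLp.of_le_mul (c := C) (hmemt x) (hmeas x) ?_
    filter_upwards with y
    rw [hh, norm_mul, mul_comm]
    exact mul_le_mul_of_nonneg_right (hC _ _) (norm_nonneg _)
  set H : 𝔼 → Lp ℂ 2 μ := fun x => (hmem x).toLp (h x) with hHdef
  -- continuity of x ↦ H x in L²
  have Hc : Continuous H := by
    rw [continuous_iff_continuousAt]
    intro x₀
    have hdist : ∀ x, dist (H x) (H x₀) = (eLpNorm (fun y => h x y - h x₀ y) 2 μ).toReal := by
      intro x
      rw [Lp.dist_def]
      congr 1
      refine eLpNorm_congr_ae ?_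
      filter_upwards [(hmem x).coeFn_toLp, (hmem x₀).coeFn_toLp] with y hy hy' using by
        simp [hHdef, hy, hy']
    have S : Tendsto (fun x => eLpNorm (fun y => h x y - h x₀ y) 2 μ) (𝓝 x₀) (𝓝 0) := by
      -- split into two terms
      have bound : ∀ x, eLpNorm (fun y => h x y - h x₀ y) 2 μ
          ≤ (C.toNNReal : ℝ≥0∞) * eLpNorm (fun y => f (x + y) - f (x₀ + y)) 2 μ
            + eLpNorm (fun y => f (x₀ + y) * (w (x + y) y - w (x₀ + y) y)) 2 μ := by
        intro x
        have hsplit : (fun y => h x y - h x₀ y)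
            = fun y => (f (x + y) - f (x₀ + y)) * w (x + y) y
              + f (x₀ + y) * (w (x + y) y - w (x₀ + y) y) := by
          funext y; simp only [hh]; ring
        rw [hsplit]
        have mA : AEStronglyMeasurable (fun y => (f (x + y) - f (x₀ + y)) * w (x + y) y) μ :=
          (((hfm.measurable.comp (mp x).measurable).sub
            (hfm.measurable.comp (mp x₀).measurable)).mul (wsl x)).aestronglyMeasurable
        have mB : AEStronglyMeasurable
            (fun y => f (x₀ + y) * (w (x + y) y - w (x₀ + y) y)) μ :=
          ((hfm.measurable.comp (mp x₀).measurable).mul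
            ((wsl x).sub (wsl x₀))).aestronglyMeasurable
        refine le_trans (eLpNorm_add_le mA mB one_le_two) (add_le_add_left ?_ _)
        have step1 : eLpNorm (fun y => (f (x + y) - f (x₀ + y)) * w (x + y) y) 2 μ
            ≤ eLpNorm (fun y => C • (f (x + y) - f (x₀ + y))) 2 μ := by
          refine eLpNorm_mono_ae ?_
          filter_upwards with y
          rw [norm_mul, norm_smul, Real.norm_of_nonneg hC0, mul_comm]
          exact mul_le_mul_of_nonneg_right (hC _ _) (norm_nonneg _)
        refine step1.trans_eq ?_
        have := eLpNorm_const_smul (𝕜 := ℝ) C (fun y => f (x + y) - f (x₀ + y)) 2 μ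
        rw [enorm_eq_nnnorm, Real.nnnorm_of_nonneg hC0] at this
        rw [Real.toNNReal_of_nonneg hC0]
        exact this
      have KT : Tendsto (fun x => (C.toNNReal : ℝ≥0∞)
          * eLpNorm (fun y => f (x + y) - f (x₀ + y)) 2 μ) (𝓝 x₀) (𝓝 0) := by
        have := ENNReal.Tendsto.const_mul (a := (C.toNNReal : ℝ≥0∞))
          (aux_translation f hf x₀) (Or.inr ENNReal.coe_ne_top)
        simpa using this
      have BT : Tendsto (fun x =>
          eLpNorm (fun y => f (x₀ + y) * (w (x + y) y - w (x₀ + y) y)) 2 μ) (𝓝 x₀) (𝓝 0) :=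
        aux_BT U hUo f hfm hf hfU w hwc C hC hwU wsl x₀
      have comb := KT.add BT
      rw [add_zero] at comb
      exact tendsto_of_tendsto_of_tendsto_of_le_of_le tendsto_const_nhds comb
        (fun x => zero_le) bound
    rw [ContinuousAt, tendsto_iff_dist_tendsto_zero]
    have := (ENNReal.tendsto_toReal (by simp : (0:ℝ≥0∞) ≠ ⊤)).comp S
    simpa [Function.comp_def, hdist] using this
  -- wcc as an inner product
  set F0 : Lp ℂ 2 μ := hf.toLp f with hF0
  have hwcc : wcc f f w = fun x => (inner ℂ F0 (H x) : ℂ) := by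
    funext x
    rw [MeasureTheory.L2.inner_def]
    refine (integral_congr_ae ?_)
    filter_upwards [hf.coeFn_toLp, (hmem x).coeFn_toLp] with y hy hy'
    rw [RCLike.inner_apply]
    simp only [hF0, hy, hy', hh]
    rw [show H x = (hmem x).toLp (h x) from rfl, hy']
    simp only [hh]
    ring
  rw [hwcc]
  exact Continuous.inner continuous_const Hc

end Aux

open scoped ENNReal NNReal

theorem stmt6 {d : ℕ} (U : Set (EuclideanSpace ℝ (Fin d)))
    (hUo : IsOpen U) (hUfr : volume (frontier U) = 0)
    (f : EuclideanSpace ℝ (Fin d) → ℂ)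
    (hf : MemLp f 2 (volume : Measure (EuclideanSpace ℝ (Fin d))))
    (hfU : ∀ x, x ∉ U → f x = 0)
    (w : EuclideanSpace ℝ (Fin d) → EuclideanSpace ℝ (Fin d) → ℂ)
    (hwc : ContinuousOn (fun z : EuclideanSpace ℝ (Fin d) × EuclideanSpace ℝ (Fin d) => w z.1 z.2)
      (U ×ˢ U))
    (C : ℝ) (hC : ∀ x y, ‖w x y‖ ≤ C)
    (hwU : ∀ x y, x ∉ U ∨ y ∉ U → w x y = 0)
    (c : ℝ) (hc : 0 < c)
    (hdiag : ∀ᵐ y ∂(volume : Measure (EuclideanSpace ℝ (Fin d))),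
      y ∈ U → c ≤ (w y y).re ∧ (w y y).im = 0) :
    eLpNorm (wcc f f w) 2 volume = 0 ↔ eLpNorm f 2 volume = 0 := by
  have two_ne : (2:ℝ≥0∞) ≠ 0 := by norm_num
  constructor
  · intro hwcc0
    -- pass to a strongly measurable representative vanishing outside U
    set f' : EuclideanSpace ℝ (Fin d) → ℂ := U.indicator (hf.1.mk f) with hf'def
    have hf'm : StronglyMeasurable f' := hf.1.stronglyMeasurable_mk.indicator hUo.measurableSet
    have hff' : f =ᵐ[(volume : Measure (EuclideanSpace ℝ (Fin d)))] f' := by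
      filter_upwards [hf.1.ae_eq_mk] with y hy
      by_cases hyU : y ∈ U
      · simp [hf'def, Set.indicator_of_mem hyU, hy]
      · simp [hf'def, Set.indicator_of_notMem hyU, hfU y hyU]
    have hf' : MemLp f' 2 (volume : Measure (EuclideanSpace ℝ (Fin d))) := hf.ae_eq hff'
    have hf'U : ∀ x, x ∉ U → f' x = 0 := fun x hx => Set.indicator_of_notMem hx _
    have mp : ∀ x : EuclideanSpace ℝ (Fin d),
        MeasurePreserving (fun y => x + y) (volume : Measure (EuclideanSpace ℝ (Fin d))) volume :=
      fun x => measurePreserving_add_left volume x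
    have hwcc_eq : wcc f f w = wcc f' f' w := by
      funext x
      refine integral_congr_ae ?_
      have h2 : (fun y => f (x + y)) =ᵐ[(volume : Measure (EuclideanSpace ℝ (Fin d)))]
          (fun y => f' (x + y)) :=
        (mp x).quasiMeasurePreserving.ae_eq_comp hff'
      filter_upwards [hff', h2] with y hy hxy
      rw [hy, hxy]
    rw [hwcc_eq] at hwcc0
    have hcont : Continuous (wcc f' f' w) :=
      aux_wcc_continuous U hUo f' hf'm hf' hf'U w hwc C hC hwU
    have hae : wcc f' f' w =ᵐ[(volume : Measure (EuclideanSpace ℝ (Fin d)))] 0 :=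
      (eLpNorm_eq_zero_iff hcont.aestronglyMeasurable two_ne).mp hwcc0
    have heq : wcc f' f' w = 0 :=
      (Continuous.ae_eq_iff_eq volume hcont continuous_const).mp hae
    have h0 : (∫ y, (starRingEnd ℂ) (f' y) * f' y * w y y) = 0 := by
      have := congrFun heq 0
      simpa [wcc, zero_add] using this
    -- measurability of the diagonal weight
    have wm := aux_w_meas U hUo w hwc hwU
    have wdm : Measurable (fun y : EuclideanSpace ℝ (Fin d) => w y y) :=
      wm.comp (measurable_id.prodMk measurable_id)
    have hCnn : 0 ≤ C := le_trans (norm_nonneg _) (hC 0 0)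
    have hnsq : Integrable (fun y => ‖f' y‖^2) (volume : Measure (EuclideanSpace ℝ (Fin d))) := by
      have := hf'.integrable_norm_rpow two_ne (by norm_num)
      have h2 : ((2:ℝ≥0∞)).toReal = ((2:ℕ):ℝ) := by norm_num
      simp only [h2, Real.rpow_natCast] at this
      exact this
    have int1 : Integrable (fun y => (starRingEnd ℂ) (f' y) * f' y * w y y)
        (volume : Measure (EuclideanSpace ℝ (Fin d))) := by
      refine Integrable.mono' (hnsq.const_mul C) ?_ ?_
      · exact (((Complex.continuous_conj.measurable.comp hf'm.measurable).mul
          hf'm.measurable).mul wdm).aestronglyMeasurable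
      · filter_upwards with y
        rw [norm_mul, norm_mul, RCLike.norm_conj]
        have h1 : ‖f' y‖ * ‖f' y‖ * ‖w y y‖ ≤ ‖f' y‖ * ‖f' y‖ * C :=
          mul_le_mul_of_nonneg_left (hC _ _) (by positivity)
        calc ‖f' y‖ * ‖f' y‖ * ‖w y y‖ ≤ ‖f' y‖ * ‖f' y‖ * C := h1
        _ = C * ‖f' y‖^2 := by ring
    have hpt : ∀ y, ((starRingEnd ℂ) (f' y) * f' y * w y y).re = ‖f' y‖^2 * (w y y).re := by
      intro y
      rw [RCLike.conj_mul]
      norm_cast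
      simp [Complex.mul_re, ← Complex.ofReal_pow]
    have hre : (∫ y, ‖f' y‖^2 * (w y y).re) = 0 := by
      have h := integral_re (𝕜 := ℂ) int1
      simp only [RCLike.re_to_complex] at h
      rw [h0] at h
      simp only [Complex.zero_re] at h
      rw [← h]
      exact integral_congr_ae (Filter.EventuallyEq.of_eq (funext fun y => (hpt y).symm))
    have hmono : ∀ᵐ y ∂(volume : Measure (EuclideanSpace ℝ (Fin d))),
        c * ‖f' y‖^2 ≤ ‖f' y‖^2 * (w y y).re := by
      filter_upwards [hdiag] with y hy
      by_cases hyU : y ∈ U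
      · have := (hy hyU).1
        nlinarith [sq_nonneg ‖f' y‖]
      · simp [hf'U y hyU]
    have intR : Integrable (fun y => ‖f' y‖^2 * (w y y).re)
        (volume : Measure (EuclideanSpace ℝ (Fin d))) := by
      have hfn : (fun y => ‖f' y‖^2 * (w y y).re)
          = fun y => ((starRingEnd ℂ) (f' y) * f' y * w y y).re :=
        funext fun y => (hpt y).symm
      rw [hfn]
      have := int1.re
      simpa only [RCLike.re_to_complex] using this
    have hint_le : c * ∫ y, ‖f' y‖^2 ≤ 0 := by
      rw [← integral_const_mul]
      calc (∫ y, c * ‖f' y‖^2) ≤ ∫ y, ‖f' y‖^2 * (w y y).re :=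
        integral_mono_ae (hnsq.const_mul c) intR hmono
      _ = 0 := hre
    have hInn : 0 ≤ ∫ y, ‖f' y‖^2 := integral_nonneg (fun y => sq_nonneg _)
    have hI0 : (∫ y, ‖f' y‖^2) = 0 := le_antisymm (by nlinarith) hInn
    have hsq0 : (fun y => ‖f' y‖^2) =ᵐ[(volume : Measure (EuclideanSpace ℝ (Fin d)))] 0 :=
      (integral_eq_zero_iff_of_nonneg (fun y => sq_nonneg _) hnsq).mp hI0
    have hf'0 : f' =ᵐ[(volume : Measure (EuclideanSpace ℝ (Fin d)))] 0 := by
      filter_upwards [hsq0] with y hy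
      simp only [Pi.zero_apply] at hy ⊢
      have : ‖f' y‖ = 0 := by nlinarith [norm_nonneg (f' y)]
      exact norm_eq_zero.mp this
    rw [eLpNorm_congr_ae (hff'.trans hf'0), eLpNorm_zero]
  · intro hf0
    have hfe : f =ᵐ[(volume : Measure (EuclideanSpace ℝ (Fin d)))] 0 :=
      (eLpNorm_eq_zero_iff hf.1 two_ne).mp hf0
    have hz : wcc f f w = fun _ => 0 := by
      funext x
      rw [show wcc f f w x = ∫ y, (starRingEnd ℂ) (f y) * f (x + y) * w (x + y) y from rfl]
      rw [integral_eq_zero_of_ae ?_]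
      filter_upwards [hfe] with y hy
      simp only [Pi.zero_apply] at hy
      rw [hy]
      simp
    rw [hz, eLpNorm_zero']
end

section
/- Let U ⊆ R^d be bounded, f ∈ L^2(R^d, C) with support in U, and let w be a weight on U × U that is a uniform limit of finite sums w_N(x,y) = Σ_{j=1}^N v_{j,N}(x) v_{j,N}*(y) with v_{j,N} measurable and bounded, and satisfying w*(x,y) = w(y,x). Then the inverse Fourier transform of f ⋆_w f is real-valued and nonnegative almost everywhere. -/
open MeasureTheory Complex
open scoped FourierTransform RealInnerProductSpace

/-- The class `W⁺(U)`: bounded measurable weights supported in `U × U` that are uniform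
limits of finite sums of factorized terms `v_j(x) v_j*(y)` with `v_j` bounded measurable. -/
def IsWPlus {d : ℕ} (U : Set (EuclideanSpace ℝ (Fin d)))
    (w : EuclideanSpace ℝ (Fin d) → EuclideanSpace ℝ (Fin d) → ℂ) : Prop :=
  Measurable (fun q : EuclideanSpace ℝ (Fin d) × EuclideanSpace ℝ (Fin d) => w q.1 q.2) ∧
  (∃ C : ℝ, ∀ x y, ‖w x y‖ ≤ C) ∧
  (∀ x y, x ∉ U ∨ y ∉ U → w x y = 0) ∧
  ∀ ε : ℝ, 0 < ε → ∃ (N : ℕ) (v : Fin N → EuclideanSpace ℝ (Fin d) → ℂ),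
    (∀ j, Measurable (v j) ∧ (∃ C : ℝ, ∀ x, ‖v j x‖ ≤ C) ∧ (∀ x, x ∉ U → v j x = 0)) ∧
    ∀ x y, ‖w x y - ∑ j, v j x * (starRingEnd ℂ) (v j y)‖ ≤ ε

section Aux

open Real
open scoped RealInnerProductSpace

variable {d : ℕ}

private lemma sqInt (g : EuclideanSpace ℝ (Fin d) → ℂ) (hg : MemLp g 2 volume) :
    Integrable (fun x => ‖g x‖^(2:ℕ)) := by
  have := hg.integrable_norm_rpow (by norm_num) (by norm_num)
  simpa [ENNReal.toReal_ofNat, Real.rpow_natCast] using this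

private lemma prodnorm (g₁ g₂ : EuclideanSpace ℝ (Fin d) → ℂ)
    (h₁m : Measurable g₁) (h₂m : Measurable g₂)
    (h₁ : MemLp g₁ 2 volume) (h₂ : MemLp g₂ 2 volume) (x : EuclideanSpace ℝ (Fin d)) :
    Integrable (fun y => ‖g₁ y‖ * ‖g₂ (x + y)‖) volume ∧
    ∫ y, ‖g₁ y‖ * ‖g₂ (x + y)‖ ≤ ((∫ y, ‖g₁ y‖^(2:ℕ)) + ∫ y, ‖g₂ y‖^(2:ℕ))/2 := by
  have hi₁ : Integrable (fun y => ‖g₁ y‖^(2:ℕ)) := sqInt g₁ h₁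
  have hi₂ : Integrable (fun y => ‖g₂ (x + y)‖^(2:ℕ)) := (sqInt g₂ h₂).comp_add_left x
  have hdom : Integrable (fun y => (‖g₁ y‖^(2:ℕ) + ‖g₂ (x + y)‖^(2:ℕ))/2) :=
    (hi₁.add hi₂).div_const 2
  have hle : ∀ y, ‖g₁ y‖ * ‖g₂ (x + y)‖ ≤ (‖g₁ y‖^(2:ℕ) + ‖g₂ (x + y)‖^(2:ℕ))/2 := by
    intro y
    nlinarith [sq_nonneg (‖g₁ y‖ - ‖g₂ (x + y)‖), norm_nonneg (g₁ y), norm_nonneg (g₂ (x+y))]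
  have hmeas : AEStronglyMeasurable (fun y => ‖g₁ y‖ * ‖g₂ (x + y)‖) volume := by
    refine ((h₁m.norm.mul ((h₂m.comp (measurable_const_add x)).norm))).aestronglyMeasurable
  have hint : Integrable (fun y => ‖g₁ y‖ * ‖g₂ (x + y)‖) volume := by
    refine hdom.mono' hmeas (Filter.Eventually.of_forall fun y => ?_)
    rw [Real.norm_eq_abs, _root_.abs_of_nonneg (by positivity)]
    exact hle y
  refine ⟨hint, ?_⟩
  calc ∫ y, ‖g₁ y‖ * ‖g₂ (x + y)‖ ≤ ∫ y, (‖g₁ y‖^(2:ℕ) + ‖g₂ (x + y)‖^(2:ℕ))/2 :=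
        integral_mono hint hdom hle
    _ = ((∫ y, ‖g₁ y‖^(2:ℕ)) + ∫ y, ‖g₂ (x + y)‖^(2:ℕ))/2 := by
        rw [integral_div, integral_add hi₁ hi₂]
    _ = ((∫ y, ‖g₁ y‖^(2:ℕ)) + ∫ y, ‖g₂ y‖^(2:ℕ))/2 := by
        rw [integral_add_left_eq_self (f := fun y => ‖g₂ y‖^(2:ℕ)) x]

private lemma mulL2Int (g₁ g₂ : EuclideanSpace ℝ (Fin d) → ℂ)
    (h₁m : Measurable g₁) (h₂m : Measurable g₂)
    (h₁ : MemLp g₁ 2 volume) (h₂ : MemLp g₂ 2 volume) (x : EuclideanSpace ℝ (Fin d)) :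
    Integrable (fun y => (starRingEnd ℂ) (g₁ y) * g₂ (x + y)) volume := by
  refine (prodnorm g₁ g₂ h₁m h₂m h₁ h₂ x).1.mono' ?_ (Filter.Eventually.of_forall fun y => ?_)
  · exact ((Complex.continuous_conj.measurable.comp h₁m).mul
      (h₂m.comp (measurable_const_add x))).aestronglyMeasurable
  · rw [norm_mul, RingHomIsometric.norm_map]

private lemma conjInt {g : EuclideanSpace ℝ (Fin d) → ℂ} (hgm : Measurable g)
    (hg1 : Integrable g volume) : Integrable (fun y => (starRingEnd ℂ) (g y)) volume := by
  refine hg1.norm.mono' ((Complex.continuous_conj.measurable.comp hgm).aestronglyMeasurable) ?_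
  exact Filter.Eventually.of_forall fun y => by simp

private lemma keyFourier (g : EuclideanSpace ℝ (Fin d) → ℂ) (hgm : Measurable g)
    (hg1 : Integrable g volume) (ξ : EuclideanSpace ℝ (Fin d)) :
    𝓕⁻ (fun x => ∫ y, (starRingEnd ℂ) (g y) * g (x + y)) ξ
      = (starRingEnd ℂ) (𝓕⁻ g ξ) * 𝓕⁻ g ξ := by
  set e : EuclideanSpace ℝ (Fin d) → ℂ :=
    fun v => Complex.exp (↑(2 * π * ⟪v, ξ⟫) * Complex.I) with he
  have hnorm : ∀ v, ‖e v‖ = 1 := fun v => Complex.norm_exp_ofReal_mul_I _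
  have hemeas : Measurable e := by
    apply Complex.measurable_exp.comp
    have h1 : Continuous fun v : EuclideanSpace ℝ (Fin d) => (2 * π * ⟪v, ξ⟫ : ℝ) :=
      continuous_const.mul (continuous_id.inner continuous_const)
    exact ((Complex.continuous_ofReal.comp h1).mul continuous_const).measurable
  have hgfact : 𝓕⁻ g ξ = ∫ u, e u * g u := by
    rw [Real.fourierInv_eq']; simp only [smul_eq_mul]; rfl
  have base0 : Integrable (fun z : (EuclideanSpace ℝ (Fin d)) × (EuclideanSpace ℝ (Fin d)) =>
      (starRingEnd ℂ) (g z.2) * g z.1) (volume.prod volume) := by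
    have := hg1.mul_prod (conjInt hgm hg1)
    simpa [mul_comm] using this
  have base : Integrable (fun z : (EuclideanSpace ℝ (Fin d)) × (EuclideanSpace ℝ (Fin d)) =>
      (starRingEnd ℂ) (g z.2) * g (z.1 + z.2)) (volume.prod volume) := by
    have hT := measurePreserving_add_prod (volume : Measure (EuclideanSpace ℝ (Fin d))) volume
    have := (hT.integrable_comp base0.1).2 base0
    simpa [Function.comp_def] using this
  have hI : Integrable (Function.uncurry fun x y =>
      e x * ((starRingEnd ℂ) (g y) * g (x + y))) (volume.prod volume) := by
    refine base.norm.mono' ?_ (Filter.Eventually.of_forall fun z => ?_)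
    · exact ((hemeas.comp measurable_fst).mul
        ((Complex.continuous_conj.measurable.comp (hgm.comp measurable_snd)).mul
          (hgm.comp (measurable_fst.add measurable_snd)))).aestronglyMeasurable
    · simp only [Function.uncurry]
      rw [norm_mul, hnorm, one_mul]
  have hstart : 𝓕⁻ (fun x => ∫ y, (starRingEnd ℂ) (g y) * g (x + y)) ξ
      = ∫ x, e x * ∫ y, (starRingEnd ℂ) (g y) * g (x + y) := by
    rw [Real.fourierInv_eq']; simp only [smul_eq_mul]; rfl
  rw [hstart]
  calc (∫ x, e x * ∫ y, (starRingEnd ℂ) (g y) * g (x + y))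
      = ∫ x, ∫ y, e x * ((starRingEnd ℂ) (g y) * g (x + y)) := by
        congr 1; ext x; rw [← integral_const_mul]
    _ = ∫ y, ∫ x, e x * ((starRingEnd ℂ) (g y) * g (x + y)) := integral_integral_swap hI
    _ = ∫ y, (starRingEnd ℂ) (e y * g y) * ∫ u, e u * g u := by
        congr 1; ext y
        have hsplit : ∀ x, e x * ((starRingEnd ℂ) (g y) * g (x + y))
            = ((starRingEnd ℂ) (e y * g y)) * (e (x + y) * g (x + y)) := by
          intro x
          have key : (starRingEnd ℂ) (e y) * e (x + y) = e x := by
            rw [he]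
            simp only [← Complex.exp_conj, map_mul, Complex.conj_ofReal, Complex.conj_I,
              mul_neg, ← Complex.exp_add]
            congr 1
            rw [inner_add_left]
            push_cast
            ring
          calc e x * ((starRingEnd ℂ) (g y) * g (x + y))
              = ((starRingEnd ℂ) (e y) * e (x+y)) * ((starRingEnd ℂ) (g y) * g (x + y)) := by
                rw [key]
            _ = ((starRingEnd ℂ) (e y * g y)) * (e (x + y) * g (x + y)) := by
                rw [map_mul]; ring
        simp_rw [hsplit]
        rw [integral_const_mul, integral_add_right_eq_self (fun u => e u * g u) y]
    _ = (starRingEnd ℂ) (𝓕⁻ g ξ) * 𝓕⁻ g ξ := by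
        rw [integral_mul_const, integral_conj, ← hgfact]

private lemma auxIntegrable (F : EuclideanSpace ℝ (Fin d) → ℂ)
    (hFm : AEStronglyMeasurable F volume) (r C : ℝ)
    (hbd : ∀ x, ‖F x‖ ≤ C)
    (hsupp : ∀ x, x ∉ Metric.closedBall (0:EuclideanSpace ℝ (Fin d)) r → F x = 0) :
    Integrable F volume := by
  have heq : F = (Metric.closedBall (0:EuclideanSpace ℝ (Fin d)) r).indicator F := by
    funext x
    by_cases h : x ∈ Metric.closedBall (0:EuclideanSpace ℝ (Fin d)) r
    · simp [Set.indicator_of_mem h]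
    · simp [Set.indicator_of_notMem h, hsupp x h]
  rw [heq, integrable_indicator_iff measurableSet_closedBall]
  exact Measure.integrableOn_of_bounded measure_closedBall_lt_top.ne hFm (ae_of_all _ hbd)

private lemma charMulInt (F : EuclideanSpace ℝ (Fin d) → ℂ) (hF : Integrable F volume)
    (ξ : EuclideanSpace ℝ (Fin d)) :
    Integrable (fun x => Complex.exp (↑(2 * π * ⟪x, ξ⟫) * Complex.I) * F x) volume := by
  have hemeas : Measurable fun v : EuclideanSpace ℝ (Fin d) =>
      Complex.exp (↑(2 * π * ⟪v, ξ⟫) * Complex.I) := by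
    apply Complex.measurable_exp.comp
    have h1 : Continuous fun v : EuclideanSpace ℝ (Fin d) => (2 * π * ⟪v, ξ⟫ : ℝ) :=
      continuous_const.mul (continuous_id.inner continuous_const)
    exact ((Complex.continuous_ofReal.comp h1).mul continuous_const).measurable
  refine hF.bdd_mul hemeas.aestronglyMeasurable (c := 1) (ae_of_all _ fun x => ?_)
  exact le_of_eq (Complex.norm_exp_ofReal_mul_I _)

end Aux

theorem stmt7 {d : ℕ} (U : Set (EuclideanSpace ℝ (Fin d))) (hUb : Bornology.IsBounded U)
    (f : EuclideanSpace ℝ (Fin d) → ℂ)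
    (hf : MemLp f 2 (volume : Measure (EuclideanSpace ℝ (Fin d))))
    (hfU : ∀ x, x ∉ U → f x = 0)
    (w : EuclideanSpace ℝ (Fin d) → EuclideanSpace ℝ (Fin d) → ℂ)
    (hw : IsWPlus U w)
    (hsym : ∀ x y, (starRingEnd ℂ) (w x y) = w y x) :
    ∀ᵐ x ∂(volume : Measure (EuclideanSpace ℝ (Fin d))),
      (𝓕⁻ (wcc f f w) x).im = 0 ∧ 0 ≤ (𝓕⁻ (wcc f f w) x).re := by
  classical
  obtain ⟨hwm, ⟨Cw, hCw⟩, hwU, happ⟩ := hw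
  obtain ⟨R₀, hR₀⟩ := hUb.subset_closedBall 0
  set R := max R₀ 0 with hRdef
  have hRnn : (0:ℝ) ≤ R := le_max_right _ _
  have hUR : U ⊆ Metric.closedBall 0 R :=
    hR₀.trans (Metric.closedBall_subset_closedBall (le_max_left _ _))
  set g := hf.1.mk f with hgdef
  have hgsm : StronglyMeasurable g := hf.1.stronglyMeasurable_mk
  have hgm : Measurable g := hgsm.measurable
  have hfg : f =ᵐ[(volume : Measure (EuclideanSpace ℝ (Fin d)))] g := hf.1.ae_eq_mk
  have hg2 : MemLp g 2 volume := hf.ae_eq hfg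
  have hg0 : ∀ᵐ x ∂(volume : Measure (EuclideanSpace ℝ (Fin d))),
      x ∉ Metric.closedBall (0:EuclideanSpace ℝ (Fin d)) R → g x = 0 := by
    filter_upwards [hfg] with x hx hnx
    rw [← hx]; exact hfU x (fun hU => hnx (hUR hU))
  have hg1 : Integrable g volume := by
    have hind : g =ᵐ[(volume : Measure (EuclideanSpace ℝ (Fin d)))]
        (Metric.closedBall (0:EuclideanSpace ℝ (Fin d)) R).indicator g := by
      filter_upwards [hg0] with x hx
      by_cases h : x ∈ Metric.closedBall (0:EuclideanSpace ℝ (Fin d)) R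
      · simp [Set.indicator_of_mem h]
      · simp [Set.indicator_of_notMem h, hx h]
    have hio : IntegrableOn g (Metric.closedBall (0:EuclideanSpace ℝ (Fin d)) R) volume := by
      haveI : IsFiniteMeasure
          ((volume : Measure (EuclideanSpace ℝ (Fin d))).restrict
            (Metric.closedBall (0:EuclideanSpace ℝ (Fin d)) R)) :=
        ⟨by rw [Measure.restrict_apply_univ]; exact measure_closedBall_lt_top⟩
      exact (hg2.restrict _).integrable one_le_two
    exact (((integrable_indicator_iff measurableSet_closedBall).2 hio)).congr hind.symm
  have hwcc_eq : wcc f f w = wcc g g w := by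
    funext x
    refine integral_congr_ae ?_
    have h2 : (fun y => f (x + y)) =ᵐ[(volume : Measure (EuclideanSpace ℝ (Fin d)))]
        fun y => g (x + y) := by
      have := (measurePreserving_add_left (volume : Measure (EuclideanSpace ℝ (Fin d)))
        x).quasiMeasurePreserving.ae_eq_comp hfg
      simpa [Function.comp_def] using this
    filter_upwards [hfg, h2] with y h1 h2'
    rw [h1, h2']
  rw [hwcc_eq]
  -- constants
  set B := ∫ y, ‖g y‖^(2:ℕ) with hBdef
  have hBnn : 0 ≤ B := integral_nonneg fun y => by positivity
  have hCw0 : 0 ≤ Cw := le_trans (norm_nonneg _) (hCw 0 0)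
  have hprodI : ∀ x, Integrable (fun y => ‖g y‖ * ‖g (x + y)‖) volume :=
    fun x => (prodnorm g g hgm hgm hg2 hg2 x).1
  have hprodB : ∀ x, ∫ y, ‖g y‖ * ‖g (x + y)‖ ≤ B := by
    intro x
    have h := (prodnorm g g hgm hgm hg2 hg2 x).2
    rw [hBdef]; linarith
  have hball : ∀ x : EuclideanSpace ℝ (Fin d),
      x ∉ Metric.closedBall (0:EuclideanSpace ℝ (Fin d)) (2*R) →
      ∀ y, x + y ∈ U → y ∈ U → False := by
    intro x hx y h1 h2
    apply hx
    rw [Metric.mem_closedBall, dist_zero_right]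
    have e1 : ‖x + y‖ ≤ R := by
      have := hUR h1; rwa [Metric.mem_closedBall, dist_zero_right] at this
    have e2 : ‖y‖ ≤ R := by
      have := hUR h2; rwa [Metric.mem_closedBall, dist_zero_right] at this
    calc ‖x‖ = ‖(x + y) - y‖ := by congr 1; abel
      _ ≤ ‖x + y‖ + ‖y‖ := norm_sub_le _ _
      _ ≤ 2*R := by linarith
  -- wcc g g w facts
  have hptw : ∀ x y, ‖(starRingEnd ℂ) (g y) * g (x + y) * w (x + y) y‖
      ≤ Cw * (‖g y‖ * ‖g (x + y)‖) := by
    intro x y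
    rw [norm_mul, norm_mul, RingHomIsometric.norm_map]
    calc ‖g y‖ * ‖g (x + y)‖ * ‖w (x + y) y‖
        ≤ ‖g y‖ * ‖g (x + y)‖ * Cw :=
          mul_le_mul_of_nonneg_left (hCw (x+y) y) (by positivity)
      _ = Cw * (‖g y‖ * ‖g (x + y)‖) := by ring
  have hwint : ∀ x, Integrable (fun y => (starRingEnd ℂ) (g y) * g (x + y) * w (x + y) y)
      volume := by
    intro x
    refine ((hprodI x).const_mul Cw).mono' ?_ (Filter.Eventually.of_forall fun y => ?_)
    · exact (((Complex.continuous_conj.measurable.comp hgm).mul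
        (hgm.comp (measurable_const_add x))).mul
        (hwm.comp ((measurable_const_add x).prodMk measurable_id))).aestronglyMeasurable
    · exact hptw x y
  have hwccb : ∀ x, ‖wcc g g w x‖ ≤ Cw * B := by
    intro x
    have h1 : ‖wcc g g w x‖ ≤ ∫ y, Cw * (‖g y‖ * ‖g (x + y)‖) :=
      norm_integral_le_of_norm_le ((hprodI x).const_mul Cw) (ae_of_all _ (hptw x))
    rw [integral_const_mul] at h1
    exact h1.trans (mul_le_mul_of_nonneg_left (hprodB x) hCw0)
  have hwccsupp : ∀ x, x ∉ Metric.closedBall (0:EuclideanSpace ℝ (Fin d)) (2*R) →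
      wcc g g w x = 0 := by
    intro x hx
    have hzero : ∀ y, w (x + y) y = 0 := by
      intro y
      by_cases h1 : x + y ∈ U
      · by_cases h2 : y ∈ U
        · exact absurd (hball x hx y h1 h2) not_false
        · exact hwU _ _ (Or.inr h2)
      · exact hwU _ _ (Or.inl h1)
    simp only [wcc, hzero, mul_zero, integral_zero]
  have hwccmeas : AEStronglyMeasurable (wcc g g w) volume := by
    have hunc : StronglyMeasurable (Function.uncurry fun x y : EuclideanSpace ℝ (Fin d) =>
        (starRingEnd ℂ) (g y) * g (x + y) * w (x + y) y) :=
      (((Complex.continuous_conj.measurable.comp (hgm.comp measurable_snd)).mul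
        (hgm.comp (measurable_fst.add measurable_snd))).mul
        (hwm.comp ((measurable_fst.add measurable_snd).prodMk
          measurable_snd))).stronglyMeasurable
    exact hunc.integral_prod_right.aestronglyMeasurable
  have hwccInt : Integrable (wcc g g w) volume :=
    auxIntegrable _ hwccmeas (2*R) (Cw*B) hwccb hwccsupp
  set K := B * ((volume (Metric.closedBall (0:EuclideanSpace ℝ (Fin d)) (2*R))).toReal)
    with hKdef
  have hKnn : 0 ≤ K := mul_nonneg hBnn ENNReal.toReal_nonneg
  -- main approximation step
  have key : ∀ ξ : EuclideanSpace ℝ (Fin d), ∀ ε : ℝ, 0 < ε →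
      ∃ a : ℝ, 0 ≤ a ∧ ‖𝓕⁻ (wcc g g w) ξ - ↑a‖ ≤ ε * K := by
    intro ξ ε hε
    obtain ⟨N, v, hv, hvw⟩ := happ ε hε
    set gj : Fin N → EuclideanSpace ℝ (Fin d) → ℂ := fun j t => g t * v j t with hgjdef
    have hgjm : ∀ j, Measurable (gj j) := fun j => hgm.mul (hv j).1
    have hgj2 : ∀ j, MemLp (gj j) 2 volume := by
      intro j
      obtain ⟨Cj, hCj⟩ := (hv j).2.1
      refine hg2.of_le_mul (c := Cj) (hgjm j).aestronglyMeasurable (ae_of_all _ fun t => ?_)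
      calc ‖gj j t‖ = ‖g t‖ * ‖v j t‖ := norm_mul _ _
        _ ≤ ‖g t‖ * Cj := mul_le_mul_of_nonneg_left (hCj t) (norm_nonneg _)
        _ = Cj * ‖g t‖ := mul_comm _ _
    have hgj1 : ∀ j, Integrable (gj j) volume := by
      intro j
      have h := hg1.bdd_mul (hv j).1.aestronglyMeasurable (c := (hv j).2.1.choose) (ae_of_all _ (hv j).2.1.choose_spec)
      exact h.congr (ae_of_all _ fun t => mul_comm _ _)
    set Fj : Fin N → EuclideanSpace ℝ (Fin d) → ℂ :=
      fun j x => ∫ y, (starRingEnd ℂ) (gj j y) * gj j (x + y) with hFjdef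
    have hFjint_y : ∀ j x, Integrable (fun y => (starRingEnd ℂ) (gj j y) * gj j (x + y))
        volume := fun j x => mulL2Int _ _ (hgjm j) (hgjm j) (hgj2 j) (hgj2 j) x
    have hFjmeas : ∀ j, AEStronglyMeasurable (Fj j) volume := by
      intro j
      have hunc : StronglyMeasurable (Function.uncurry fun x y : EuclideanSpace ℝ (Fin d) =>
          (starRingEnd ℂ) (gj j y) * gj j (x + y)) :=
        ((Complex.continuous_conj.measurable.comp ((hgjm j).comp measurable_snd)).mul
          ((hgjm j).comp (measurable_fst.add measurable_snd))).stronglyMeasurable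
      exact hunc.integral_prod_right.aestronglyMeasurable
    have hFjb : ∀ j x, ‖Fj j x‖ ≤ ∫ y, ‖gj j y‖^(2:ℕ) := by
      intro j x
      have h1 : ‖Fj j x‖ ≤ ∫ y, ‖gj j y‖ * ‖gj j (x+y)‖ :=
        norm_integral_le_of_norm_le (prodnorm _ _ (hgjm j) (hgjm j) (hgj2 j) (hgj2 j) x).1
          (ae_of_all _ fun y => le_of_eq (by rw [norm_mul, RingHomIsometric.norm_map]))
      have h2 := (prodnorm _ _ (hgjm j) (hgjm j) (hgj2 j) (hgj2 j) x).2
      refine h1.trans (h2.trans (le_of_eq ?_))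
      ring
    have hFjsupp : ∀ j x, x ∉ Metric.closedBall (0:EuclideanSpace ℝ (Fin d)) (2*R) →
        Fj j x = 0 := by
      intro j x hx
      have hzero : ∀ y, (starRingEnd ℂ) (gj j y) * gj j (x + y) = 0 := by
        intro y
        by_cases h1 : x + y ∈ U
        · by_cases h2 : y ∈ U
          · exact absurd (hball x hx y h1 h2) not_false
          · have hv0 : v j y = 0 := (hv j).2.2 y h2
            simp [hgjdef, hv0]
        · have hv0 : v j (x + y) = 0 := (hv j).2.2 _ h1
          simp [hgjdef, hv0]
      simp only [hFjdef, hzero, integral_zero]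
    have hFjInt : ∀ j, Integrable (Fj j) volume := fun j =>
      auxIntegrable _ (hFjmeas j) (2*R) _ (hFjb j) (hFjsupp j)
    have hptsum : ∀ x y, (starRingEnd ℂ) (g y) * g (x + y) *
        (∑ j, v j (x+y) * (starRingEnd ℂ) (v j y))
        = ∑ j, (starRingEnd ℂ) (gj j y) * gj j (x + y) := by
      intro x y
      rw [Finset.mul_sum]
      refine Finset.sum_congr rfl fun j _ => ?_
      simp only [hgjdef, map_mul]
      ring
    have hsum_int : Integrable (fun x => ∑ j, Fj j x) volume :=
      integrable_finset_sum _ fun j _ => hFjInt j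
    have hFsum : 𝓕⁻ (fun x => ∑ j, Fj j x) ξ
        = ∑ j, (starRingEnd ℂ) (𝓕⁻ (gj j) ξ) * 𝓕⁻ (gj j) ξ := by
      have h1 : 𝓕⁻ (fun x => ∑ j, Fj j x) ξ = ∑ j, 𝓕⁻ (Fj j) ξ := by
        rw [Real.fourierInv_eq']
        simp only [smul_eq_mul, Finset.mul_sum]
        rw [integral_finset_sum _ fun j _ => charMulInt _ (hFjInt j) ξ]
        refine Finset.sum_congr rfl fun j _ => ?_
        rw [Real.fourierInv_eq']
        simp only [smul_eq_mul]
      rw [h1]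
      exact Finset.sum_congr rfl fun j _ => keyFourier (gj j) (hgjm j) (hgj1 j) ξ
    refine ⟨∑ j, ‖𝓕⁻ (gj j) ξ‖^(2:ℕ), Finset.sum_nonneg fun j _ => by positivity, ?_⟩
    have hac : ((∑ j, ‖𝓕⁻ (gj j) ξ‖^(2:ℕ) : ℝ) : ℂ) = 𝓕⁻ (fun x => ∑ j, Fj j x) ξ := by
      rw [hFsum]
      push_cast
      refine Finset.sum_congr rfl fun j _ => ?_
      rw [Complex.conj_mul']
    rw [hac]
    -- pointwise difference bound
    have hdiff : ∀ x, ‖wcc g g w x - ∑ j, Fj j x‖ ≤ ε * B := by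
      intro x
      have hsum_eq : (∑ j, Fj j x) = ∫ y, (starRingEnd ℂ) (g y) * g (x + y) *
          (∑ j, v j (x+y) * (starRingEnd ℂ) (v j y)) := by
        rw [← integral_finset_sum _ fun j _ => hFjint_y j x]
        refine integral_congr_ae (ae_of_all _ fun y => ?_)
        exact (hptsum x y).symm
      have hsint : Integrable (fun y => (starRingEnd ℂ) (g y) * g (x + y) *
          (∑ j, v j (x+y) * (starRingEnd ℂ) (v j y))) volume := by
        have h := integrable_finset_sum (μ := (volume : Measure (EuclideanSpace ℝ (Fin d))))
          Finset.univ (fun j (_ : j ∈ Finset.univ) => hFjint_y j x)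
        refine h.congr (ae_of_all _ fun y => ?_)
        exact (hptsum x y).symm
      have hrepr : wcc g g w x - (∑ j, Fj j x) = ∫ y,
          ((starRingEnd ℂ) (g y) * g (x + y) * w (x + y) y
            - (starRingEnd ℂ) (g y) * g (x + y) * (∑ j, v j (x+y) * (starRingEnd ℂ) (v j y))) := by
        rw [hsum_eq]
        simp only [wcc]
        exact (integral_sub (hwint x) hsint).symm
      rw [hrepr]
      have hbd : ∀ y, ‖(starRingEnd ℂ) (g y) * g (x + y) * w (x + y) y
          - (starRingEnd ℂ) (g y) * g (x + y) * (∑ j, v j (x+y) * (starRingEnd ℂ) (v j y))‖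
          ≤ ε * (‖g y‖ * ‖g (x + y)‖) := by
        intro y
        rw [← mul_sub, norm_mul, norm_mul, RingHomIsometric.norm_map]
        calc ‖g y‖ * ‖g (x + y)‖ * ‖w (x + y) y - ∑ j, v j (x+y) * (starRingEnd ℂ) (v j y)‖
            ≤ ‖g y‖ * ‖g (x + y)‖ * ε :=
              mul_le_mul_of_nonneg_left (hvw (x+y) y) (by positivity)
          _ = ε * (‖g y‖ * ‖g (x + y)‖) := by ring
      have h2 := norm_integral_le_of_norm_le ((hprodI x).const_mul ε) (ae_of_all _ hbd)
      rw [integral_const_mul] at h2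
      exact h2.trans (mul_le_mul_of_nonneg_left (hprodB x) hε.le)
    -- Fourier side bound
    rw [Real.fourierInv_eq', Real.fourierInv_eq']
    simp only [smul_eq_mul]
    rw [← integral_sub (charMulInt _ hwccInt ξ) (charMulInt _ hsum_int ξ)]
    have hgint : Integrable ((Metric.closedBall (0:EuclideanSpace ℝ (Fin d)) (2*R)).indicator
        fun _ => ε * B) volume := by
      rw [integrable_indicator_iff measurableSet_closedBall]
      exact integrableOn_const measure_closedBall_lt_top.ne
    have hb : ∀ x, ‖Complex.exp (↑(2 * Real.pi * (inner ℝ x ξ : ℝ)) * Complex.I) * wcc g g w x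
        - Complex.exp (↑(2 * Real.pi * (inner ℝ x ξ : ℝ)) * Complex.I) * ∑ j, Fj j x‖
        ≤ (Metric.closedBall (0:EuclideanSpace ℝ (Fin d)) (2*R)).indicator
            (fun _ => ε * B) x := by
      intro x
      rw [← mul_sub, norm_mul, Complex.norm_exp_ofReal_mul_I, one_mul]
      by_cases hx : x ∈ Metric.closedBall (0:EuclideanSpace ℝ (Fin d)) (2*R)
      · rw [Set.indicator_of_mem hx]; exact hdiff x
      · rw [Set.indicator_of_notMem hx, hwccsupp x hx]
        have hs0 : (∑ j, Fj j x) = 0 := Finset.sum_eq_zero fun j _ => hFjsupp j x hx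
        rw [hs0, sub_zero, norm_zero]
    refine (norm_integral_le_of_norm_le hgint (ae_of_all _ hb)).trans ?_
    rw [integral_indicator_const _ measurableSet_closedBall, smul_eq_mul, hKdef]
    exact le_of_eq (by rw [Measure.real_def]; ring)
  -- conclusion
  have final : ∀ ξ, (𝓕⁻ (wcc g g w) ξ).im = 0 ∧ 0 ≤ (𝓕⁻ (wcc g g w) ξ).re := by
    intro ξ
    set z := 𝓕⁻ (wcc g g w) ξ with hz
    have hsmall : ∀ δ : ℝ, 0 < δ → |z.im| ≤ δ ∧ -δ ≤ z.re := by
      intro δ hδ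
      have hδ' : 0 < δ / (K + 1) := by positivity
      obtain ⟨a, hann, hbound⟩ := key ξ _ hδ'
      have hKK : (δ / (K + 1)) * K ≤ δ := by
        rw [div_mul_eq_mul_div, div_le_iff₀ (by linarith)]
        nlinarith
      have h1 : ‖z - ↑a‖ ≤ δ := hbound.trans hKK
      constructor
      · have him : |z.im| = |(z - ↑a).im| := by simp [Complex.sub_im]
        rw [him]
        exact le_trans (by exact Complex.abs_im_le_norm _) h1
      · have h2 : |(z - ↑a).re| ≤ δ :=
          le_trans (by exact Complex.abs_re_le_norm _) h1
        have h3 := (abs_le.1 h2).1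
        simp only [Complex.sub_re, Complex.ofReal_re] at h3
        linarith
    constructor
    · have h1 : |z.im| ≤ 0 :=
        le_of_forall_pos_le_add fun δ hδ => by
          have := (hsmall δ hδ).1; linarith
      exact abs_eq_zero.1 (le_antisymm h1 (abs_nonneg _))
    · exact le_of_forall_pos_le_add fun δ hδ => by
        have := (hsmall δ hδ).2; linarith
  exact Filter.Eventually.of_forall final
end

section
/- Let U ⊆ R^d be bounded and w ∈ W^+(U) with w*(x,y) = w(y,x). Then the functional F: L^2(R^d, C) → R, f ↦ ‖f ⋆_w f‖²_{L^2}, is Fréchet differentiable, with derivative F'[f](g) = 2 Re⟨f ⋆_w f, f ⋆_w g + g ⋆_w f⟩_{L^2}; in particular F is continuous. -/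
open MeasureTheory Complex

namespace Stmt9Aux

open Metric

variable {d : ℕ}

/-- Convenient hypotheses on the weight. -/
structure Nice {d : ℕ} (w : EuclideanSpace ℝ (Fin d) → EuclideanSpace ℝ (Fin d) → ℂ)
    (C R : ℝ) : Prop where
  meas : Measurable fun q : EuclideanSpace ℝ (Fin d) × EuclideanSpace ℝ (Fin d) => w q.1 q.2
  hC0 : 0 ≤ C
  hC : ∀ x y, ‖w x y‖ ≤ C
  hR : ∀ x y, R < ‖x‖ ∨ R < ‖y‖ → w x y = 0

variable {w : EuclideanSpace ℝ (Fin d) → EuclideanSpace ℝ (Fin d) → ℂ} {C R : ℝ}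

lemma translate_memLp {g : EuclideanSpace ℝ (Fin d) → ℂ} (hg : MemLp g 2 volume)
    (x : EuclideanSpace ℝ (Fin d)) :
    MemLp (fun y : EuclideanSpace ℝ (Fin d) => g (x + y)) 2 volume :=
  hg.comp_measurePreserving (measurePreserving_add_left volume x)

lemma translate_eLpNorm {g : EuclideanSpace ℝ (Fin d) → ℂ}
    (hg : AEStronglyMeasurable g volume) (x : EuclideanSpace ℝ (Fin d)) :
    eLpNorm (fun y : EuclideanSpace ℝ (Fin d) => g (x + y)) 2 volume = eLpNorm g 2 volume :=
  eLpNorm_comp_measurePreserving hg (measurePreserving_add_left volume x)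

/-- Cauchy–Schwarz for integrals of real functions. -/
lemma integral_mul_le_CS {f g : EuclideanSpace ℝ (Fin d) → ℝ}
    (hf : MemLp f 2 volume) (hg : MemLp g 2 volume) :
    ∫ y, f y * g y ≤ (eLpNorm f 2 volume).toReal * (eLpNorm g 2 volume).toReal := by
  have h1 : (∫ y, f y * g y) = @inner ℝ _ _ (hf.toLp f) (hg.toLp g) := by
    rw [L2.inner_def]
    refine integral_congr_ae ?_
    filter_upwards [hf.coeFn_toLp, hg.coeFn_toLp] with y h1 h2
    simp [h1, h2, RCLike.inner_apply, mul_comm]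
  rw [h1]
  calc @inner ℝ _ _ (hf.toLp f) (hg.toLp g) ≤ ‖hf.toLp f‖ * ‖hg.toLp g‖ := real_inner_le_norm _ _
  _ = (eLpNorm f 2 volume).toReal * (eLpNorm g 2 volume).toReal := by
      rw [Lp.norm_toLp, Lp.norm_toLp]

section FG

variable {f g : EuclideanSpace ℝ (Fin d) → ℂ}

lemma prod_mul_memL1 (hf2 : MemLp f 2 volume) (hg2 : MemLp g 2 volume)
    (x : EuclideanSpace ℝ (Fin d)) :
    Integrable (fun y => ‖f y‖ * ‖g (x + y)‖) volume := by
  have h1 : MemLp (fun y : EuclideanSpace ℝ (Fin d) => ‖f y‖) 2 volume := hf2.norm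
  have h2 : MemLp (fun y : EuclideanSpace ℝ (Fin d) => ‖g (x + y)‖) 2 volume :=
    (translate_memLp hg2 x).norm
  have h3 : (1 : ENNReal) / 1 = 1 / 2 + 1 / 2 := by
    rw [ENNReal.div_add_div_same]
    rw [ENNReal.div_self (by norm_num) (by norm_num), one_add_one_eq_two,
      ENNReal.div_self (by norm_num) (by norm_num)]
  have := h2.smul (r := 1) h1
  rw [memLp_one_iff_integrable] at this
  simpa [smul_eq_mul, mul_comm, Pi.mul_def] using this

lemma integrand_sm (hw : Nice w C R) (hf : Measurable f) (hg : Measurable g) :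
    Measurable fun p : EuclideanSpace ℝ (Fin d) × EuclideanSpace ℝ (Fin d) =>
      (starRingEnd ℂ) (f p.2) * g (p.1 + p.2) * w (p.1 + p.2) p.2 := by
  have hadd : Measurable fun p : EuclideanSpace ℝ (Fin d) × EuclideanSpace ℝ (Fin d) =>
      p.1 + p.2 := measurable_fst.add measurable_snd
  exact ((Complex.continuous_conj.measurable.comp (hf.comp measurable_snd)).mul
    (hg.comp hadd)).mul (hw.meas.comp (hadd.prodMk measurable_snd))

lemma integrable_integrand (hw : Nice w C R) (hf : Measurable f) (hg : Measurable g)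
    (hf2 : MemLp f 2 volume) (hg2 : MemLp g 2 volume) (x : EuclideanSpace ℝ (Fin d)) :
    Integrable (fun y => (starRingEnd ℂ) (f y) * g (x + y) * w (x + y) y) volume := by
  refine ((prod_mul_memL1 hf2 hg2 x).const_mul C).mono' ?_ ?_
  · exact ((integrand_sm hw hf hg).comp (measurable_const.prodMk measurable_id)
      : Measurable fun y : EuclideanSpace ℝ (Fin d) => _).aestronglyMeasurable
  · filter_upwards with y
    calc ‖(starRingEnd ℂ) (f y) * g (x + y) * w (x + y) y‖
        = ‖f y‖ * ‖g (x + y)‖ * ‖w (x + y) y‖ := by simp [norm_mul]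
      _ ≤ ‖f y‖ * ‖g (x + y)‖ * C :=
          mul_le_mul_of_nonneg_left (hw.hC _ _) (by positivity)
      _ = C * (‖f y‖ * ‖g (x + y)‖) := by ring

lemma wcc_bound (hw : Nice w C R) (hf : Measurable f) (hg : Measurable g)
    (hf2 : MemLp f 2 volume) (hg2 : MemLp g 2 volume) (x : EuclideanSpace ℝ (Fin d)) :
    ‖wcc f g w x‖ ≤ C * ((eLpNorm f 2 volume).toReal * (eLpNorm g 2 volume).toReal) := by
  calc ‖wcc f g w x‖ ≤ ∫ y, ‖(starRingEnd ℂ) (f y) * g (x + y) * w (x + y) y‖ :=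
        norm_integral_le_integral_norm _
    _ ≤ ∫ y, C * (‖f y‖ * ‖g (x + y)‖) := by
        refine integral_mono ((integrable_integrand hw hf hg hf2 hg2 x).norm)
          ((prod_mul_memL1 hf2 hg2 x).const_mul C) ?_
        intro y
        calc ‖(starRingEnd ℂ) (f y) * g (x + y) * w (x + y) y‖
            = ‖f y‖ * ‖g (x + y)‖ * ‖w (x + y) y‖ := by simp [norm_mul]
          _ ≤ ‖f y‖ * ‖g (x + y)‖ * C :=
              mul_le_mul_of_nonneg_left (hw.hC _ _) (by positivity)
          _ = C * (‖f y‖ * ‖g (x + y)‖) := by ring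
    _ = C * ∫ y, ‖f y‖ * ‖g (x + y)‖ := by
        rw [integral_const_mul]
    _ ≤ C * ((eLpNorm f 2 volume).toReal * (eLpNorm g 2 volume).toReal) := by
        refine mul_le_mul_of_nonneg_left ?_ hw.hC0
        have := integral_mul_le_CS (f := fun y : EuclideanSpace ℝ (Fin d) => ‖f y‖)
          (g := fun y : EuclideanSpace ℝ (Fin d) => ‖g (x + y)‖) hf2.norm
          (translate_memLp hg2 x).norm
        calc (∫ y, ‖f y‖ * ‖g (x + y)‖)
            ≤ (eLpNorm (fun y : EuclideanSpace ℝ (Fin d) => ‖f y‖) 2 volume).toReal *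
              (eLpNorm (fun y : EuclideanSpace ℝ (Fin d) => ‖g (x + y)‖) 2 volume).toReal := this
          _ = (eLpNorm f 2 volume).toReal * (eLpNorm g 2 volume).toReal := by
              rw [eLpNorm_norm, eLpNorm_norm (fun y : EuclideanSpace ℝ (Fin d) => g (x + y)),
                translate_eLpNorm hg2.aestronglyMeasurable x]

lemma wcc_support (hw : Nice w C R) (x : EuclideanSpace ℝ (Fin d)) (hx : 2 * R < ‖x‖) :
    wcc f g w x = 0 := by
  have h0 : ∀ y : EuclideanSpace ℝ (Fin d),
      (starRingEnd ℂ) (f y) * g (x + y) * w (x + y) y = 0 := by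
    intro y
    rcases le_or_gt ‖y‖ R with hy | hy
    · have h1 : ‖x‖ ≤ ‖x + y‖ + ‖y‖ := by
        simpa using norm_add_le (x + y) (-y)
      have : R < ‖x + y‖ := by linarith
      rw [hw.hR _ _ (Or.inl this), mul_zero]
    · rw [hw.hR _ _ (Or.inr hy), mul_zero]
  simp only [wcc, h0, integral_zero]

lemma wcc_aesm (hw : Nice w C R) (hf : Measurable f) (hg : Measurable g) :
    AEStronglyMeasurable (wcc f g w) volume := by
  have h : StronglyMeasurable fun p : EuclideanSpace ℝ (Fin d) × EuclideanSpace ℝ (Fin d) =>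
      (starRingEnd ℂ) (f p.2) * g (p.1 + p.2) * w (p.1 + p.2) p.2 :=
    (integrand_sm hw hf hg).stronglyMeasurable
  exact h.integral_prod_right'.aestronglyMeasurable

lemma wcc_eLpNorm_le (hw : Nice w C R) (hf : Measurable f) (hg : Measurable g)
    (hf2 : MemLp f 2 volume) (hg2 : MemLp g 2 volume) :
    eLpNorm (wcc f g w) 2 volume ≤
      ENNReal.ofReal (C * ((eLpNorm f 2 volume).toReal * (eLpNorm g 2 volume).toReal)) *
        volume (closedBall (0 : EuclideanSpace ℝ (Fin d)) (2 * R)) ^ (1 / (2:ℝ)) := by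
  set M : ℝ := C * ((eLpNorm f 2 volume).toReal * (eLpNorm g 2 volume).toReal) with hM
  have hM0 : 0 ≤ M := by
    apply mul_nonneg hw.hC0; positivity
  calc eLpNorm (wcc f g w) 2 volume
      ≤ eLpNorm ((closedBall (0 : EuclideanSpace ℝ (Fin d)) (2 * R)).indicator
          fun _ => M) 2 volume := by
        refine eLpNorm_mono_real ?_
        intro x
        by_cases hx : x ∈ closedBall (0 : EuclideanSpace ℝ (Fin d)) (2 * R)
        · rw [Set.indicator_of_mem hx]
          exact wcc_bound hw hf hg hf2 hg2 x
        · rw [Set.indicator_of_notMem hx]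
          have hx' : 2 * R < ‖x‖ := by
            have := hx
            simp only [mem_closedBall, dist_eq_norm, sub_zero, not_le] at this
            exact this
          rw [wcc_support hw x hx']
          simp
    _ = ‖M‖₊ * volume (closedBall (0 : EuclideanSpace ℝ (Fin d)) (2 * R)) ^ (1 / (2:ℝ)) := by
        rw [eLpNorm_indicator_const measurableSet_closedBall (by norm_num) (by norm_num)]
        norm_num; rfl
    _ = ENNReal.ofReal M *
        volume (closedBall (0 : EuclideanSpace ℝ (Fin d)) (2 * R)) ^ (1 / (2:ℝ)) := by
        rw [← enorm_eq_nnnorm, Real.enorm_eq_ofReal hM0]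

lemma wcc_memLp (hw : Nice w C R) (hf : Measurable f) (hg : Measurable g)
    (hf2 : MemLp f 2 volume) (hg2 : MemLp g 2 volume) :
    MemLp (wcc f g w) 2 volume := by
  refine ⟨wcc_aesm hw hf hg, lt_of_le_of_lt (wcc_eLpNorm_le hw hf hg hf2 hg2) ?_⟩
  exact ENNReal.mul_lt_top ENNReal.ofReal_lt_top
    (ENNReal.rpow_lt_top_of_nonneg (by norm_num) measure_closedBall_lt_top.ne)

lemma wcc_congr_left {f₁ f₂ : EuclideanSpace ℝ (Fin d) → ℂ} (h : f₁ =ᵐ[volume] f₂)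
    (x : EuclideanSpace ℝ (Fin d)) : wcc f₁ g w x = wcc f₂ g w x := by
  refine integral_congr_ae ?_
  filter_upwards [h] with y hy
  rw [hy]

lemma wcc_congr_right {g₁ g₂ : EuclideanSpace ℝ (Fin d) → ℂ} (h : g₁ =ᵐ[volume] g₂)
    (x : EuclideanSpace ℝ (Fin d)) : wcc f g₁ w x = wcc f g₂ w x := by
  refine integral_congr_ae ?_
  have h' := (measurePreserving_add_left volume x).quasiMeasurePreserving.ae_eq h
  filter_upwards [h'] with y hy
  simp only [Function.comp] at hy
  rw [hy]

lemma wcc_add_right (hw : Nice w C R) {g₁ g₂ : EuclideanSpace ℝ (Fin d) → ℂ}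
    (hf : Measurable f) (hg₁ : Measurable g₁) (hg₂ : Measurable g₂)
    (hf2 : MemLp f 2 volume) (hg₁2 : MemLp g₁ 2 volume) (hg₂2 : MemLp g₂ 2 volume)
    (x : EuclideanSpace ℝ (Fin d)) :
    wcc f (fun y => g₁ y + g₂ y) w x = wcc f g₁ w x + wcc f g₂ w x := by
  unfold wcc
  rw [← integral_add (integrable_integrand hw hf hg₁ hf2 hg₁2 x)
    (integrable_integrand hw hf hg₂ hf2 hg₂2 x)]
  refine integral_congr_ae (Filter.Eventually.of_forall fun y => ?_)
  ring

lemma wcc_add_left (hw : Nice w C R) {f₁ f₂ : EuclideanSpace ℝ (Fin d) → ℂ}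
    (hf₁ : Measurable f₁) (hf₂ : Measurable f₂) (hg : Measurable g)
    (hf₁2 : MemLp f₁ 2 volume) (hf₂2 : MemLp f₂ 2 volume) (hg2 : MemLp g 2 volume)
    (x : EuclideanSpace ℝ (Fin d)) :
    wcc (fun y => f₁ y + f₂ y) g w x = wcc f₁ g w x + wcc f₂ g w x := by
  unfold wcc
  rw [← integral_add (integrable_integrand hw hf₁ hg hf₁2 hg2 x)
    (integrable_integrand hw hf₂ hg hf₂2 hg2 x)]
  refine integral_congr_ae (Filter.Eventually.of_forall fun y => ?_)
  simp only [map_add]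
  ring

lemma wcc_smul_right (c : ℝ) (x : EuclideanSpace ℝ (Fin d)) :
    wcc f (fun y => c • g y) w x = c • wcc f g w x := by
  unfold wcc
  rw [← integral_smul]
  refine integral_congr_ae (Filter.Eventually.of_forall fun y => ?_)
  simp only [Complex.real_smul]
  ring

lemma wcc_smul_left (c : ℝ) (x : EuclideanSpace ℝ (Fin d)) :
    wcc (fun y => c • f y) g w x = c • wcc f g w x := by
  unfold wcc
  rw [← integral_smul]
  refine integral_congr_ae (Filter.Eventually.of_forall fun y => ?_)
  simp only [Complex.real_smul, map_mul, Complex.conj_ofReal]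
  ring

end FG

section Bundled

variable (hw : Nice w C R)

/-- The weighted cross-correlation at the level of `L²`. -/
noncomputable def T (f g : Lp ℂ 2 (volume : Measure (EuclideanSpace ℝ (Fin d)))) :
    Lp ℂ 2 (volume : Measure (EuclideanSpace ℝ (Fin d))) :=
  (wcc_memLp hw (Lp.stronglyMeasurable f).measurable (Lp.stronglyMeasurable g).measurable
    (Lp.memLp f) (Lp.memLp g)).toLp _

lemma T_coe (f g : Lp ℂ 2 (volume : Measure (EuclideanSpace ℝ (Fin d)))) :
    ⇑(T hw f g) =ᵐ[volume] wcc (⇑f) (⇑g) w :=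
  MemLp.coeFn_toLp _

lemma T_norm (f g : Lp ℂ 2 (volume : Measure (EuclideanSpace ℝ (Fin d)))) :
    ‖T hw f g‖ = (eLpNorm (wcc (⇑f) (⇑g) w) 2 volume).toReal :=
  Lp.norm_toLp _ _

lemma T_norm_le (f g : Lp ℂ 2 (volume : Measure (EuclideanSpace ℝ (Fin d)))) :
    ‖T hw f g‖ ≤
      C * (volume (closedBall (0 : EuclideanSpace ℝ (Fin d)) (2 * R)) ^ (1 / (2:ℝ))).toReal *
        ‖f‖ * ‖g‖ := by
  rw [T_norm]
  have h := wcc_eLpNorm_le hw (Lp.stronglyMeasurable f).measurable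
    (Lp.stronglyMeasurable g).measurable (Lp.memLp f) (Lp.memLp g)
  have hfin : ENNReal.ofReal (C * ((eLpNorm (⇑f) 2 volume).toReal *
      (eLpNorm (⇑g) 2 volume).toReal)) *
      volume (closedBall (0 : EuclideanSpace ℝ (Fin d)) (2 * R)) ^ (1 / (2:ℝ)) ≠ ⊤ :=
    (ENNReal.mul_lt_top ENNReal.ofReal_lt_top
      (ENNReal.rpow_lt_top_of_nonneg (by norm_num) measure_closedBall_lt_top.ne)).ne
  have h2 := ENNReal.toReal_mono hfin h
  rw [ENNReal.toReal_mul, ENNReal.toReal_ofReal (by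
      apply mul_nonneg hw.hC0; positivity)] at h2
  calc (eLpNorm (wcc (⇑f) (⇑g) w) 2 volume).toReal
      ≤ C * ((eLpNorm (⇑f) 2 volume).toReal * (eLpNorm (⇑g) 2 volume).toReal) *
        (volume (closedBall (0 : EuclideanSpace ℝ (Fin d)) (2 * R)) ^ (1 / (2:ℝ))).toReal := h2
    _ = C * (volume (closedBall (0 : EuclideanSpace ℝ (Fin d)) (2 * R)) ^ (1 / (2:ℝ))).toReal *
        ‖f‖ * ‖g‖ := by
        rw [Lp.norm_def, Lp.norm_def]; ring

lemma T_add_left (f₁ f₂ g : Lp ℂ 2 (volume : Measure (EuclideanSpace ℝ (Fin d)))) :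
    T hw (f₁ + f₂) g = T hw f₁ g + T hw f₂ g := by
  refine Lp.ext ?_
  have h1 := T_coe hw (f₁ + f₂) g
  have h2 := T_coe hw f₁ g
  have h3 := T_coe hw f₂ g
  have h4 := Lp.coeFn_add (T hw f₁ g) (T hw f₂ g)
  have hc : ∀ x, wcc (⇑(f₁ + f₂)) (⇑g) w x = wcc (⇑f₁) (⇑g) w x + wcc (⇑f₂) (⇑g) w x := by
    intro x
    rw [wcc_congr_left (Lp.coeFn_add f₁ f₂) x]
    exact wcc_add_left hw (Lp.stronglyMeasurable f₁).measurable
      (Lp.stronglyMeasurable f₂).measurable (Lp.stronglyMeasurable g).measurable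
      (Lp.memLp f₁) (Lp.memLp f₂) (Lp.memLp g) x
  filter_upwards [h1, h2, h3, h4] with x e1 e2 e3 e4
  rw [e1, e4, hc]
  simp only [Pi.add_apply, e2, e3]

lemma T_add_right (f g₁ g₂ : Lp ℂ 2 (volume : Measure (EuclideanSpace ℝ (Fin d)))) :
    T hw f (g₁ + g₂) = T hw f g₁ + T hw f g₂ := by
  refine Lp.ext ?_
  have h1 := T_coe hw f (g₁ + g₂)
  have h2 := T_coe hw f g₁
  have h3 := T_coe hw f g₂
  have h4 := Lp.coeFn_add (T hw f g₁) (T hw f g₂)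
  have hc : ∀ x, wcc (⇑f) (⇑(g₁ + g₂)) w x = wcc (⇑f) (⇑g₁) w x + wcc (⇑f) (⇑g₂) w x := by
    intro x
    rw [wcc_congr_right (Lp.coeFn_add g₁ g₂) x]
    exact wcc_add_right hw (Lp.stronglyMeasurable f).measurable
      (Lp.stronglyMeasurable g₁).measurable (Lp.stronglyMeasurable g₂).measurable
      (Lp.memLp f) (Lp.memLp g₁) (Lp.memLp g₂) x
  filter_upwards [h1, h2, h3, h4] with x e1 e2 e3 e4
  rw [e1, e4, hc]
  simp only [Pi.add_apply, e2, e3]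

lemma T_smul_left (c : ℝ) (f g : Lp ℂ 2 (volume : Measure (EuclideanSpace ℝ (Fin d)))) :
    T hw (c • f) g = c • T hw f g := by
  refine Lp.ext ?_
  have h1 := T_coe hw (c • f) g
  have h2 := T_coe hw f g
  have h4 := Lp.coeFn_smul c (T hw f g)
  have hc : ∀ x, wcc (⇑(c • f)) (⇑g) w x = c • wcc (⇑f) (⇑g) w x := by
    intro x
    rw [wcc_congr_left (Lp.coeFn_smul c f) x]
    exact wcc_smul_left c x
  filter_upwards [h1, h2, h4] with x e1 e2 e4
  rw [e1, e4, hc]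
  simp only [Pi.smul_apply, e2]

lemma T_smul_right (c : ℝ) (f g : Lp ℂ 2 (volume : Measure (EuclideanSpace ℝ (Fin d)))) :
    T hw f (c • g) = c • T hw f g := by
  refine Lp.ext ?_
  have h1 := T_coe hw f (c • g)
  have h2 := T_coe hw f g
  have h4 := Lp.coeFn_smul c (T hw f g)
  have hc : ∀ x, wcc (⇑f) (⇑(c • g)) w x = c • wcc (⇑f) (⇑g) w x := by
    intro x
    rw [wcc_congr_right (Lp.coeFn_smul c g) x]
    exact wcc_smul_right c x
  filter_upwards [h1, h2, h4] with x e1 e2 e4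
  rw [e1, e4, hc]
  simp only [Pi.smul_apply, e2]

/-- The bundled continuous bilinear (over `ℝ`) cross-correlation operator. -/
noncomputable def Tcl :
    Lp ℂ 2 (volume : Measure (EuclideanSpace ℝ (Fin d))) →L[ℝ]
    Lp ℂ 2 (volume : Measure (EuclideanSpace ℝ (Fin d))) →L[ℝ]
    Lp ℂ 2 (volume : Measure (EuclideanSpace ℝ (Fin d))) :=
  LinearMap.mkContinuous₂
    (LinearMap.mk₂ ℝ (T hw) (T_add_left hw) (T_smul_left hw) (T_add_right hw) (T_smul_right hw))
    (C * (volume (closedBall (0 : EuclideanSpace ℝ (Fin d)) (2 * R)) ^ (1 / (2:ℝ))).toReal)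
    (T_norm_le hw)

lemma Tcl_apply (f g : Lp ℂ 2 (volume : Measure (EuclideanSpace ℝ (Fin d)))) :
    Tcl hw f g = T hw f g := rfl

end Bundled

end Stmt9Aux


namespace Stmt9Aux

open Metric in
lemma nice_of {d : ℕ} (U : Set (EuclideanSpace ℝ (Fin d))) (hUb : Bornology.IsBounded U)
    (w : EuclideanSpace ℝ (Fin d) → EuclideanSpace ℝ (Fin d) → ℂ) (hw : IsWPlus U w) :
    ∃ C R : ℝ, Nice w C R := by
  obtain ⟨hm, ⟨C, hC⟩, hsupp, -⟩ := hw
  obtain ⟨R, hR⟩ := hUb.subset_closedBall 0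
  refine ⟨C, R, hm, le_trans (norm_nonneg (w 0 0)) (hC 0 0), hC, ?_⟩
  intro x y h
  refine hsupp x y ?_
  rcases h with h | h
  · exact Or.inl fun hx => absurd (by
      simpa [mem_closedBall, dist_eq_norm] using hR hx) (not_le.2 h)
  · exact Or.inr fun hy => absurd (by
      simpa [mem_closedBall, dist_eq_norm] using hR hy) (not_le.2 h)

end Stmt9Aux

set_option maxHeartbeats 1000000 in
open Stmt9Aux in
theorem stmt9 {d : ℕ} (U : Set (EuclideanSpace ℝ (Fin d))) (hUb : Bornology.IsBounded U)
    (w : EuclideanSpace ℝ (Fin d) → EuclideanSpace ℝ (Fin d) → ℂ)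
    (hw : IsWPlus U w)
    (hsym : ∀ x y, (starRingEnd ℂ) (w x y) = w y x) :
    (∀ f : Lp ℂ 2 (volume : Measure (EuclideanSpace ℝ (Fin d))),
      ∃ D : Lp ℂ 2 (volume : Measure (EuclideanSpace ℝ (Fin d))) →L[ℝ] ℝ,
        HasFDerivAt
          (fun f : Lp ℂ 2 (volume : Measure (EuclideanSpace ℝ (Fin d))) =>
            ((eLpNorm (wcc (⇑f) (⇑f) w) 2 volume).toReal) ^ 2) D f ∧
        ∀ g : Lp ℂ 2 (volume : Measure (EuclideanSpace ℝ (Fin d))),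
          D g = 2 * (∫ x, wcc (⇑f) (⇑f) w x *
            (starRingEnd ℂ) (wcc (⇑f) (⇑g) w x + wcc (⇑g) (⇑f) w x)).re) ∧
    Continuous
      (fun f : Lp ℂ 2 (volume : Measure (EuclideanSpace ℝ (Fin d))) =>
        ((eLpNorm (wcc (⇑f) (⇑f) w) 2 volume).toReal) ^ 2) := by
  classical
  obtain ⟨C, R, hw'⟩ := nice_of U hUb w hw
  let B := Tcl hw'
  have hbb : IsBoundedBilinearMap ℝ
      (fun p : Lp ℂ 2 (volume : Measure (EuclideanSpace ℝ (Fin d))) ×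
        Lp ℂ 2 (volume : Measure (EuclideanSpace ℝ (Fin d))) => B p.1 p.2) :=
    B.isBoundedBilinearMap
  set Q : Lp ℂ 2 (volume : Measure (EuclideanSpace ℝ (Fin d))) →
      Lp ℂ 2 (volume : Measure (EuclideanSpace ℝ (Fin d))) := fun f => B f f with hQdef
  have hFeq : (fun f : Lp ℂ 2 (volume : Measure (EuclideanSpace ℝ (Fin d))) =>
      ((eLpNorm (wcc (⇑f) (⇑f) w) 2 volume).toReal) ^ 2)
      = fun f => Complex.reCLM (@inner ℂ _ _ (Q f) (Q f)) := by
    funext f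
    have h1 : (eLpNorm (wcc (⇑f) (⇑f) w) 2 volume).toReal = ‖Q f‖ := (T_norm hw' f f).symm
    have h2 := @inner_self_eq_norm_sq ℂ _ _ _ _ (Q f)
    rw [h1, ← h2]
    simp [RCLike.re_to_complex]
  let diag : Lp ℂ 2 (volume : Measure (EuclideanSpace ℝ (Fin d))) →L[ℝ]
      Lp ℂ 2 (volume : Measure (EuclideanSpace ℝ (Fin d))) ×
      Lp ℂ 2 (volume : Measure (EuclideanSpace ℝ (Fin d))) :=
    (ContinuousLinearMap.id ℝ _).prod (ContinuousLinearMap.id ℝ _)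
  have hQ : ∀ f, HasFDerivAt Q ((hbb.deriv (f, f)).comp diag) f := by
    intro f
    have h : HasFDerivAt ((fun p : Lp ℂ 2 (volume : Measure (EuclideanSpace ℝ (Fin d))) ×
          Lp ℂ 2 (volume : Measure (EuclideanSpace ℝ (Fin d))) => B p.1 p.2) ∘ ⇑diag)
        ((hbb.deriv (f, f)).comp diag) f :=
      HasFDerivAt.comp f (hbb.hasFDerivAt (f, f)) diag.hasFDerivAt
    exact h
  constructor
  · intro f
    set D₁ := (hbb.deriv (f, f)).comp diag with hD₁
    have hIn := (hQ f).inner ℂ (hQ f)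
    refine ⟨Complex.reCLM.comp ((fderivInnerCLM ℂ (Q f, Q f)).comp (D₁.prod D₁)), ?_, ?_⟩
    · rw [hFeq]
      exact (Complex.reCLM.hasFDerivAt).comp f hIn
    · intro g
      have hD1g : D₁ g = B f g + B g f := by
        show hbb.deriv (f, f) (g, g) = _
        rw [hbb.deriv_apply]
      -- the inner product computation
      set I : ℂ := ∫ x, wcc (⇑f) (⇑f) w x *
        (starRingEnd ℂ) (wcc (⇑f) (⇑g) w x + wcc (⇑g) (⇑f) w x) with hI
      have hBfg : B f g = T hw' f g := rfl
      have hBgf : B g f = T hw' g f := rfl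
      have hQf : Q f = T hw' f f := rfl
      have hinner : @inner ℂ _ _ (Q f) (B f g + B g f) = (starRingEnd ℂ) I := by
        rw [L2.inner_def, hI, ← integral_conj]
        refine integral_congr_ae ?_
        filter_upwards [T_coe hw' f f, T_coe hw' f g, T_coe hw' g f,
          Lp.coeFn_add (T hw' f g) (T hw' g f)] with x e1 e2 e3 e4
        rw [RCLike.inner_apply, hQf, hBfg, hBgf, e1, e4]
        simp only [Pi.add_apply, e2, e3]
        rw [map_mul, Complex.conj_conj]
        ring
      have e5 : @inner ℂ _ _ (B f g + B g f)
          (Q f) = I := by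
        rw [← inner_conj_symm, hinner, Complex.conj_conj]
      simp only [ContinuousLinearMap.comp_apply, ContinuousLinearMap.prod_apply]
      rw [fderivInnerCLM_apply]
      simp only [Prod.fst, Prod.snd]
      rw [hD1g, hinner, e5]
      simp [Complex.add_re, Complex.conj_re]
      ring
  · rw [hFeq]
    refine continuous_iff_continuousAt.mpr fun f => ?_
    exact ((Complex.reCLM.hasFDerivAt).comp f ((hQ f).inner ℂ (hQ f))).continuousAt
end

section
/- The map C: R → [−2, 2] given by the sine integral Si satisfies |Si(x)| ≤ Si(π) ≤ 2 for all x ∈ R, |Si(x) − π/2| ≤ 1/x for all x > 0, and |Si(x) + π/2| ≤ 1/(−x) for all x < 0. -/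
set_option linter.unusedTactic false
set_option linter.unreachableTactic false
set_option linter.unnecessarySeqFocus false
set_option maxHeartbeats 1000000

open MeasureTheory Real

section SiAux
open Set Filter Topology intervalIntegral

/-- The sine integral `Si(x) = ∫_0^x sin(y)/y dy`. -/
noncomputable def Si (x : ℝ) : ℝ := ∫ y in (0 : ℝ)..x, Real.sin y / y



/-- helper: f 0 = 0, f' = g, g ≥ 0 on [0,∞)  ⇒  f ≥ 0 on [0,∞) -/
lemma nonneg_of_deriv {f g : ℝ → ℝ} (h0 : f 0 = 0)
    (hd : ∀ t, HasDerivAt f (g t) t) (hg : ∀ t, 0 ≤ t → 0 ≤ g t) :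
    ∀ t, 0 ≤ t → 0 ≤ f t := by
  intro t ht
  have hmono : MonotoneOn f (Ici (0:ℝ)) := by
    apply monotoneOn_of_deriv_nonneg (convex_Ici 0)
    · exact (continuous_iff_continuousAt.2 fun x => (hd x).continuousAt).continuousOn
    · intro x hx
      exact ((hd x).differentiableAt).differentiableWithinAt
    · intro x hx
      rw [interior_Ici] at hx
      rw [(hd x).deriv]
      exact hg x (le_of_lt hx)
  have := hmono (self_mem_Ici) (mem_Ici.2 ht) ht
  linarith [h0 ▸ this]

lemma sin_ge_cubic : ∀ t : ℝ, 0 ≤ t → t - t^3/6 ≤ Real.sin t := by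
  have := nonneg_of_deriv (f := fun t => Real.sin t - t + t^3/6)
    (g := fun t => Real.cos t - 1 + t^2/2) (by simp)
    (fun t => by
      have h1 : HasDerivAt Real.sin (Real.cos t) t := Real.hasDerivAt_sin t
      have h2 : HasDerivAt (fun t : ℝ => t^3/6) (t^2/2) t := by
        have := (hasDerivAt_pow 3 t).div_const 6
        convert this using 1 <;> first | rfl | ring
      have := (h1.sub (hasDerivAt_id t)).add h2
      convert this using 1 <;> first | rfl | ring)
    (fun t ht => by linarith [Real.one_sub_sq_div_two_le_cos (x := t)])
  intro t ht; linarith [this t ht]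

lemma cos_le_quartic : ∀ t : ℝ, 0 ≤ t → Real.cos t ≤ 1 - t^2/2 + t^4/24 := by
  have := nonneg_of_deriv (f := fun t => 1 - t^2/2 + t^4/24 - Real.cos t)
    (g := fun t => -t + t^3/6 + Real.sin t) (by simp)
    (fun t => by
      have h1 : HasDerivAt (fun t : ℝ => t^2/2) t t := by
        have := (hasDerivAt_pow 2 t).div_const 2
        convert this using 1 <;> first | rfl | ring
      have h2 : HasDerivAt (fun t : ℝ => t^4/24) (t^3/6) t := by
        have := (hasDerivAt_pow 4 t).div_const 24
        convert this using 1 <;> first | rfl | ring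
      have := (((hasDerivAt_const t (1:ℝ)).sub h1).add h2).sub (Real.hasDerivAt_cos t)
      convert this using 1 <;> first | rfl | ring)
    (fun t ht => by linarith [sin_ge_cubic t ht])
  intro t ht; linarith [this t ht]

lemma sin_le_quintic : ∀ t : ℝ, 0 ≤ t → Real.sin t ≤ t - t^3/6 + t^5/120 := by
  have := nonneg_of_deriv (f := fun t => t - t^3/6 + t^5/120 - Real.sin t)
    (g := fun t => 1 - t^2/2 + t^4/24 - Real.cos t) (by simp)
    (fun t => by
      have h1 : HasDerivAt (fun t : ℝ => t^3/6) (t^2/2) t := by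
        have := (hasDerivAt_pow 3 t).div_const 6
        convert this using 1 <;> first | rfl | ring
      have h2 : HasDerivAt (fun t : ℝ => t^5/120) (t^4/24) t := by
        have := (hasDerivAt_pow 5 t).div_const 120
        convert this using 1 <;> first | rfl | ring
      have := (((hasDerivAt_id t).sub h1).add h2).sub (Real.hasDerivAt_sin t)
      convert this using 1 <;> first | rfl | ring)
    (fun t ht => by linarith [cos_le_quartic t ht])
  intro t ht; linarith [this t ht]

lemma cos_ge_sextic : ∀ t : ℝ, 0 ≤ t → 1 - t^2/2 + t^4/24 - t^6/720 ≤ Real.cos t := by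
  have := nonneg_of_deriv (f := fun t => Real.cos t - (1 - t^2/2 + t^4/24 - t^6/720))
    (g := fun t => -Real.sin t - (-t + t^3/6 - t^5/120)) (by simp)
    (fun t => by
      have h1 : HasDerivAt (fun t : ℝ => t^2/2) t t := by
        have := (hasDerivAt_pow 2 t).div_const 2
        convert this using 1 <;> first | rfl | ring
      have h2 : HasDerivAt (fun t : ℝ => t^4/24) (t^3/6) t := by
        have := (hasDerivAt_pow 4 t).div_const 24
        convert this using 1 <;> first | rfl | ring
      have h3 : HasDerivAt (fun t : ℝ => t^6/720) (t^5/120) t := by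
        have := (hasDerivAt_pow 6 t).div_const 720
        convert this using 1 <;> first | rfl | ring
      have := (Real.hasDerivAt_cos t).sub ((((hasDerivAt_const t (1:ℝ)).sub h1).add h2).sub h3)
      convert this using 1 <;> first | rfl | ring)
    (fun t ht => by linarith [sin_le_quintic t ht])
  intro t ht; linarith [this t ht]

lemma sin_ge_septic : ∀ t : ℝ, 0 ≤ t → t - t^3/6 + t^5/120 - t^7/5040 ≤ Real.sin t := by
  have := nonneg_of_deriv (f := fun t => Real.sin t - (t - t^3/6 + t^5/120 - t^7/5040))
    (g := fun t => Real.cos t - (1 - t^2/2 + t^4/24 - t^6/720)) (by simp)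
    (fun t => by
      have h1 : HasDerivAt (fun t : ℝ => t^3/6) (t^2/2) t := by
        have := (hasDerivAt_pow 3 t).div_const 6
        convert this using 1 <;> first | rfl | ring
      have h2 : HasDerivAt (fun t : ℝ => t^5/120) (t^4/24) t := by
        have := (hasDerivAt_pow 5 t).div_const 120
        convert this using 1 <;> first | rfl | ring
      have h3 : HasDerivAt (fun t : ℝ => t^7/5040) (t^6/720) t := by
        have := (hasDerivAt_pow 7 t).div_const 5040
        convert this using 1 <;> first | rfl | ring
      have := (Real.hasDerivAt_sin t).sub (((hasDerivAt_id t).sub h1).add h2 |>.sub h3)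
      convert this using 1 <;> first | rfl | ring)
    (fun t ht => by linarith [cos_ge_sextic t ht])
  intro t ht; linarith [this t ht]


lemma abs_sinc_le (y : ℝ) : |Real.sin y / y| ≤ 1 := by
  rcases eq_or_ne y 0 with rfl | hy
  · simp
  · rw [abs_div, div_le_one (abs_pos.2 hy)]
    exact Real.abs_sin_le_abs

lemma sinc_intervalIntegrable (a b : ℝ) :
    IntervalIntegrable (fun y => Real.sin y / y) volume a b := by
  rw [intervalIntegrable_iff]
  apply Integrable.mono' (integrableOn_const (C := (1:ℝ)) measure_Ioc_lt_top.ne)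
  · exact (Real.measurable_sin.div measurable_id).aestronglyMeasurable
  · exact Eventually.of_forall fun y => by rw [Real.norm_eq_abs]; exact abs_sinc_le y

lemma Si_continuous : Continuous Si :=
  intervalIntegral.continuous_primitive (fun a b => sinc_intervalIntegrable a b) 0

lemma Si_neg (x : ℝ) : Si (-x) = -Si x := by
  have h : (∫ y in (0:ℝ)..x, Real.sin (-y) / (-y)) = ∫ y in (-x:ℝ)..(0:ℝ), Real.sin y / y := by
    simpa using intervalIntegral.integral_comp_neg (a := 0) (b := x) (fun y => Real.sin y / y)
  have h2 : (∫ y in (0:ℝ)..x, Real.sin (-y) / (-y)) = Si x := by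
    unfold Si; congr 1; ext y; rw [Real.sin_neg]; ring
  have h3 : (∫ y in (-x:ℝ)..(0:ℝ), Real.sin y / y) = Si x := h.symm.trans h2
  unfold Si
  rw [intervalIntegral.integral_symm (-x) 0, h3]
  rfl

lemma Si_mono_aux {a b : ℝ} (h0 : 0 ≤ a) (hab : a ≤ b) (hb : b ≤ π) : Si a ≤ Si b := by
  have : Si b - Si a = ∫ y in a..b, Real.sin y / y := by
    unfold Si
    rw [← intervalIntegral.integral_interval_sub_left (sinc_intervalIntegrable 0 b)
      (sinc_intervalIntegrable 0 a)]
  have hnn : 0 ≤ ∫ y in a..b, Real.sin y / y := by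
    apply intervalIntegral.integral_nonneg hab
    intro u hu
    have hu0 : 0 ≤ u := le_trans h0 hu.1
    have : 0 ≤ Real.sin u := Real.sin_nonneg_of_nonneg_of_le_pi hu0 (le_trans hu.2 hb)
    positivity
  linarith

lemma Si_anti_aux {a b : ℝ} (h0 : π ≤ a) (hab : a ≤ b) (hb : b ≤ 2*π) : Si b ≤ Si a := by
  have : Si b - Si a = ∫ y in a..b, Real.sin y / y := by
    unfold Si
    rw [← intervalIntegral.integral_interval_sub_left (sinc_intervalIntegrable 0 b)
      (sinc_intervalIntegrable 0 a)]
  have hnp : (∫ y in a..b, Real.sin y / y) ≤ 0 := by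
    have : 0 ≤ ∫ y in a..b, -(Real.sin y / y) := by
      apply intervalIntegral.integral_nonneg hab
      intro u hu
      rw [neg_nonneg]
      have hu0 : (0:ℝ) < u := lt_of_lt_of_le Real.pi_pos (le_trans h0 hu.1)
      have hs : Real.sin u ≤ 0 := by
        have h4 : Real.sin (u - π) ≥ 0 := Real.sin_nonneg_of_nonneg_of_le_pi
          (by linarith [h0, hu.1]) (by linarith [hu.2, hb])
        have hrw : Real.sin (u - π) = -Real.sin u := by
          rw [Real.sin_sub]; simp
        linarith [hrw ▸ h4]
      exact div_nonpos_of_nonpos_of_nonneg hs hu0.le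
    rw [intervalIntegral.integral_neg] at this
    linarith
  linarith



lemma poly4_integral : (∫ t in (0:ℝ)..π, (1 - t^2/6 + t^4/120)) = π - π^3/18 + π^5/600 := by
  have h : ∀ t : ℝ, HasDerivAt (fun t : ℝ => t - t^3/18 + t^5/600) (1 - t^2/6 + t^4/120) t := by
    intro t
    have h1 : HasDerivAt (fun t : ℝ => t^3/18) (t^2/6) t := by
      have := (hasDerivAt_pow 3 t).div_const 18; convert this using 1 <;> first | rfl | ring
    have h2 : HasDerivAt (fun t : ℝ => t^5/600) (t^4/120) t := by
      have := (hasDerivAt_pow 5 t).div_const 600; convert this using 1 <;> first | rfl | ring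
    have := ((hasDerivAt_id t).sub h1).add h2
    convert this using 1 <;> first | rfl | ring
  rw [intervalIntegral.integral_eq_sub_of_hasDerivAt (fun t _ => h t)
    (by apply Continuous.intervalIntegrable; continuity)]
  norm_num

lemma poly6_integral :
    (∫ t in (0:ℝ)..π, (1 - t^2/6 + t^4/120 - t^6/5040)) = π - π^3/18 + π^5/600 - π^7/35280 := by
  have h : ∀ t : ℝ, HasDerivAt (fun t : ℝ => t - t^3/18 + t^5/600 - t^7/35280)
      (1 - t^2/6 + t^4/120 - t^6/5040) t := by
    intro t
    have h1 : HasDerivAt (fun t : ℝ => t^3/18) (t^2/6) t := by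
      have := (hasDerivAt_pow 3 t).div_const 18; convert this using 1 <;> first | rfl | ring
    have h2 : HasDerivAt (fun t : ℝ => t^5/600) (t^4/120) t := by
      have := (hasDerivAt_pow 5 t).div_const 600; convert this using 1 <;> first | rfl | ring
    have h3 : HasDerivAt (fun t : ℝ => t^7/35280) (t^6/5040) t := by
      have := (hasDerivAt_pow 7 t).div_const 35280; convert this using 1 <;> first | rfl | ring
    have := (((hasDerivAt_id t).sub h1).add h2).sub h3
    convert this using 1 <;> first | rfl | ring
  rw [intervalIntegral.integral_eq_sub_of_hasDerivAt (fun t _ => h t)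
    (by apply Continuous.intervalIntegrable; continuity)]
  norm_num

lemma Si_pi_le : Si π ≤ π - π^3/18 + π^5/600 := by
  rw [← poly4_integral]
  unfold Si
  rw [intervalIntegral.integral_of_le Real.pi_pos.le,
    intervalIntegral.integral_of_le Real.pi_pos.le]
  apply setIntegral_mono_on
  · exact (sinc_intervalIntegrable 0 π).1
  · apply Continuous.integrableOn_Ioc; continuity
  · exact measurableSet_Ioc
  · intro t ht
    have ht0 : 0 < t := ht.1
    have := sin_le_quintic t ht0.le
    rw [div_le_iff₀ ht0]
    nlinarith [this]

lemma Si_pi_ge : π - π^3/18 + π^5/600 - π^7/35280 ≤ Si π := by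
  rw [← poly6_integral]
  unfold Si
  rw [intervalIntegral.integral_of_le Real.pi_pos.le,
    intervalIntegral.integral_of_le Real.pi_pos.le]
  apply setIntegral_mono_on
  · apply Continuous.integrableOn_Ioc; continuity
  · exact (sinc_intervalIntegrable 0 π).1
  · exact measurableSet_Ioc
  · intro t ht
    have ht0 : 0 < t := ht.1
    have := sin_ge_septic t ht0.le
    rw [le_div_iff₀ ht0]
    nlinarith [this]

lemma pi_pow_bounds : 9.8696 ≤ π^2 ∧ π^2 ≤ 9.86961 ∧ 31.006 ≤ π^3 ∧ π^3 ≤ 31.0064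
    ∧ 306.019 ≤ π^5 ∧ π^5 ≤ 306.022 ∧ 3020.2 ≤ π^7 ∧ π^7 ≤ 3020.4 := by
  have lo := Real.pi_gt_d6
  have hi := Real.pi_lt_d6
  have h2 : 9.8696 ≤ π^2 ∧ π^2 ≤ 9.86961 := ⟨by nlinarith, by nlinarith⟩
  have h3 : 31.006 ≤ π^3 ∧ π^3 ≤ 31.0064 := by
    constructor
    · nlinarith [h2.1]
    · nlinarith [h2.2]
  have h5 : 306.019 ≤ π^5 ∧ π^5 ≤ 306.022 := by
    constructor
    · nlinarith [h2.1, h3.1, sq_nonneg π]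
    · nlinarith [h2.2, h3.2, h2.1, h3.1]
  have h7 : 3020.2 ≤ π^7 ∧ π^7 ≤ 3020.4 := by
    constructor
    · nlinarith [h2.1, h5.1, h2.2, h5.2]
    · nlinarith [h2.2, h5.2, h2.1, h5.1]
  exact ⟨h2.1, h2.2, h3.1, h3.2, h5.1, h5.2, h7.1, h7.2⟩

lemma Si_pi_le_two : Si π ≤ 2 := by
  have h := Si_pi_le
  obtain ⟨_, _, l3, h3, l5, h5, l7, h7⟩ := pi_pow_bounds
  have hi := Real.pi_lt_d6
  linarith

lemma Si_pi_ge_num : π/2 + 1/4 ≤ Si π := by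
  have h := Si_pi_ge
  obtain ⟨_, _, l3, h3, l5, h5, l7, h7⟩ := pi_pow_bounds
  have lo := Real.pi_gt_d6
  have hi := Real.pi_lt_d6
  linarith

noncomputable def P (s x : ℝ) : ℝ := Real.exp (-(s*x)) * (s * Real.sin x + Real.cos x) / (1+s^2)

lemma P_abs_le_exp (s x : ℝ) : |P s x| ≤ Real.exp (-(s*x)) := by
  have hden : (0:ℝ) < 1 + s^2 := by positivity
  have h1 : (s * Real.sin x + Real.cos x)^2 ≤ 1 + s^2 := by
    nlinarith [Real.sin_sq_add_cos_sq x, sq_nonneg (Real.cos x * s - Real.sin x)]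
  have h2 : |s * Real.sin x + Real.cos x| ≤ Real.sqrt (1+s^2) := Real.abs_le_sqrt h1
  have h3 : Real.sqrt (1+s^2) ≤ 1+s^2 := by
    rw [Real.sqrt_le_left hden.le]
    nlinarith [sq_nonneg s, sq_nonneg (s^2)]
  unfold P
  rw [abs_div, abs_mul, abs_of_pos (Real.exp_pos _), abs_of_pos hden, div_le_iff₀ hden]
  calc Real.exp (-(s*x)) * |s * Real.sin x + Real.cos x|
      ≤ Real.exp (-(s*x)) * (1+s^2) := by
        exact mul_le_mul_of_nonneg_left (h2.trans h3) (Real.exp_pos _).le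
    _ = Real.exp (-(s*x)) * (1+s^2) := rfl

lemma P_abs_le_bound {s x : ℝ} (hs : 0 ≤ s) (hx : 0 ≤ x) : |P s x| ≤ 2 * (1+s^2)⁻¹ := by
  have hden : (0:ℝ) < 1 + s^2 := by positivity
  have h1 : |s * Real.sin x + Real.cos x| ≤ s*x + 1 := by
    have := Real.abs_sin_le_abs (x := x)
    rw [abs_of_nonneg hx] at this
    calc |s * Real.sin x + Real.cos x| ≤ |s * Real.sin x| + |Real.cos x| := abs_add_le _ _
      _ ≤ s * x + 1 := by
          rw [abs_mul, abs_of_nonneg hs]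
          have := Real.abs_cos_le_one x
          nlinarith [abs_nonneg (Real.sin x)]
  have h2 : Real.exp (-(s*x)) * (s*x+1) ≤ 2 := by
    have hu : (0:ℝ) ≤ s*x := mul_nonneg hs hx
    have h3 : s*x ≤ Real.exp (s*x) := by linarith [Real.add_one_le_exp (s*x)]
    have h4 : Real.exp (-(s*x)) * (s*x) ≤ 1 := by
      rw [Real.exp_neg]
      rw [inv_mul_le_iff₀ (Real.exp_pos _)]
      linarith
    have h5 : Real.exp (-(s*x)) ≤ 1 := Real.exp_le_one_iff.2 (by linarith)
    nlinarith [Real.exp_pos (-(s*x))]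
  unfold P
  rw [abs_div, abs_mul, abs_of_pos (Real.exp_pos _), abs_of_pos hden, div_le_iff₀ hden]
  have : Real.exp (-(s*x)) * |s * Real.sin x + Real.cos x| ≤ Real.exp (-(s*x)) * (s*x+1) :=
    mul_le_mul_of_nonneg_left h1 (Real.exp_pos _).le
  calc Real.exp (-(s*x)) * |s * Real.sin x + Real.cos x| ≤ 2 := this.trans h2
    _ ≤ 2 * (1+s^2)⁻¹ * (1+s^2) := by rw [mul_assoc, inv_mul_cancel₀ hden.ne']; norm_num

lemma exp_integrableOn {x : ℝ} (hx : 0 < x) :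
    IntegrableOn (fun s => Real.exp (-(s*x))) (Ioi (0:ℝ)) := by
  have := exp_neg_integrableOn_Ioi 0 hx
  apply this.congr_fun _ measurableSet_Ioi
  intro s _; simp only []; congr 1; ring

lemma exp_integral {x : ℝ} (hx : 0 < x) :
    (∫ s in Ioi (0:ℝ), Real.exp (-(s*x))) = 1/x := by
  have hder : ∀ s ∈ Ici (0:ℝ), HasDerivAt (fun s => -Real.exp (-(s*x))/x) (Real.exp (-(s*x))) s := by
    intro s _
    have h1 : HasDerivAt (fun s : ℝ => -(s*x)) (-x) s := by
      convert ((hasDerivAt_id s).mul_const x).neg using 1 <;> first | rfl | ring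
    have := ((h1.exp).neg).div_const x
    convert this using 1 <;> try rfl
    field_simp
  have htend : Tendsto (fun s : ℝ => -Real.exp (-(s*x))/x) atTop (𝓝 0) := by
    have h1 : Tendsto (fun s : ℝ => -(s*x)) atTop atBot :=
      tendsto_neg_atTop_atBot.comp (tendsto_id.atTop_mul_const hx)
    have h2 : Tendsto (fun s : ℝ => Real.exp (-(s*x))) atTop (𝓝 0) :=
      Real.tendsto_exp_atBot.comp h1
    have := (h2.neg).div_const x
    simpa using this
  rw [integral_Ioi_of_hasDerivAt_of_tendsto' hder (exp_integrableOn hx) htend]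
  simp
  field_simp

lemma P_continuous (x : ℝ) : Continuous (fun s => P s x) := by
  unfold P
  apply Continuous.div
  · exact ((Real.continuous_exp.comp (by continuity)).mul (by continuity))
  · continuity
  · intro s; positivity

lemma P_integrableOn {x : ℝ} (hx : 0 < x) : IntegrableOn (fun s => P s x) (Ioi (0:ℝ)) := by
  apply Integrable.mono' (exp_integrableOn hx)
  · exact (P_continuous x).aestronglyMeasurable
  · exact Eventually.of_forall fun s => by rw [Real.norm_eq_abs]; exact P_abs_le_exp s x

noncomputable def K (x : ℝ) : ℝ := ∫ s in Ioi (0:ℝ), P s x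

lemma K_abs_le {x : ℝ} (hx : 0 < x) : |K x| ≤ 1/x := by
  have h := norm_integral_le_of_norm_le (exp_integrableOn hx)
    (Eventually.of_forall fun s => by rw [Real.norm_eq_abs]; exact P_abs_le_exp s x)
  rw [exp_integral hx] at h
  exact h

/-- antiderivative in `t` of `exp(-(s t)) sin t` is `-P s t`. -/
lemma inner_deriv (s t : ℝ) :
    HasDerivAt (fun t => -P s t) (Real.exp (-(s*t)) * Real.sin t) t := by
  have hden : (0:ℝ) < 1 + s^2 := by positivity
  have h1 : HasDerivAt (fun t : ℝ => -(s*t)) (-s) t := by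
    convert ((hasDerivAt_id t).const_mul s).neg using 1 <;> first | rfl | ring
  have he : HasDerivAt (fun t : ℝ => Real.exp (-(s*t))) (Real.exp (-(s*t)) * (-s)) t := h1.exp
  have htrig : HasDerivAt (fun t : ℝ => s * Real.sin t + Real.cos t)
      (s * Real.cos t - Real.sin t) t := by
    have := ((Real.hasDerivAt_sin t).const_mul s).add (Real.hasDerivAt_cos t)
    convert this using 1 <;> first | rfl | ring
  have hmul := he.mul htrig
  have := (hmul.div_const (1+s^2)).neg
  convert this using 1 <;> try rfl
  field_simp
  ring

lemma inner_integral (s x X : ℝ) :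
    (∫ t in x..X, Real.exp (-(s*t)) * Real.sin t) = P s x - P s X := by
  have h := intervalIntegral.integral_eq_sub_of_hasDerivAt
    (a := x) (b := X) (f := fun t => -P s t) (f' := fun t => Real.exp (-(s*t)) * Real.sin t)
    (fun t _ => inner_deriv s t)
    (by apply Continuous.intervalIntegrable
        exact (Real.continuous_exp.comp (by continuity)).mul Real.continuous_sin)
  rw [h]; ring

lemma fubini_identity {x X : ℝ} (hx : 0 < x) (hxX : x ≤ X) :
    (∫ t in x..X, Real.sin t / t) = K x - K X := by
  have hX : 0 < X := lt_of_lt_of_le hx hxX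
  set g : ℝ × ℝ → ℝ := fun p => Real.exp (-(p.2 * p.1)) * Real.sin p.1 with hg
  have hcont : Continuous g := by
    apply Continuous.mul
    · exact Real.continuous_exp.comp (continuous_snd.mul continuous_fst).neg
    · exact Real.continuous_sin.comp continuous_fst
  set μ := volume.restrict (Ioc x X) with hμ
  set ν := volume.restrict (Ioi (0:ℝ)) with hν
  have hInt : Integrable g (μ.prod ν) := by
    rw [integrable_prod_iff hcont.aestronglyMeasurable]
    constructor
    · filter_upwards [ae_restrict_mem measurableSet_Ioc] with t ht
      exact (exp_integrableOn (hx.trans ht.1)).mul_const (Real.sin t)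
    · apply Integrable.congr (f := fun t => |Real.sin t| * (1/t))
      · apply Integrable.mono' (g := fun _ => (1:ℝ))
        · exact integrableOn_const measure_Ioc_lt_top.ne
        · exact ((Real.measurable_sin.abs).mul (measurable_const.div measurable_id)).aestronglyMeasurable
        · filter_upwards [ae_restrict_mem measurableSet_Ioc] with t ht
          have ht0 : 0 < t := hx.trans ht.1
          rw [Real.norm_eq_abs,
            abs_of_nonneg (mul_nonneg (abs_nonneg _) (one_div_nonneg.2 ht0.le))]
          rw [mul_one_div, div_le_one ht0]
          calc |Real.sin t| ≤ |t| := Real.abs_sin_le_abs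
            _ = t := abs_of_pos ht0
      · filter_upwards [ae_restrict_mem measurableSet_Ioc] with t ht
        have ht0 : 0 < t := hx.trans ht.1
        have h7 : (fun s => ‖g (t, s)‖) = fun s => Real.exp (-(s*t)) * |Real.sin t| := by
          funext s
          rw [hg]
          simp only [Real.norm_eq_abs, abs_mul, Real.abs_exp]
        rw [show (∫ s, ‖g (t, s)‖ ∂ν) = ∫ s, Real.exp (-(s*t)) * |Real.sin t| ∂ν from by rw [h7],
          MeasureTheory.integral_mul_const, exp_integral ht0]
        ring
  have step1 : (∫ t, Real.sin t / t ∂μ) = ∫ t, (∫ s, g (t, s) ∂ν) ∂μ := by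
    apply setIntegral_congr_fun measurableSet_Ioc
    intro t ht
    have ht0 : 0 < t := hx.trans ht.1
    show Real.sin t / t = ∫ s, g (t, s) ∂ν
    have h7 : (fun s => g (t, s)) = fun s => Real.exp (-(s*t)) * Real.sin t := by
      funext s; rw [hg]
    rw [show (∫ s, g (t, s) ∂ν) = ∫ s, Real.exp (-(s*t)) * Real.sin t ∂ν from by rw [h7],
      MeasureTheory.integral_mul_const, exp_integral ht0]
    ring
  have step2 : (∫ t, (∫ s, g (t, s) ∂ν) ∂μ) = ∫ s, (∫ t, g (t, s) ∂μ) ∂ν :=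
    integral_integral_swap hInt
  have step3 : (∫ s, (∫ t, g (t, s) ∂μ) ∂ν) = ∫ s, (P s x - P s X) ∂ν := by
    apply MeasureTheory.integral_congr_ae
    apply Eventually.of_forall
    intro s
    show (∫ t, g (t, s) ∂μ) = P s x - P s X
    have : (∫ t, g (t, s) ∂μ) = ∫ t in x..X, Real.exp (-(s*t)) * Real.sin t := by
      rw [intervalIntegral.integral_of_le hxX]
    rw [this, inner_integral]
  have step4 : (∫ s, (P s x - P s X) ∂ν) = K x - K X :=
    integral_sub (P_integrableOn hx) (P_integrableOn hX)
  rw [intervalIntegral.integral_of_le hxX]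
  calc (∫ t, Real.sin t / t ∂μ) = _ := step1
    _ = _ := step2
    _ = _ := step3
    _ = K x - K X := step4


lemma Si_sub {x X : ℝ} (hx : 0 < x) (hxX : x ≤ X) : Si X - Si x = K x - K X := by
  have h : Si X - Si x = ∫ t in x..X, Real.sin t / t := by
    unfold Si
    rw [← intervalIntegral.integral_interval_sub_left (sinc_intervalIntegrable 0 X)
      (sinc_intervalIntegrable 0 x)]
  rw [h, fubini_identity hx hxX]

lemma Si_add_K_const {x : ℝ} (hx : 0 < x) : Si x + K x = Si 1 + K 1 := by
  rcases le_total x 1 with h | h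
  · have := Si_sub hx h
    linarith
  · have := Si_sub one_pos h
    linarith

lemma P_continuous_x (s : ℝ) : Continuous (fun x => P s x) := by
  unfold P
  apply Continuous.div
  · exact (Real.continuous_exp.comp (continuous_const.mul continuous_id).neg).mul
      ((continuous_const.mul Real.continuous_sin).add Real.continuous_cos)
  · exact continuous_const
  · intro x; positivity

lemma K_tendsto : Tendsto (fun n : ℕ => K ((1:ℝ)/(n+1))) atTop (𝓝 (π/2)) := by
  have key := MeasureTheory.tendsto_integral_of_dominated_convergence
    (μ := volume.restrict (Ioi (0:ℝ)))
    (F := fun (n : ℕ) (s : ℝ) => P s ((1:ℝ)/(n+1)))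
    (f := fun s : ℝ => (1+s^2)⁻¹)
    (bound := fun s : ℝ => 2*(1+s^2)⁻¹)
    (fun n => (P_continuous ((1:ℝ)/(n+1))).aestronglyMeasurable)
    ((integrable_inv_one_add_sq.const_mul 2).restrict)
    (fun n => by
      filter_upwards [ae_restrict_mem measurableSet_Ioi] with s hs
      rw [Real.norm_eq_abs]
      exact P_abs_le_bound (le_of_lt hs) (by positivity))
    (by
      filter_upwards [ae_restrict_mem measurableSet_Ioi] with s _
      have hc : Continuous (fun x => P s x) := P_continuous_x s
      have h0 : Tendsto (fun n : ℕ => (1:ℝ)/(n+1)) atTop (𝓝 0) :=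
        tendsto_one_div_add_atTop_nhds_zero_nat
      have := (hc.tendsto 0).comp h0
      have hP0 : P s 0 = (1+s^2)⁻¹ := by
        unfold P; simp
      rwa [hP0] at this)
  have : (∫ s in Ioi (0:ℝ), (1+s^2)⁻¹) = π/2 := by
    rw [integral_Ioi_inv_one_add_sq]
    simp
  rwa [this] at key

lemma Si_add_K {x : ℝ} (hx : 0 < x) : Si x + K x = π/2 := by
  have hconst := Si_add_K_const hx
  suffices h : Si 1 + K 1 = π/2 by linarith
  have hSi0 : Si 0 = 0 := intervalIntegral.integral_same
  have hS : Tendsto (fun n : ℕ => Si ((1:ℝ)/(n+1))) atTop (𝓝 0) := by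
    have := (Si_continuous.tendsto 0).comp tendsto_one_div_add_atTop_nhds_zero_nat
    rwa [hSi0] at this
  have hsum : Tendsto (fun n : ℕ => Si ((1:ℝ)/(n+1)) + K ((1:ℝ)/(n+1))) atTop (𝓝 (0 + π/2)) :=
    hS.add K_tendsto
  have heq : (fun n : ℕ => Si ((1:ℝ)/(n+1)) + K ((1:ℝ)/(n+1))) = fun _ => Si 1 + K 1 := by
    funext n
    exact Si_add_K_const (by positivity)
  rw [heq] at hsum
  have := tendsto_nhds_unique tendsto_const_nhds hsum
  linarith

lemma tail_pos {x : ℝ} (hx : 0 < x) : |Si x - π/2| ≤ 1/x := by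
  have h := Si_add_K hx
  have : Si x - π/2 = -K x := by linarith
  rw [this, abs_neg]
  exact K_abs_le hx


lemma tail_neg {x : ℝ} (hx : x < 0) : |Si x + π/2| ≤ 1/(-x) := by
  have hpos : 0 < -x := by linarith
  have hodd : Si (-(-x)) = -Si (-x) := Si_neg (-x)
  rw [neg_neg] at hodd
  have h := tail_pos hpos
  have : Si x + π/2 = -(Si (-x) - π/2) := by rw [hodd]; ring
  rw [this, abs_neg]
  exact h

lemma main_nonneg {x : ℝ} (hx : 0 ≤ x) : |Si x| ≤ Si π := by
  have hSi0 : Si 0 = 0 := intervalIntegral.integral_same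
  have hpi_num := Real.pi_gt_d6
  have hge := Si_pi_ge_num
  rcases le_or_gt x π with hle | hgt
  · have h1 : Si 0 ≤ Si x := Si_mono_aux le_rfl hx hle
    have h2 : Si x ≤ Si π := Si_mono_aux hx hle le_rfl
    rw [abs_of_nonneg (by linarith [hSi0 ▸ h1])]
    exact h2
  · rcases le_or_gt x 4 with hle4 | hgt4
    · have h2pi : x ≤ 2*π := by linarith
      have h1 : Si x ≤ Si π := Si_anti_aux le_rfl hgt.le h2pi
      have h2 : Si 4 ≤ Si x := Si_anti_aux hgt.le hle4 (by linarith)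
      have h3 : |Si 4 - π/2| ≤ 1/4 := by
        have := tail_pos (show (0:ℝ) < 4 by norm_num)
        simpa using this
      have h4 : 0 ≤ Si 4 := by
        have := abs_le.1 h3
        linarith [this.1]
      rw [abs_of_nonneg (by linarith)]
      exact h1
    · have h3 : |Si x - π/2| ≤ 1/x := tail_pos (by linarith)
      have h4 : 1/x ≤ 1/4 := by
        apply one_div_le_one_div_of_le <;> linarith
      have h5 := abs_le.1 h3
      rw [abs_of_nonneg (by linarith [h5.1])]
      linarith [h5.2]

end SiAux

theorem stmt15 :
    (∀ x : ℝ, |Si x| ≤ Si Real.pi) ∧ Si Real.pi ≤ 2 ∧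
    (∀ x : ℝ, 0 < x → |Si x - Real.pi / 2| ≤ 1 / x) ∧
    (∀ x : ℝ, x < 0 → |Si x + Real.pi / 2| ≤ 1 / (-x)) := by
  refine ⟨?_, Si_pi_le_two, fun x hx => tail_pos hx, fun x hx => tail_neg hx⟩
  intro x
  rcases le_or_gt 0 x with hx | hx
  · exact main_nonneg hx
  · have : Si (-(-x)) = -Si (-x) := Si_neg (-x)
    rw [neg_neg] at this
    rw [this, abs_neg]
    exact main_nonneg (by linarith)
end

section
/- Let g: R → R be monotonic, bounded, and positive, and k ∈ L^1_loc(R, R). Suppose there exist N > 0 and α_N, β_N > 0 such that |∫_I k| ≤ α_N for all intervals I ⊆ [−N, N], and |∫_I k| ≤ β_N for all bounded intervals I ⊆ R \ [−N, N]. Then for every x ∈ R, |(g*k)(x) − δ_N g(x−N)| ≤ |g(x+N) − g(x−N)| α_N + 4 ‖g‖_∞ β_N, where δ_N = ∫_{[−N,N]} k(y) dy. -/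
open MeasureTheory intervalIntegral

open Set

lemma bonnet_core (h k : ℝ → ℝ) (hh : Antitone h) {a b : ℝ} (hab : a ≤ b)
    (hb0 : h b = 0) (hk : IntegrableOn k (Set.Ioc a b))
    {C : ℝ} (hC : 0 ≤ C)
    (hK : ∀ c, a ≤ c → c ≤ b → |∫ y in a..c, k y| ≤ C) :
    |∫ y in Set.Ioc a b, h y * k y| ≤ h a * C := by
  set D := h a with hD
  have hD0 : 0 ≤ D := hb0 ▸ hh hab
  have hm : Measurable h := hh.measurable
  set F : ℝ → ℝ → ℝ := fun y t => if t < h y then k y else 0 with hF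
  -- step 1: inner integral in t
  have eq1 : ∀ y ∈ Set.Ioc a b, ∫ t in Set.Ioo 0 D, F y t = h y * k y := by
    intro y hy
    have hy0 : 0 ≤ h y := hb0 ▸ hh hy.2
    have hyD : h y ≤ D := hh hy.1.le
    have : (fun t => F y t) = fun t => (Set.Iio (h y)).indicator (fun _ => k y) t := by
      funext t; simp [hF, Set.indicator_apply]
    rw [this, integral_indicator_const _ measurableSet_Iio,
      measureReal_def, Measure.restrict_apply measurableSet_Iio]
    have : Set.Iio (h y) ∩ Set.Ioo 0 D = Set.Ioo 0 (h y) := by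
      ext t; constructor
      · rintro ⟨h1, h2, h3⟩; exact ⟨h2, h1⟩
      · rintro ⟨h1, h2⟩; exact ⟨h2, h1, lt_of_lt_of_le h2 hyD⟩
    rw [this, Real.volume_Ioo, sub_zero, ENNReal.toReal_ofReal hy0, smul_eq_mul, mul_comm]
  -- step 2: Fubini
  set μ := volume.restrict (Set.Ioc a b)
  set ν := volume.restrict (Set.Ioo 0 D)
  have hS : MeasurableSet {p : ℝ × ℝ | p.2 < h p.1} :=
    measurableSet_lt measurable_snd (hm.comp measurable_fst)
  have hFi : Integrable (Function.uncurry F) (μ.prod ν) := by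
    have hkf : AEStronglyMeasurable (fun p : ℝ × ℝ => k p.1) (μ.prod ν) :=
      hk.aestronglyMeasurable.comp_fst
    have hsm : AEStronglyMeasurable (Function.uncurry F) (μ.prod ν) := by
      have : Function.uncurry F = {p : ℝ × ℝ | p.2 < h p.1}.indicator (fun p => k p.1) := by
        funext p; simp [hF, Function.uncurry, Set.indicator_apply]
      rw [this]; exact hkf.indicator hS
    have hint : Integrable (fun p : ℝ × ℝ => |k p.1| * (fun _ : ℝ => (1:ℝ)) p.2) (μ.prod ν) :=
      hk.abs.mul_prod (integrable_const 1)
    refine hint.mono' hsm ?_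
    filter_upwards with p
    simp only [Function.uncurry, hF, mul_one, Real.norm_eq_abs]
    split <;> simp [abs_nonneg]
  have swap := integral_integral_swap hFi
  -- LHS equals target integral
  have lhs_eq : ∫ y, ∫ t, F y t ∂ν ∂μ = ∫ y in Set.Ioc a b, h y * k y :=
    setIntegral_congr_fun measurableSet_Ioc eq1
  -- step 3: bound inner y-integral for each t
  have inner_bound : ∀ t ∈ Set.Ioo 0 D, ‖∫ y, F y t ∂μ‖ ≤ C := by
    intro t ht
    set U := {y : ℝ | t < h y} with hU
    have hUm : MeasurableSet U := measurableSet_lt measurable_const hm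
    have haU : a ∈ U := ht.2
    have hUb : ∀ y ∈ U, y < b := by
      intro y hy
      by_contra hc
      push_neg at hc
      exact absurd (lt_of_lt_of_le hy (hb0 ▸ hh hc)) (not_lt.2 ht.1.le)
    have hUbdd : BddAbove U := ⟨b, fun y hy => (hUb y hy).le⟩
    set c := sSup U with hc
    have hac : a ≤ c := le_csSup hUbdd haU
    have hcb : c ≤ b := csSup_le ⟨a, haU⟩ (fun y hy => (hUb y hy).le)
    have key : ∫ y, F y t ∂μ = ∫ y in a..c, k y := by
      have e1 : (fun y => F y t) = fun y => U.indicator k y := by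
        funext y; simp [hF, hU, Set.indicator_apply]
      rw [intervalIntegral.integral_of_le hac]
      calc ∫ y, F y t ∂μ = ∫ y in Set.Ioc a b ∩ U, k y := by
            rw [e1, setIntegral_indicator hUm]
        _ = ∫ y in Set.Ioc a c, k y := by
            apply setIntegral_congr_set
            have h1 : Set.Ioc a b ∩ U ⊆ Set.Ioc a c :=
              fun y hy => ⟨hy.1.1, le_csSup hUbdd hy.2⟩
            have h2 : Set.Ioo a c ⊆ Set.Ioc a b ∩ U := by
              intro y hy
              obtain ⟨u, hu, hyu⟩ := exists_lt_of_lt_csSup ⟨a, haU⟩ hy.2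
              exact ⟨⟨hy.1, le_of_lt (lt_of_lt_of_le (hUb y (lt_of_lt_of_le hu (hh hyu.le))) le_rfl)⟩,
                lt_of_lt_of_le hu (hh hyu.le)⟩
            rw [Filter.eventuallyEq_set]
            have hnull : volume ({c} : Set ℝ) = 0 := measure_singleton c
            filter_upwards [measure_eq_zero_iff_ae_notMem.1 hnull] with y hy
            constructor
            · intro hyU; exact h1 hyU
            · intro hyc
              have : y ∈ Set.Ioo a c := ⟨hyc.1, lt_of_le_of_ne hyc.2 (fun he => hy (he ▸ rfl))⟩
              exact h2 this
    rw [key, Real.norm_eq_abs]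
    exact hK c hac hcb
  -- step 4: conclude
  rw [← lhs_eq, swap]
  have hfin : volume (Set.Ioo (0:ℝ) D) < ⊤ := by
    rw [Real.volume_Ioo]; exact ENNReal.ofReal_lt_top
  have := norm_setIntegral_le_of_norm_le_const (μ := volume) (f := fun t => ∫ y, F y t ∂μ)
    hfin inner_bound
  rw [Real.norm_eq_abs] at this
  refine this.trans ?_
  rw [measureReal_def, Real.volume_Ioo, sub_zero, ENNReal.toReal_ofReal hD0, mul_comm]

lemma seg_bound (h k : ℝ → ℝ) (hh : Antitone h ∨ Monotone h) {a b : ℝ} (hab : a ≤ b)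
    (hk : IntegrableOn k (Set.Ioc a b))
    (hhk : IntegrableOn (fun y => h y * k y) (Set.Ioc a b))
    {C : ℝ} (hC : 0 ≤ C)
    (hK : ∀ c, a ≤ c → c ≤ b → |∫ y in a..c, k y| ≤ C) :
    |(∫ y in a..b, h y * k y) - h b * ∫ y in a..b, k y| ≤ |h a - h b| * C := by
  rw [intervalIntegral.integral_of_le hab, intervalIntegral.integral_of_le hab]
  have e : (∫ y in Set.Ioc a b, h y * k y) - h b * ∫ y in Set.Ioc a b, k y
      = ∫ y in Set.Ioc a b, (h y - h b) * k y := by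
    rw [show (fun y => (h y - h b) * k y) = fun y => h y * k y - h b * k y by
      funext y; ring]
    rw [integral_sub hhk (hk.const_mul (h b)), MeasureTheory.integral_const_mul]
  rw [e]
  rcases hh with hh | hh
  · have hab' : h b ≤ h a := hh hab
    have := bonnet_core (fun y => h y - h b) k
      (fun u v huv => sub_le_sub_right (hh huv) _) hab (sub_self _) hk hC hK
    simpa [abs_of_nonneg (sub_nonneg.2 hab')] using this
  · have hab' : h a ≤ h b := hh hab
    have := bonnet_core (fun y => h b - h y) k
      (fun u v huv => sub_le_sub_left (hh huv) _) hab (sub_self _) hk hC hK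
    have e2 : ∫ y in Set.Ioc a b, (h b - h y) * k y
        = -∫ y in Set.Ioc a b, (h y - h b) * k y := by
      rw [← MeasureTheory.integral_neg]; congr 1; funext y; ring
    rw [e2, abs_neg] at this
    calc |∫ y in Set.Ioc a b, (h y - h b) * k y| ≤ (h b - h a) * C := this
      _ = |h a - h b| * C := by rw [abs_sub_comm, abs_of_nonneg (sub_nonneg.2 hab')]

theorem stmt16 (g : ℝ → ℝ) (hmono : Monotone g ∨ Antitone g)
    (hpos : ∀ x, 0 < g x) (M : ℝ) (hM : ∀ x, g x ≤ M)
    (k : ℝ → ℝ) (hk : LocallyIntegrable k (volume : Measure ℝ))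
    (N : ℝ) (hN : 0 < N) (αN βN : ℝ) (hαN : 0 < αN) (hβN : 0 < βN)
    (hin : ∀ a b : ℝ, a ≤ b → -N ≤ a → b ≤ N → |∫ y in a..b, k y| ≤ αN)
    (hout : ∀ a b : ℝ, a ≤ b → (b ≤ -N ∨ N ≤ a) → |∫ y in a..b, k y| ≤ βN)
    (hconv : ∀ x : ℝ, Integrable (fun y => g (x - y) * k y) volume) :
    ∀ x : ℝ,
      |(∫ y, g (x - y) * k y) - (∫ y in (-N)..N, k y) * g (x - N)| ≤
        |g (x + N) - g (x - N)| * αN + 4 * M * βN := by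
  intro x
  set h : ℝ → ℝ := fun y => g (x - y) with hh_def
  have hM0 : 0 < M := lt_of_lt_of_le (hpos 0) (hM 0)
  have hNN : -N ≤ N := by linarith
  have hh : Antitone h ∨ Monotone h := by
    rcases hmono with hg | hg
    · exact Or.inl (fun u v huv => hg (by linarith))
    · exact Or.inr (fun u v huv => hg (by linarith))
  have habs : ∀ y, |h y| ≤ M := fun y => (abs_of_pos (hpos _)).le.trans (hM _)
  have hdiff : ∀ u v : ℝ, |h u - h v| ≤ M := by
    intro u v
    rw [abs_sub_le_iff]
    constructor <;> nlinarith [hpos (x - u), hpos (x - v), hM (x - u), hM (x - v)]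
  have hint : Integrable (fun y => h y * k y) volume := hconv x
  have hkInt : ∀ a b : ℝ, IntegrableOn k (Set.Ioc a b) volume := fun a b =>
    (hk.integrableOn_isCompact isCompact_Icc).mono_set Set.Ioc_subset_Icc_self
  -- tails
  have right_tail : |∫ y in Set.Ioi N, h y * k y| ≤ 2 * M * βN := by
    have t := (intervalIntegral_tendsto_integral_Ioi N hint.integrableOn Filter.tendsto_id).abs
    refine le_of_tendsto t ?_
    filter_upwards [Filter.eventually_ge_atTop N] with R hR
    simp only [id]
    have s1 := seg_bound h k hh hR (hkInt N R) hint.integrableOn hβN.le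
      (fun c h1 h2 => hout N c h1 (Or.inr le_rfl))
    have s2 : |h R * ∫ y in N..R, k y| ≤ M * βN := by
      rw [abs_mul]
      exact mul_le_mul (habs R) (hout N R hR (Or.inr le_rfl)) (abs_nonneg _) hM0.le
    have tri : ∀ X B : ℝ, |X| ≤ |X - B| + |B| := fun X B => by
      simpa using abs_add_le (X - B) B
    calc |∫ y in N..R, h y * k y|
        ≤ |(∫ y in N..R, h y * k y) - h R * ∫ y in N..R, k y| + |h R * ∫ y in N..R, k y| :=
          tri _ _
      _ ≤ M * βN + M * βN := add_le_add (s1.trans (mul_le_mul_of_nonneg_right (hdiff N R) hβN.le)) s2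
      _ = 2 * M * βN := by ring
  have left_tail : |∫ y in Set.Iic (-N), h y * k y| ≤ 2 * M * βN := by
    have t := (intervalIntegral_tendsto_integral_Iic (-N) hint.integrableOn Filter.tendsto_id).abs
    refine le_of_tendsto t ?_
    filter_upwards [Filter.eventually_le_atBot (-N)] with R hR
    simp only [id]
    have s1 := seg_bound h k hh hR (hkInt R (-N)) hint.integrableOn hβN.le
      (fun c h1 h2 => hout R c h1 (Or.inl h2))
    have s2 : |h (-N) * ∫ y in R..(-N), k y| ≤ M * βN := by
      rw [abs_mul]
      exact mul_le_mul (habs _) (hout R (-N) hR (Or.inl le_rfl)) (abs_nonneg _) hM0.le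
    have tri : ∀ X B : ℝ, |X| ≤ |X - B| + |B| := fun X B => by
      simpa using abs_add_le (X - B) B
    calc |∫ y in R..(-N), h y * k y|
        ≤ |(∫ y in R..(-N), h y * k y) - h (-N) * ∫ y in R..(-N), k y|
            + |h (-N) * ∫ y in R..(-N), k y| := tri _ _
      _ ≤ M * βN + M * βN := add_le_add (s1.trans (mul_le_mul_of_nonneg_right (hdiff R (-N)) hβN.le)) s2
      _ = 2 * M * βN := by ring
  -- middle
  have mid : |(∫ y in (-N)..N, h y * k y) - h N * ∫ y in (-N)..N, k y|
      ≤ |g (x + N) - g (x - N)| * αN := by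
    have s1 := seg_bound h k hh hNN (hkInt (-N) N) hint.integrableOn hαN.le
      (fun c h1 h2 => hin (-N) c h1 le_rfl h2)
    have e : h (-N) = g (x + N) := by simp [hh_def, sub_neg_eq_add]
    rw [e] at s1
    exact s1
  -- decomposition
  have d1 : (∫ y, h y * k y)
      = (∫ y in Set.Iic (-N), h y * k y) + ∫ y in Set.Ioi (-N), h y * k y :=
    (integral_Iic_add_Ioi hint.integrableOn hint.integrableOn).symm
  have d2 : (∫ y in Set.Ioi (-N), h y * k y)
      = (∫ y in Set.Ioc (-N) N, h y * k y) + ∫ y in Set.Ioi N, h y * k y := by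
    rw [← setIntegral_union (Set.Ioc_disjoint_Ioi le_rfl) measurableSet_Ioi
      hint.integrableOn hint.integrableOn, Set.Ioc_union_Ioi_eq_Ioi hNN]
  have d3 : (∫ y in Set.Ioc (-N) N, h y * k y) = ∫ y in (-N)..N, h y * k y :=
    (intervalIntegral.integral_of_le hNN).symm
  rw [d1, d2, d3]
  have key : (∫ y in Set.Iic (-N), h y * k y) + ((∫ y in (-N)..N, h y * k y)
        + ∫ y in Set.Ioi N, h y * k y) - (∫ y in (-N)..N, k y) * g (x - N)
      = ((∫ y in (-N)..N, h y * k y) - h N * ∫ y in (-N)..N, k y)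
        + ((∫ y in Set.Iic (-N), h y * k y) + ∫ y in Set.Ioi N, h y * k y) := by
    simp only [hh_def]; ring
  rw [key]
  calc |_| ≤ |(∫ y in (-N)..N, h y * k y) - h N * ∫ y in (-N)..N, k y|
        + |(∫ y in Set.Iic (-N), h y * k y) + ∫ y in Set.Ioi N, h y * k y| := abs_add_le _ _
    _ ≤ |g (x + N) - g (x - N)| * αN
        + (|∫ y in Set.Iic (-N), h y * k y| + |∫ y in Set.Ioi N, h y * k y|) :=
          add_le_add mid (abs_add_le _ _)
    _ ≤ |g (x + N) - g (x - N)| * αN + (2 * M * βN + 2 * M * βN) :=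
          add_le_add le_rfl (add_le_add left_tail right_tail)
    _ = |g (x + N) - g (x - N)| * αN + 4 * M * βN := by ring
end

section
/- For every interval I ⊆ R of positive length, the functional L^2(I, C) → R, f ↦ ‖f ⋆ f‖_{L^2}, is not coercive: there exists a sequence (f_n) in L^2(I, C) with ‖f_n‖_{L^2} → ∞ while ‖f_n ⋆ f_n‖_{L^2} stays bounded. -/
open MeasureTheory Complex Filter

/-- Autocorrelation on `ℝ`: `(f ⋆ f)(x) = ∫ f*(y) f(x+y) dy`. -/
noncomputable def autocorr (f : ℝ → ℂ) (x : ℝ) : ℂ :=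
  ∫ y, (starRingEnd ℂ) (f y) * f (x + y)

open scoped ENNReal NNReal

namespace S17
noncomputable def chirp (a b : ℝ) (n : ℕ) : ℝ → ℂ :=
  Set.indicator (Set.Icc a b)
    (fun x => ((((n:ℝ)+1) ^ ((8:ℝ)⁻¹) : ℝ) : ℂ) * Complex.exp (Complex.I * (((n:ℝ)+1):ℂ) * (x:ℂ)^2))

lemma norm_exp_im (t : ℝ) : ‖Complex.exp ((t:ℂ) * Complex.I)‖ = 1 := by
  simp

lemma norm_chirp (a b : ℝ) (n : ℕ) (x : ℝ) :
    ‖chirp a b n x‖ = Set.indicator (Set.Icc a b) (fun _ => (((n:ℝ)+1) ^ ((8:ℝ)⁻¹) : ℝ)) x := by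
  rw [chirp, norm_indicator_eq_indicator_norm]
  by_cases hx : x ∈ Set.Icc a b
  · rw [Set.indicator_of_mem hx, Set.indicator_of_mem hx, norm_mul,
      show Complex.I * (((n:ℝ)+1):ℂ) * (x:ℂ)^2 = ((((n:ℝ)+1) * x^2 : ℝ) : ℂ) * Complex.I by
        push_cast; ring, norm_exp_im, mul_one, Complex.norm_real,
      Real.norm_eq_abs, _root_.abs_of_nonneg (Real.rpow_nonneg (by positivity) _)]
  · rw [Set.indicator_of_notMem hx, Set.indicator_of_notMem hx]

lemma elpnorm_chirp (a b : ℝ) (n : ℕ) :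
    eLpNorm (chirp a b n) 2 volume
      = ‖(((n:ℝ)+1) ^ ((8:ℝ)⁻¹) : ℝ)‖₊ * (volume (Set.Icc a b)) ^ ((1:ℝ)/2) := by
  rw [eLpNorm_congr_norm_ae (g := Set.indicator (Set.Icc a b)
      (fun _ => (((n:ℝ)+1) ^ ((8:ℝ)⁻¹) : ℝ))) (Filter.Eventually.of_forall (fun x => by
    rw [norm_chirp, norm_indicator_eq_indicator_norm]
    congr 1
    ext y
    rw [Real.norm_eq_abs, _root_.abs_of_nonneg (Real.rpow_nonneg (by positivity) _)])),
    eLpNorm_indicator_const measurableSet_Icc two_ne_zero ENNReal.ofNat_ne_top]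
  norm_num
  rfl

lemma memLp_chirp (a b : ℝ) (n : ℕ) : MemLp (chirp a b n) 2 (volume : Measure ℝ) := by
  constructor
  · exact (Continuous.aestronglyMeasurable (by fun_prop)).indicator measurableSet_Icc
  · rw [elpnorm_chirp]
    refine ENNReal.mul_lt_top ENNReal.coe_lt_top (ENNReal.rpow_lt_top_of_nonneg (by norm_num) ?_)
    simp [Real.volume_Icc]

lemma chirp_zero (a b : ℝ) (n : ℕ) (x : ℝ) (hx : x ∉ Set.Icc a b) : chirp a b n x = 0 :=
  Set.indicator_of_notMem hx _

lemma tendsto_chirp_norm (a b : ℝ) (hab : a < b) :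
    Tendsto (fun n => (eLpNorm (chirp a b n) 2 volume).toReal) atTop atTop := by
  have key : ∀ n : ℕ, (eLpNorm (chirp a b n) 2 volume).toReal
      = (((n:ℝ)+1) ^ ((8:ℝ)⁻¹)) * ((b - a) ^ ((1:ℝ)/2)) := by
    intro n
    rw [elpnorm_chirp, ENNReal.toReal_mul, Real.volume_Icc, ← ENNReal.toReal_rpow,
      ENNReal.toReal_ofReal (by linarith)]
    have : ((n:ℝ)+1) ^ ((8:ℝ)⁻¹) ≥ 0 := Real.rpow_nonneg (by positivity) _
    simp [Real.norm_eq_abs, _root_.abs_of_nonneg this]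
  simp only [key]
  apply Tendsto.atTop_mul_const (Real.rpow_pos_of_pos (by linarith) _)
  exact (tendsto_rpow_atTop (by norm_num)).comp
    (tendsto_atTop_add_const_right _ 1 tendsto_natCast_atTop_atTop)
lemma autocorr_chirp (a b : ℝ) (n : ℕ) (x : ℝ) :
    autocorr (chirp a b n) x
      = (((((n:ℝ)+1) ^ ((4:ℝ)⁻¹) : ℝ) : ℂ) * Complex.exp (Complex.I * (((n:ℝ)+1):ℂ) * (x:ℂ)^2))
        * ∫ y in Set.Icc (max a (a - x)) (min b (b - x)),
            Complex.exp (2 * Complex.I * (((n:ℝ)+1):ℂ) * (x:ℂ) * (y:ℂ)) := by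
  have hS : ∀ y, y ∉ Set.Icc (max a (a - x)) (min b (b - x)) →
      (starRingEnd ℂ) (chirp a b n y) * chirp a b n (x + y) = 0 := by
    intro y hy
    by_cases h1 : y ∈ Set.Icc a b
    · by_cases h2 : x + y ∈ Set.Icc a b
      · exfalso
        exact hy ⟨max_le h1.1 (by linarith [h2.1]),
          le_min h1.2 (by linarith [h2.2])⟩
      · rw [chirp, Set.indicator_of_notMem h2, mul_zero]
      
    · rw [chirp, Set.indicator_of_notMem h1, map_zero, zero_mul]
  rw [autocorr, ← setIntegral_eq_integral_of_forall_compl_eq_zero hS,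
    setIntegral_congr_fun measurableSet_Icc
      (g := fun y : ℝ => (((((n:ℝ)+1) ^ ((4:ℝ)⁻¹) : ℝ) : ℂ)
          * Complex.exp (Complex.I * (((n:ℝ)+1):ℂ) * (x:ℂ)^2))
        * Complex.exp (2 * Complex.I * (((n:ℝ)+1):ℂ) * (x:ℂ) * (y:ℂ))) ?_,
    integral_const_mul]
  intro y hy
  have h1 : y ∈ Set.Icc a b := ⟨le_trans (le_max_left _ _) hy.1, le_trans hy.2 (min_le_left _ _)⟩
  have h2 : x + y ∈ Set.Icc a b :=
    ⟨by have := le_trans (le_max_right _ _) hy.1; linarith,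
     by have := le_trans hy.2 (min_le_right _ _); linarith⟩
  simp only [chirp, Set.indicator_of_mem h1, Set.indicator_of_mem h2]
  rw [map_mul, Complex.conj_ofReal, ← Complex.exp_conj,
    show (starRingEnd ℂ) (Complex.I * (((n:ℝ)+1):ℂ) * (y:ℂ)^2)
        = -(Complex.I * (((n:ℝ)+1):ℂ) * (y:ℂ)^2) by
      simp [map_mul, Complex.conj_I, Complex.conj_ofReal]]
  calc ((((n:ℝ)+1) ^ ((8:ℝ)⁻¹) : ℝ) : ℂ) * Complex.exp (-(Complex.I * (((n:ℝ)+1):ℂ) * (y:ℂ)^2))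
        * (((((n:ℝ)+1) ^ ((8:ℝ)⁻¹) : ℝ) : ℂ)
          * Complex.exp (Complex.I * (((n:ℝ)+1):ℂ) * (((x+y : ℝ)):ℂ)^2))
      = ((((n:ℝ)+1) ^ ((8:ℝ)⁻¹) * (((n:ℝ)+1) ^ ((8:ℝ)⁻¹)) : ℝ) : ℂ)
        * Complex.exp (-(Complex.I * (((n:ℝ)+1):ℂ) * (y:ℂ)^2)
            + Complex.I * (((n:ℝ)+1):ℂ) * (((x:ℂ)+(y:ℂ)))^2) := by
        push_cast
        rw [Complex.exp_add]
        ring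
    _ = _ := by
        rw [← Real.rpow_add (by positivity), show ((8:ℝ)⁻¹ + (8:ℝ)⁻¹) = (4:ℝ)⁻¹ by norm_num,
          show -(Complex.I * (((n:ℝ)+1):ℂ) * (y:ℂ)^2)
              + Complex.I * (((n:ℝ)+1):ℂ) * (((x:ℂ)+(y:ℂ)))^2
            = Complex.I * (((n:ℝ)+1):ℂ) * (x:ℂ)^2
              + 2 * Complex.I * (((n:ℝ)+1):ℂ) * (x:ℂ) * (y:ℂ) by ring,
          Complex.exp_add]
        ring

lemma autocorr_chirp_zero (a b : ℝ) (n : ℕ) (x : ℝ) (hx : b - a < |x|) :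
    autocorr (chirp a b n) x = 0 := by
  rw [autocorr_chirp]
  have he : Set.Icc (max a (a - x)) (min b (b - x)) = ∅ := by
    apply Set.Icc_eq_empty
    intro h
    rcases le_or_gt 0 x with h0 | h0
    · rw [_root_.abs_of_nonneg h0] at hx
      have h1 := le_trans (le_trans (le_max_left a (a-x)) h) (min_le_right b (b-x))
      linarith
    · rw [_root_.abs_of_neg h0] at hx
      have h1 := le_trans (le_trans (le_max_right a (a-x)) h) (min_le_left b (b-x))
      linarith
  rw [he]
  simp
lemma integrableOn_abs_rpow (L : ℝ) :
    IntegrableOn (fun t : ℝ => |t| ^ (-((2:ℝ)⁻¹))) (Set.Icc (-L) L) volume := by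
  by_cases hL : 0 ≤ L
  · have hr : IntegrableOn (fun t : ℝ => t ^ (-((2:ℝ)⁻¹))) (Set.Icc 0 L) volume := by
      rw [← intervalIntegrable_iff_integrableOn_Icc_of_le hL]
      exact intervalIntegral.intervalIntegrable_rpow' (by norm_num)
    have hr' : IntegrableOn (fun t : ℝ => |t| ^ (-((2:ℝ)⁻¹))) (Set.Icc 0 L) volume :=
      hr.congr_fun (fun t ht => by rw [_root_.abs_of_nonneg ht.1]) measurableSet_Icc
    have m : MeasurableEmbedding (Neg.neg : ℝ → ℝ) := (Homeomorph.neg ℝ).measurableEmbedding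
    have h2 : IntegrableOn (fun t : ℝ => |t| ^ (-((2:ℝ)⁻¹))) (Set.Icc (-L) 0)
        (Measure.map Neg.neg volume) := by
      rw [m.integrableOn_map_iff]
      have hpre : (Neg.neg : ℝ → ℝ) ⁻¹' Set.Icc (-L) 0 = Set.Icc 0 L := by
        ext t
        simp only [Set.mem_preimage, Set.mem_Icc]
        constructor <;> intro h <;> constructor <;> linarith [h.1, h.2]
      rw [hpre]
      exact hr'.congr_fun (fun t ht => by simp [Function.comp]) measurableSet_Icc
    rw [Measure.map_neg_eq_self] at h2
    exact (h2.union hr').mono_set (fun t ht => by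
      rcases le_total t 0 with h | h
      · exact Or.inl ⟨ht.1, h⟩
      · exact Or.inr ⟨h, ht.2⟩)
  · rw [Set.Icc_eq_empty (by intro h; push_neg at hL; linarith [le_trans (neg_nonneg.2 hL.le) h])]
    exact integrableOn_empty
lemma osc1 (a b : ℝ) (hab : a ≤ b) (N x : ℝ) :
    ‖∫ y in Set.Icc (max a (a - x)) (min b (b - x)),
        Complex.exp (2 * Complex.I * (N:ℂ) * (x:ℂ) * (y:ℂ))‖ ≤ b - a := by
  set c := max a (a - x); set d := min b (b - x)
  have h1 : ‖∫ y in Set.Icc c d, Complex.exp (2 * Complex.I * (N:ℂ) * (x:ℂ) * (y:ℂ))‖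
      ≤ 1 * (volume (Set.Icc c d)).toReal := by
    apply norm_setIntegral_le_of_norm_le_const (by simp [Real.volume_Icc])
    intro y _
    rw [show 2 * Complex.I * (N:ℂ) * (x:ℂ) * (y:ℂ) = ((2*N*x*y : ℝ) : ℂ) * Complex.I by
      push_cast; ring, Complex.norm_exp_ofReal_mul_I]
  rw [one_mul] at h1
  refine h1.trans ?_
  rw [Real.volume_Icc]
  rcases le_total (d - c) 0 with h | h
  · rw [ENNReal.ofReal_eq_zero.2 h]; simpa using hab
  · rw [ENNReal.toReal_ofReal h]
    have hc : a ≤ c := le_max_left _ _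
    have hd : d ≤ b := min_le_left _ _
    linarith

open intervalIntegral in
lemma osc2 (a b : ℝ) (N x : ℝ) (hN : 0 < N) (hx : x ≠ 0) :
    ‖∫ y in Set.Icc (max a (a - x)) (min b (b - x)),
        Complex.exp (2 * Complex.I * (N:ℂ) * (x:ℂ) * (y:ℂ))‖ ≤ 1 / (N * |x|) := by
  set c := max a (a - x); set d := min b (b - x)
  by_cases hcd : c ≤ d
  · rw [integral_Icc_eq_integral_Ioc, ← intervalIntegral.integral_of_le hcd]
    have hk : (2 * Complex.I * (N:ℂ) * (x:ℂ)) ≠ 0 := by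
      simp [Complex.ext_iff, hx, hN.ne']
    rw [show (fun y : ℝ => Complex.exp (2 * Complex.I * (N:ℂ) * (x:ℂ) * (y:ℂ)))
        = (fun y : ℝ => Complex.exp ((2 * Complex.I * (N:ℂ) * (x:ℂ)) * (y:ℂ))) by rfl,
      integral_exp_mul_complex hk]
    rw [norm_div]
    have hnum : ‖Complex.exp (2 * Complex.I * (N:ℂ) * (x:ℂ) * (d:ℂ))
        - Complex.exp (2 * Complex.I * (N:ℂ) * (x:ℂ) * (c:ℂ))‖ ≤ 2 := by
      refine (norm_sub_le _ _).trans ?_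
      have e1 : ‖Complex.exp (2 * Complex.I * (N:ℂ) * (x:ℂ) * (d:ℂ))‖ = 1 := by
        rw [show 2 * Complex.I * (N:ℂ) * (x:ℂ) * (d:ℂ) = ((2*N*x*d : ℝ) : ℂ) * Complex.I by
          push_cast; ring]
        simp [Complex.norm_exp]
      have e2 : ‖Complex.exp (2 * Complex.I * (N:ℂ) * (x:ℂ) * (c:ℂ))‖ = 1 := by
        rw [show 2 * Complex.I * (N:ℂ) * (x:ℂ) * (c:ℂ) = ((2*N*x*c : ℝ) : ℂ) * Complex.I by
          push_cast; ring]
        simp [Complex.norm_exp]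
      rw [e1, e2]; norm_num
    have hknorm : ‖(2 * Complex.I * (N:ℂ) * (x:ℂ))‖ = 2 * N * |x| := by
      simp [norm_mul, Complex.norm_real, Real.norm_eq_abs, abs_of_pos hN]
      try ring
    rw [hknorm]
    rw [div_le_div_iff₀ (by positivity) (by positivity)]
    calc ‖_ - _‖ * (N * |x|) ≤ 2 * (N * |x|) := by
          apply mul_le_mul_of_nonneg_right hnum (by positivity)
      _ = 1 * (2 * N * |x|) := by ring
  · rw [Set.Icc_eq_empty hcd]
    simp
    positivity

set_option maxHeartbeats 800000 in
lemma norm_autocorr_le (a b : ℝ) (hab : a < b) (n : ℕ) (x : ℝ) (hx0 : x ≠ 0) :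
    ‖autocorr (chirp a b n) x‖
      ≤ Set.indicator (Set.Icc (-(b-a)) (b-a))
          (fun t => (b-a) ^ ((3:ℝ)/4) * |t| ^ (-((4:ℝ)⁻¹))) x := by
  have hL : 0 < b - a := sub_pos.2 hab
  by_cases hm : x ∈ Set.Icc (-(b-a)) (b-a)
  · rw [Set.indicator_of_mem hm]
    have hN : (0:ℝ) < (n:ℝ)+1 := by positivity
    rw [autocorr_chirp, norm_mul, norm_mul, Complex.norm_real, Real.norm_eq_abs,
      _root_.abs_of_nonneg (Real.rpow_nonneg hN.le _),
      show Complex.I * (((n:ℝ)+1):ℂ) * (x:ℂ)^2 = ((((n:ℝ)+1)*x^2 : ℝ):ℂ) * Complex.I by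
        push_cast; ring,
      norm_exp_im, mul_one]
    have h1 := osc1 a b hab.le ((n:ℝ)+1) x
    have h2 := osc2 a b ((n:ℝ)+1) x hN hx0
    push_cast at h1 h2 ⊢
    set J := ‖∫ y in Set.Icc (max a (a - x)) (min b (b - x)),
        Complex.exp (2 * Complex.I * ((n:ℂ)+1) * (x:ℂ) * (y:ℂ))‖ with hJdef
    have h0 : (0:ℝ) ≤ J := norm_nonneg _
    have hsplit : J = J ^ ((3:ℝ)/4) * J ^ ((4:ℝ)⁻¹) := by
      rw [← Real.rpow_add' h0 (by norm_num)]
      norm_num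
    calc ((n:ℝ)+1) ^ ((4:ℝ)⁻¹) * J
        ≤ ((n:ℝ)+1) ^ ((4:ℝ)⁻¹)
            * ((b-a) ^ ((3:ℝ)/4) * (1/(((n:ℝ)+1)*|x|)) ^ ((4:ℝ)⁻¹)) := by
          refine mul_le_mul_of_nonneg_left ?_ (Real.rpow_nonneg hN.le _)
          rw [hsplit]
          exact mul_le_mul (Real.rpow_le_rpow h0 h1 (by norm_num))
            (Real.rpow_le_rpow h0 h2 (by norm_num)) (Real.rpow_nonneg h0 _)
            (Real.rpow_nonneg hL.le _)
      _ = (b-a) ^ ((3:ℝ)/4) * |x| ^ (-((4:ℝ)⁻¹)) := by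
          rw [one_div, Real.inv_rpow (by positivity), Real.mul_rpow hN.le (abs_nonneg x),
            mul_inv, ← Real.rpow_neg (abs_nonneg x)]
          have hne : ((n:ℝ)+1) ^ ((4:ℝ)⁻¹) ≠ 0 := by positivity
          field_simp
  · rw [Set.indicator_of_notMem hm, autocorr_chirp_zero a b n x ?_, norm_zero]
    have : ¬ |x| ≤ b - a := fun hc => hm (abs_le.1 hc)
    linarith [not_le.1 this]

theorem final (a b : ℝ) (hab : a < b) :
    ∃ f : ℕ → ℝ → ℂ,
      (∀ n, MemLp (f n) 2 (volume : Measure ℝ) ∧ ∀ x, x ∉ Set.Icc a b → f n x = 0) ∧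
      Tendsto (fun n => (eLpNorm (f n) 2 volume).toReal) atTop atTop ∧
      ∃ C : ℝ, ∀ n, (eLpNorm (autocorr (f n)) 2 volume).toReal ≤ C := by
  have hL : 0 < b - a := sub_pos.2 hab
  refine ⟨chirp a b, fun n => ⟨memLp_chirp a b n, chirp_zero a b n⟩,
    tendsto_chirp_norm a b hab, ?_⟩
  set g : ℝ → ℝ := Set.indicator (Set.Icc (-(b-a)) (b-a))
    (fun t => (b-a) ^ ((3:ℝ)/4) * |t| ^ (-((4:ℝ)⁻¹))) with hgdef
  set h : ℝ → ℝ := Set.indicator (Set.Icc (-(b-a)) (b-a))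
    (fun t => (b-a) ^ ((3:ℝ)/2) * |t| ^ (-((2:ℝ)⁻¹))) with hhdef
  have hinth : Integrable h volume := by
    rw [hhdef, integrable_indicator_iff measurableSet_Icc]
    exact (integrableOn_abs_rpow (b-a)).const_mul _
  have hpt : ∀ x : ℝ, ((‖g x‖₊ : ℝ≥0∞)) ^ (2:ℝ) = ENNReal.ofReal (h x) := by
    intro x
    by_cases hm : x ∈ Set.Icc (-(b-a)) (b-a)
    · simp only [hgdef, hhdef, Set.indicator_of_mem hm]
      have hg0 : (0:ℝ) ≤ (b-a) ^ ((3:ℝ)/4) * |x| ^ (-((4:ℝ)⁻¹)) := by positivity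
      rw [← enorm_eq_nnnorm, Real.enorm_eq_ofReal hg0, ENNReal.ofReal_rpow_of_nonneg hg0 (by norm_num)]
      congr 1
      rw [Real.mul_rpow (Real.rpow_nonneg hL.le _) (Real.rpow_nonneg (abs_nonneg x) _),
        ← Real.rpow_mul hL.le, ← Real.rpow_mul (abs_nonneg x)]
      norm_num
    · have e1 : g x = 0 := Set.indicator_of_notMem hm _
      have e2 : h x = 0 := Set.indicator_of_notMem hm _
      rw [e1, e2]
      simp
  have hae0 : ∀ᵐ x : ℝ, x ≠ (0:ℝ) := by
    rw [ae_iff]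
    have : {x : ℝ | ¬ x ≠ 0} = {0} := by ext; simp
    rw [this]
    exact Real.volume_singleton
  have hmain : ∀ n, eLpNorm (autocorr (chirp a b n)) 2 volume
      ≤ (ENNReal.ofReal (∫ x, h x)) ^ ((1:ℝ)/2) := by
    intro n
    have hb2 : eLpNorm (autocorr (chirp a b n)) 2 volume ≤ eLpNorm g 2 volume := by
      apply eLpNorm_mono_ae
      filter_upwards [hae0] with x hx
      refine (norm_autocorr_le a b hab n x hx).trans ?_
      rw [Real.norm_eq_abs]
      exact le_abs_self _
    refine hb2.trans (le_of_eq ?_)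
    rw [eLpNorm_eq_lintegral_rpow_enorm_toReal two_ne_zero ENNReal.ofNat_ne_top]
    have : ∫⁻ x, ((‖g x‖₊ : ℝ≥0∞)) ^ ((2:ℝ≥0∞).toReal) = ∫⁻ x, ENNReal.ofReal (h x) := by
      refine lintegral_congr fun x => ?_
      rw [ENNReal.toReal_ofNat]
      exact hpt x
    erw [this, ← ofReal_integral_eq_lintegral_ofReal hinth (Filter.Eventually.of_forall
      (fun x => Set.indicator_nonneg (fun t _ => by positivity) x))]
    norm_num
  refine ⟨((ENNReal.ofReal (∫ x, h x)) ^ ((1:ℝ)/2)).toReal, fun n => ?_⟩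
  exact ENNReal.toReal_mono
    (ENNReal.rpow_ne_top_of_nonneg (by norm_num) ENNReal.ofReal_ne_top) (hmain n)
end S17

/-- On any interval of positive length, `f ↦ ‖f ⋆ f‖_{L²}` is not coercive. -/
theorem stmt17 (a b : ℝ) (hab : a < b) :
    ∃ f : ℕ → ℝ → ℂ,
      (∀ n, MemLp (f n) 2 (volume : Measure ℝ) ∧ ∀ x, x ∉ Set.Icc a b → f n x = 0) ∧
      Tendsto (fun n => (eLpNorm (f n) 2 volume).toReal) atTop atTop ∧
      ∃ C : ℝ, ∀ n, (eLpNorm (autocorr (f n)) 2 volume).toReal ≤ C :=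
  S17.final a b hab
end
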